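/- arXiv:2001.01291 — 5 statements merged into one kernel-verified Lean document; each statement's English description precedes it below -/
import Mathlib

section
/- Monotonicity of the iteration (Lemma 3.1): Let Ω ⊂ ℝⁿ be a bounded, open, convex domain. Let u ∈ C(cl Ω) be convex with u ≤ 0 on ∂Ω and 0 < R(u) < ∞, and let v ∈ C(cl Ω) be convex, vanishing on ∂Ω and not identically zero, with Mv = R(u)(−u)^n L^n on Ω. Then R(v) ‖v‖_{L^{n+1}(Ω)}^n ≤ R(u) ‖u‖_{L^{n+1}(Ω)}^n. -/
open MeasureTheory Set Filter Metric
open scoped ENNReal RealInnerProductSpace Topology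

noncomputable section

/-- Euclidean space `ℝⁿ`. -/
abbrev Eucl (n : ℕ) : Type := EuclideanSpace ℝ (Fin n)

/-- Subdifferential of `u` at `x`, relative to `Ω`:
`∂u(x) = {p : u(y) ≥ u(x) + p·(y−x) for all y ∈ Ω}`. -/
def subdiff {n : ℕ} (Ω : Set (Eucl n)) (u : Eucl n → ℝ) (x : Eucl n) : Set (Eucl n) :=
  {p | ∀ y ∈ Ω, u x + (inner ℝ p (y - x) : ℝ) ≤ u y}

/-- Image of a set `E` under the subdifferential map: `∂u(E) = ⋃_{x ∈ E} ∂u(x)`. -/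
def subdiffImage {n : ℕ} (Ω : Set (Eucl n)) (u : Eucl n → ℝ) (E : Set (Eucl n)) :
    Set (Eucl n) :=
  ⋃ x ∈ E, subdiff Ω u x

/-- The Monge–Ampère measure of `u`, as a set function: `Mu(E) = L^n(∂u(E))`. -/
def MAm {n : ℕ} (Ω : Set (Eucl n)) (u : Eucl n → ℝ) (E : Set (Eucl n)) : ℝ≥0∞ :=
  volume (subdiffImage Ω u E)

/-- The Monge–Ampère energy `I(u) = ∫_Ω (−u) dMu`, expressed via the layer-cake formula
for the (nonnegative) integrand `−u`. -/
def MAenergy {n : ℕ} (Ω : Set (Eucl n)) (u : Eucl n → ℝ) : ℝ≥0∞ :=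
  ∫⁻ t in Ioi (0 : ℝ), MAm Ω u {x ∈ Ω | t < -u x}

/-- The integral `∫_Ω f dMu` of a signed integrand `f` against the Monge–Ampère measure of `u`,
expressed via the layer-cake formula. -/
def MAint {n : ℕ} (Ω : Set (Eucl n)) (u : Eucl n → ℝ) (f : Eucl n → ℝ) : ℝ :=
  (∫⁻ t in Ioi (0 : ℝ), MAm Ω u {x ∈ Ω | t < f x}).toReal -
    (∫⁻ t in Ioi (0 : ℝ), MAm Ω u {x ∈ Ω | f x < -t}).toReal

/-- The Rayleigh quotient `R(u) = I(u) / ∫_Ω (−u)^{n+1}`. -/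
def Rq {n : ℕ} (Ω : Set (Eucl n)) (u : Eucl n → ℝ) : ℝ≥0∞ :=
  MAenergy Ω u / ∫⁻ x in Ω, ENNReal.ofReal ((-u x) ^ (n + 1))

/-- The class `K` of continuous functions on `cl Ω` that are convex, not identically zero
in `Ω`, and vanish on `∂Ω`. -/
def memK {n : ℕ} (Ω : Set (Eucl n)) (u : Eucl n → ℝ) : Prop :=
  ContinuousOn u (closure Ω) ∧ ConvexOn ℝ Ω u ∧ (∃ x ∈ Ω, u x ≠ 0) ∧
    ∀ x ∈ frontier Ω, u x = 0

/-- The Monge–Ampère eigenvalue `λ_MA = inf_{u ∈ K} R(u)`. -/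
def lamMA {n : ℕ} (Ω : Set (Eucl n)) : ℝ≥0∞ :=
  ⨅ (u : Eucl n → ℝ) (_ : memK Ω u), Rq Ω u

/-- `u` is a Monge–Ampère eigenfunction: `u ∈ K` and `Mu = λ_MA (−u)^n L^n` on `Ω`. -/
def IsMAEigenfunction {n : ℕ} (Ω : Set (Eucl n)) (u : Eucl n → ℝ) : Prop :=
  memK Ω u ∧ ∀ E ⊆ Ω, MeasurableSet E →
    MAm Ω u E = ∫⁻ x in E, lamMA Ω * ENNReal.ofReal ((-u x) ^ n)

/-- The inverse iteration scheme: `u 0` is admissible initial data, and for each `k`,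
`u (k+1)` is (the unique) convex solution, continuous up to the boundary and vanishing there,
of `M u_{k+1} = R(u_k) (−u_k)^n L^n` on `Ω`. -/
def IterScheme {n : ℕ} (Ω : Set (Eucl n)) (u : ℕ → Eucl n → ℝ) : Prop :=
  ContinuousOn (u 0) (closure Ω) ∧ ConvexOn ℝ Ω (u 0) ∧
    (∀ x ∈ frontier Ω, u 0 x ≤ 0) ∧ Rq Ω (u 0) < ⊤ ∧
    (∀ E ⊆ Ω, MeasurableSet E → volume E ≤ MAm Ω (u 0) E) ∧
    ∀ k : ℕ, ContinuousOn (u (k + 1)) (closure Ω) ∧ ConvexOn ℝ Ω (u (k + 1)) ∧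
      (∀ x ∈ frontier Ω, u (k + 1) x = 0) ∧
      ∀ E ⊆ Ω, MeasurableSet E →
        MAm Ω (u (k + 1)) E = ∫⁻ x in E, Rq Ω (u k) * ENNReal.ofReal ((-u k x) ^ n)

/-- The `L^∞(Ω)` norm (sup norm) of `u` on `Ω`. -/
def supN {n : ℕ} (Ω : Set (Eucl n)) (u : Eucl n → ℝ) : ℝ :=
  ⨆ x ∈ Ω, |u x|

/-- The `L^p(Ω)` norm of `u`. -/
def LpN {n : ℕ} (Ω : Set (Eucl n)) (p : ℝ) (u : Eucl n → ℝ) : ℝ :=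
  (∫ x in Ω, |u x| ^ p) ^ (1 / p)

/-- The determinant of the Hessian of `u` at `x`. -/
def hessDet {n : ℕ} (u : Eucl n → ℝ) (x : Eucl n) : ℝ :=
  (Matrix.of fun i j : Fin n =>
    iteratedFDeriv ℝ 2 u x ![EuclideanSpace.single i (1 : ℝ), EuclideanSpace.single j (1 : ℝ)]).det

section Aux

lemma convex_max_principle {n : ℕ} (hn : 1 ≤ n) (Ω : Set (Eucl n))
    (hΩo : IsOpen Ω) (hΩc : Convex ℝ Ω) (hΩb : Bornology.IsBounded Ω)
    {v : Eucl n → ℝ} (hc : ContinuousOn v (closure Ω)) (hconv : ConvexOn ℝ Ω v)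
    (hb : ∀ x ∈ frontier Ω, v x ≤ 0) {x : Eucl n} (hx : x ∈ Ω) : v x ≤ 0 := by
  classical
  set d : Eucl n := EuclideanSpace.single (⟨0, hn⟩ : Fin n) (1:ℝ) with hd_def
  have hnd : ‖d‖ = 1 := by
    simp [hd_def, EuclideanSpace.norm_single]
  set r : ℝ → Eucl n := fun t => x + t • d with hr_def
  have hr_cont : Continuous r := by continuity
  set S : Set ℝ := {t | r t ∈ Ω} with hS_def
  have hS0 : (0:ℝ) ∈ S := by simp [hS_def, hr_def, hx]
  have hSopen : IsOpen S := hΩo.preimage hr_cont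
  have hr_affine : ∀ (a b t₁ t₂ : ℝ), a + b = 1 →
      r (a*t₁ + b*t₂) = a • r t₁ + b • r t₂ := by
    intro a b t₁ t₂ hab
    have hb' : b = 1 - a := by linarith
    subst hb'
    simp only [hr_def, smul_add, add_smul, smul_smul]
    match_scalars <;> ring
  have hSconv : Convex ℝ S := by
    intro t₁ ht₁ t₂ ht₂ a b ha hb' hab
    have := hr_affine a b t₁ t₂ hab
    simp only [hS_def, mem_setOf_eq, smul_eq_mul] at *
    rw [this]
    exact hΩc ht₁ ht₂ ha hb' hab
  obtain ⟨Rb, hRb⟩ := hΩb.subset_closedBall x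
  have hSsub : S ⊆ Icc (-Rb) Rb := by
    intro t ht
    have h1 : r t ∈ closedBall x Rb := hRb ht
    have h2 : dist (r t) x ≤ Rb := mem_closedBall.mp h1
    have h3 : dist (r t) x = |t| := by
      simp [hr_def, dist_eq_norm, norm_smul, hnd]
    rw [h3] at h2
    constructor <;> [linarith [neg_abs_le t]; linarith [le_abs_self t]]
  have hbddA : BddAbove S := ⟨Rb, fun t ht => (hSsub ht).2⟩
  have hbddB : BddBelow S := ⟨-Rb, fun t ht => (hSsub ht).1⟩
  have hSne : S.Nonempty := ⟨0, hS0⟩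
  set A : ℝ := sInf S with hA_def
  set B : ℝ := sSup S with hB_def
  obtain ⟨ε, hε, hball⟩ := Metric.isOpen_iff.mp hSopen 0 hS0
  have hεS : ∀ t : ℝ, |t| < ε → t ∈ S := by
    intro t ht; exact hball (by simpa [Real.dist_eq] using ht)
  have hA_neg : A < 0 := by
    have : -(ε/2) ∈ S := hεS _ (by rw [abs_neg, abs_of_pos (by linarith)]; linarith)
    calc A ≤ -(ε/2) := csInf_le hbddB this
    _ < 0 := by linarith
  have hB_pos : 0 < B := by
    have : (ε/2) ∈ S := hεS _ (by rw [abs_of_pos (by linarith)]; linarith)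
    calc (0:ℝ) < ε/2 := by linarith
    _ ≤ B := le_csSup hbddA this
  have hAB : A < B := hA_neg.trans hB_pos
  have hIoo : Ioo A B ⊆ S := by
    intro t ht
    obtain ⟨s, hsS, hts⟩ := exists_lt_of_lt_csSup hSne ht.2
    obtain ⟨s', hs'S, hs't⟩ := exists_lt_of_csInf_lt hSne ht.1
    exact hSconv.ordConnected.out hs'S hsS ⟨hs't.le, hts.le⟩
  have hr_mem_cl : ∀ t ∈ Icc A B, r t ∈ closure Ω := by
    intro t ht
    have h1 : r t ∈ r '' closure (Ioo A B) := by
      rw [closure_Ioo hAB.ne]; exact mem_image_of_mem r ht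
    have h2 : r '' closure (Ioo A B) ⊆ closure (r '' Ioo A B) :=
      image_closure_subset_closure_image hr_cont
    have h3 : closure (r '' Ioo A B) ⊆ closure Ω := by
      apply closure_mono; rintro y ⟨s, hs, rfl⟩; exact hIoo hs
    exact h3 (h2 h1)
  have hA_not : r A ∉ Ω := by
    intro h
    obtain ⟨ε', hε', hball'⟩ := Metric.isOpen_iff.mp hSopen A h
    have : A - ε'/2 ∈ S := by
      apply hball'
      rw [mem_ball, Real.dist_eq]
      have : A - ε'/2 - A = -(ε'/2) := by ring
      rw [this, abs_neg, abs_of_pos (by linarith)]; linarith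
    have := csInf_le hbddB this
    simp only [← hA_def] at this; linarith
  have hB_not : r B ∉ Ω := by
    intro h
    obtain ⟨ε', hε', hball'⟩ := Metric.isOpen_iff.mp hSopen B h
    have : B + ε'/2 ∈ S := by
      apply hball'
      rw [mem_ball, Real.dist_eq]
      have : B + ε'/2 - B = ε'/2 := by ring
      rw [this, abs_of_pos (by linarith)]; linarith
    have := le_csSup hbddA this
    simp only [← hB_def] at this; linarith
  have hfr : frontier Ω = closure Ω \ Ω := hΩo.frontier_eq
  have hvA : v (r A) ≤ 0 := hb _ (by rw [hfr]; exact ⟨hr_mem_cl A ⟨le_refl _, hAB.le⟩, hA_not⟩)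
  have hvB : v (r B) ≤ 0 := hb _ (by rw [hfr]; exact ⟨hr_mem_cl B ⟨hAB.le, le_refl _⟩, hB_not⟩)
  set lam : ℝ := B / (B - A) with hlam_def
  have hBA : 0 < B - A := by linarith
  have hlam_pos : 0 ≤ lam := div_nonneg hB_pos.le hBA.le
  have hlam1 : 0 ≤ 1 - lam := by
    have : lam ≤ 1 := by rw [hlam_def, div_le_one hBA]; linarith
    linarith
  -- key inequality for s ∈ (0,1)
  have hkey : ∀ s ∈ Ioo (0:ℝ) 1, v x ≤ lam * v (r (s*A)) + (1-lam) * v (r (s*B)) := by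
    intro s hs
    have hsA : s*A ∈ Ioo A B := by
      constructor
      · have := mul_lt_mul_of_neg_right hs.2 hA_neg
        linarith
      · have := mul_neg_of_pos_of_neg hs.1 hA_neg
        linarith
    have hsB : s*B ∈ Ioo A B := by
      constructor
      · have := mul_pos hs.1 hB_pos
        linarith
      · have := mul_lt_of_lt_one_left hB_pos hs.2
        linarith
    have hcomb : lam * (s*A) + (1-lam) * (s*B) = 0 := by
      rw [hlam_def]; field_simp; ring
    have hx_eq : x = lam • r (s*A) + (1-lam) • r (s*B) := by
      rw [← hr_affine lam (1-lam) (s*A) (s*B) (by ring), hcomb]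
      simp [hr_def]
    calc v x = v (lam • r (s*A) + (1-lam) • r (s*B)) := by rw [← hx_eq]
    _ ≤ lam * v (r (s*A)) + (1-lam) * v (r (s*B)) :=
        hconv.2 (hIoo hsA) (hIoo hsB) hlam_pos hlam1 (by ring)
  -- pass to the limit s → 1⁻
  have hφ : ContinuousOn (fun t => v (r t)) (Icc A B) := by
    apply hc.comp hr_cont.continuousOn
    intro t ht; exact hr_mem_cl t ht
  have hmem : Ioo (0:ℝ) 1 ∈ 𝓝[<] (1:ℝ) :=
    Ioo_mem_nhdsLT_of_mem ⟨zero_lt_one, le_refl (1:ℝ)⟩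
  have hlim_gen : ∀ c ∈ Icc A B, (∀ s ∈ Ioo (0:ℝ) 1, s * c ∈ Icc A B) →
      Tendsto (fun s : ℝ => v (r (s*c))) (𝓝[<] (1:ℝ)) (𝓝 (v (r c))) := by
    intro c hc' hmaps
    have h1 : ContinuousWithinAt (fun t => v (r t)) (Icc A B) c :=
      hφ.continuousWithinAt hc'
    have h2 : Tendsto (fun s : ℝ => s * c) (𝓝[<] (1:ℝ)) (𝓝[Icc A B] c) := by
      apply tendsto_nhdsWithin_of_tendsto_nhds_of_eventually_within
      · have h3 : Tendsto (fun s : ℝ => s * c) (𝓝 (1:ℝ)) (𝓝 (1 * c)) :=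
          (continuous_id.mul continuous_const).tendsto 1
        rw [one_mul] at h3
        exact h3.mono_left nhdsWithin_le_nhds
      · filter_upwards [hmem] with s hs using hmaps s hs
    exact (h1.tendsto).comp h2
  have hlimA : Tendsto (fun s : ℝ => v (r (s*A))) (𝓝[<] (1:ℝ)) (𝓝 (v (r A))) := by
    apply hlim_gen A ⟨le_refl _, hAB.le⟩
    intro s hs
    constructor
    · have := mul_lt_mul_of_neg_right hs.2 hA_neg
      linarith
    · have := mul_neg_of_pos_of_neg hs.1 hA_neg
      linarith
  have hlimB : Tendsto (fun s : ℝ => v (r (s*B))) (𝓝[<] (1:ℝ)) (𝓝 (v (r B))) := by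
    apply hlim_gen B ⟨hAB.le, le_refl _⟩
    intro s hs
    constructor
    · have := mul_pos hs.1 hB_pos
      linarith
    · have := mul_lt_of_lt_one_left hB_pos hs.2
      linarith
  have hlim : Tendsto (fun s : ℝ => lam * v (r (s*A)) + (1-lam) * v (r (s*B)))
      (𝓝[<] (1:ℝ)) (𝓝 (lam * v (r A) + (1-lam) * v (r B))) :=
    (hlimA.const_mul lam).add (hlimB.const_mul (1-lam))
  have hvx : v x ≤ lam * v (r A) + (1-lam) * v (r B) := by
    apply ge_of_tendsto hlim
    filter_upwards [hmem] with s hs using hkey s hs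
  have h1 : lam * v (r A) ≤ 0 := mul_nonpos_of_nonneg_of_nonpos hlam_pos hvA
  have h2 : (1-lam) * v (r B) ≤ 0 := mul_nonpos_of_nonneg_of_nonpos hlam1 hvB
  linarith

end Aux

/-- Lemma 3.1, monotonicity: if `Mv = R(u)(−u)^n L^n` on `Ω`, then
`R(v) ‖v‖_{L^{n+1}}^n ≤ R(u) ‖u‖_{L^{n+1}}^n`. -/
theorem monotonicity_of_iteration {n : ℕ} (hn : 1 ≤ n)
    (Ω : Set (Eucl n)) (hΩo : IsOpen Ω) (hΩc : Convex ℝ Ω)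
    (hΩb : Bornology.IsBounded Ω) (hΩne : Ω.Nonempty)
    (u v : Eucl n → ℝ)
    (hu_cont : ContinuousOn u (closure Ω)) (hu_conv : ConvexOn ℝ Ω u)
    (hu_bdry : ∀ x ∈ frontier Ω, u x ≤ 0)
    (hRpos : 0 < Rq Ω u) (hRfin : Rq Ω u < ⊤)
    (hv_cont : ContinuousOn v (closure Ω)) (hv_conv : ConvexOn ℝ Ω v)
    (hv_bdry : ∀ x ∈ frontier Ω, v x = 0) (hv_ne : ∃ x ∈ Ω, v x ≠ 0)
    (hMv : ∀ E ⊆ Ω, MeasurableSet E →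
      MAm Ω v E = ∫⁻ x in E, Rq Ω u * ENNReal.ofReal ((-u x) ^ n)) :
    Rq Ω v * ENNReal.ofReal (LpN Ω ((n : ℝ) + 1) v ^ n) ≤
      Rq Ω u * ENNReal.ofReal (LpN Ω ((n : ℝ) + 1) u ^ n) := by
  classical
  have hΩm : MeasurableSet Ω := hΩo.measurableSet
  have hKcpt : IsCompact (closure Ω) := hΩb.isCompact_closure
  set p : ℝ := (n:ℝ) + 1 with hp_def
  set q : ℝ := ((n:ℝ) + 1) / (n:ℝ) with hq_def
  have hn0 : (0:ℝ) < (n:ℝ) := by exact_mod_cast hn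
  have hp_pos : 0 < p := by positivity
  have hq_pos : 0 < q := by positivity
  have hpq : p.HolderConjugate q := by
    rw [Real.holderConjugate_iff]
    constructor
    · rw [hp_def]; linarith
    · rw [hp_def, hq_def]; field_simp; ring
  have hnq : (n:ℝ) * q = p := by rw [hq_def, hp_def]; field_simp
  have h1q : 1 / q = (n:ℝ) * (1 / p) := by
    rw [hq_def, hp_def]; field_simp
  -- v ≤ 0 on Ω
  have hvle : ∀ x ∈ Ω, v x ≤ 0 := fun x hx =>
    convex_max_principle hn Ω hΩo hΩc hΩb hv_cont hv_conv
      (fun y hy => le_of_eq (hv_bdry y hy)) hx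
  -- basic measurability
  have hv_meas : AEMeasurable v (volume.restrict Ω) :=
    (hv_cont.mono subset_closure).aemeasurable hΩm
  have hu_meas : AEMeasurable u (volume.restrict Ω) :=
    (hu_cont.mono subset_closure).aemeasurable hΩm
  set g : Eucl n → ℝ≥0∞ := fun x => ENNReal.ofReal ((-u x) ^ n) with hg_def
  have hg_meas : AEMeasurable g (volume.restrict Ω) :=
    ENNReal.measurable_ofReal.comp_aemeasurable ((hu_meas.neg).pow_const n)
  set fv : Eucl n → ℝ≥0∞ := fun x => ENNReal.ofReal (-v x) with hfv_def
  have hfv_meas : AEMeasurable fv (volume.restrict Ω) :=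
    ENNReal.measurable_ofReal.comp_aemeasurable hv_meas.neg
  set R : ℝ≥0∞ := Rq Ω u with hR_def
  -- integrability of |w|^p over Ω
  have hint : ∀ w : Eucl n → ℝ, ContinuousOn w (closure Ω) →
      IntegrableOn (fun x => |w x| ^ p) Ω volume := by
    intro w hw
    have hcont : ContinuousOn (fun x => |w x| ^ p) (closure Ω) :=
      hw.abs.rpow_const (fun x _ => Or.inr hp_pos.le)
    exact (hcont.integrableOn_compact hKcpt).mono_set subset_closure
  set Iv : ℝ := ∫ x in Ω, |v x| ^ p with hIv_def
  set Iu : ℝ := ∫ x in Ω, |u x| ^ p with hIu_def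
  have hIv_nonneg : 0 ≤ Iv :=
    integral_nonneg (fun x => Real.rpow_nonneg (abs_nonneg _) _)
  have hIu_nonneg : 0 ≤ Iu :=
    integral_nonneg (fun x => Real.rpow_nonneg (abs_nonneg _) _)
  set Nv : ℝ := Iv ^ (1/p) with hNv_def
  set Nu : ℝ := Iu ^ (1/p) with hNu_def
  have hNv_nonneg : 0 ≤ Nv := Real.rpow_nonneg hIv_nonneg _
  have hNu_nonneg : 0 ≤ Nu := Real.rpow_nonneg hIu_nonneg _
  have hLpNv : LpN Ω ((n:ℝ) + 1) v = Nv := rfl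
  have hLpNu : LpN Ω ((n:ℝ) + 1) u = Nu := rfl
  -- lintegral expressions for Iv, Iu
  have hlip : ∀ w : Eucl n → ℝ, ContinuousOn w (closure Ω) →
      ∫⁻ x in Ω, ENNReal.ofReal (|w x| ^ p) = ENNReal.ofReal (∫ x in Ω, |w x| ^ p) := by
    intro w hw
    exact (ofReal_integral_eq_lintegral_ofReal (hint w hw)
      (ae_of_all _ (fun x => Real.rpow_nonneg (abs_nonneg _) _))).symm
  -- Step A: energy identity
  set μ : Measure (Eucl n) := (volume.restrict Ω).withDensity (fun x => R * g x) with hμ_def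
  set fI : Eucl n → ℝ := Ω.indicator (fun x => -v x) with hfI_def
  have hfI_nonneg : ∀ x, 0 ≤ fI x := by
    intro x
    rw [hfI_def]
    by_cases hx : x ∈ Ω
    · rw [indicator_of_mem hx]; linarith [hvle x hx]
    · rw [indicator_of_notMem hx]
  have hfI_ae : fI =ᵐ[volume.restrict Ω] (fun x => -v x) := by
    filter_upwards [ae_restrict_mem hΩm] with x hx
    rw [hfI_def, indicator_of_mem hx]
  have hfI_meas_res : AEMeasurable fI (volume.restrict Ω) :=
    hv_meas.neg.congr hfI_ae.symm
  have hac : μ ≪ volume.restrict Ω := withDensity_absolutelyContinuous _ _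
  have hfI_meas : AEMeasurable fI μ := hfI_meas_res.mono_ac hac
  have hRg_meas : AEMeasurable (fun x => R * g x) (volume.restrict Ω) :=
    hg_meas.const_mul R
  have hSet_eq : ∀ t : ℝ, 0 < t → {a : Eucl n | t < fI a} = {x ∈ Ω | t < -v x} := by
    intro t ht
    ext a
    simp only [mem_setOf_eq, hfI_def]
    by_cases ha : a ∈ Ω
    · rw [indicator_of_mem ha]; simp [ha]
    · rw [indicator_of_notMem ha]; simp [ha]; exact ht.le
  have hSet_meas : ∀ t : ℝ, MeasurableSet {x ∈ Ω | t < -v x} := by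
    intro t
    have : {x ∈ Ω | t < -v x} = Ω ∩ v ⁻¹' (Iio (-t)) := by
      ext a; simp [mem_setOf_eq]; intro _; constructor <;> intro <;> linarith
    rw [this]
    exact ((hv_cont.mono subset_closure).isOpen_inter_preimage hΩo isOpen_Iio).measurableSet
  have hμ_set : ∀ t : ℝ, 0 < t → μ {a : Eucl n | t < fI a} = MAm Ω v {x ∈ Ω | t < -v x} := by
    intro t ht
    rw [hSet_eq t ht, hμ_def, withDensity_apply _ (hSet_meas t),
      Measure.restrict_restrict (hSet_meas t)]
    have hss : {x ∈ Ω | t < -v x} ∩ Ω = {x ∈ Ω | t < -v x} := by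
      apply inter_eq_self_of_subset_left; intro a ha; exact ha.1
    rw [hss, hMv _ (fun a ha => ha.1) (hSet_meas t)]
  have hEnergy : MAenergy Ω v = ∫⁻ x in Ω, fv x * (R * g x) := by
    rw [MAenergy]
    have step1 : ∫⁻ t in Ioi (0:ℝ), MAm Ω v {x ∈ Ω | t < -v x}
        = ∫⁻ t in Ioi (0:ℝ), μ {a : Eucl n | t < fI a} := by
      apply setLIntegral_congr_fun measurableSet_Ioi
      exact fun t ht => (hμ_set t ht).symm
    rw [step1, ← lintegral_eq_lintegral_meas_lt μ (ae_of_all _ hfI_nonneg) hfI_meas]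
    rw [hμ_def, lintegral_withDensity_eq_lintegral_mul₀' hRg_meas]
    · apply lintegral_congr_ae
      filter_upwards [ae_restrict_mem hΩm] with x hx
      simp only [Pi.mul_apply]
      rw [hfI_def, indicator_of_mem hx, hfv_def]
      ring
    · refine AEMeasurable.mono_ac ?_ (withDensity_absolutelyContinuous _ _)
      exact ENNReal.measurable_ofReal.comp_aemeasurable hfI_meas_res
  have hEnergy2 : MAenergy Ω v = R * ∫⁻ x in Ω, fv x * g x := by
    rw [hEnergy, ← lintegral_const_mul' R _ hRfin.ne]
    apply lintegral_congr_ae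
    exact ae_of_all _ (fun x => by ring)
  -- Step B: Hölder
  have hHolder : ∫⁻ x in Ω, fv x * g x ≤
      (∫⁻ x in Ω, fv x ^ p) ^ (1/p) * (∫⁻ x in Ω, g x ^ q) ^ (1/q) :=
    ENNReal.lintegral_mul_le_Lp_mul_Lq _ hpq hfv_meas hg_meas
  have hfactor1 : (∫⁻ x in Ω, fv x ^ p) ^ (1/p) = ENNReal.ofReal Nv := by
    have hinner : ∫⁻ x in Ω, fv x ^ p = ENNReal.ofReal Iv := by
      rw [hIv_def, ← hlip v hv_cont]
      apply lintegral_congr_ae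
      filter_upwards [ae_restrict_mem hΩm] with x hx
      show ENNReal.ofReal (-v x) ^ p = ENNReal.ofReal (|v x| ^ p)
      have h1 : -v x = |v x| := (abs_of_nonpos (hvle x hx)).symm
      rw [h1, ENNReal.ofReal_rpow_of_nonneg (abs_nonneg _) hp_pos.le]
    rw [hinner, ENNReal.ofReal_rpow_of_nonneg hIv_nonneg (by positivity), hNv_def]
  have hfactor2 : (∫⁻ x in Ω, g x ^ q) ^ (1/q) ≤ ENNReal.ofReal (Nu ^ n) := by
    have hinner : ∫⁻ x in Ω, g x ^ q ≤ ENNReal.ofReal Iu := by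
      rw [hIu_def, ← hlip u hu_cont]
      apply lintegral_mono
      intro x
      have h1 : (-u x) ^ n ≤ |u x| ^ n := by
        calc (-u x) ^ n ≤ |(-u x) ^ n| := le_abs_self _
        _ = |u x| ^ n := by rw [abs_pow, abs_neg]
      have h2 : g x ^ q ≤ ENNReal.ofReal (|u x| ^ n) ^ q := by
        rw [hg_def]
        exact ENNReal.rpow_le_rpow (ENNReal.ofReal_le_ofReal h1) hq_pos.le
      refine h2.trans (le_of_eq ?_)
      rw [ENNReal.ofReal_rpow_of_nonneg (by positivity) hq_pos.le]
      congr 1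
      rw [← Real.rpow_natCast |u x| n, ← Real.rpow_mul (abs_nonneg _), hnq]
    calc (∫⁻ x in Ω, g x ^ q) ^ (1/q) ≤ (ENNReal.ofReal Iu) ^ (1/q) :=
          ENNReal.rpow_le_rpow hinner (by positivity)
    _ = ENNReal.ofReal (Iu ^ (1/q)) :=
          ENNReal.ofReal_rpow_of_nonneg hIu_nonneg (by positivity)
    _ = ENNReal.ofReal (Nu ^ n) := by
          congr 1
          rw [h1q, hNu_def, ← Real.rpow_natCast (Iu ^ (1/p)) n,
            ← Real.rpow_mul hIu_nonneg]
          ring_nf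
  have hA : MAenergy Ω v ≤ R * (ENNReal.ofReal Nv * ENNReal.ofReal (Nu ^ n)) := by
    rw [hEnergy2]
    apply mul_le_mul_right
    calc ∫⁻ x in Ω, fv x * g x
        ≤ (∫⁻ x in Ω, fv x ^ p) ^ (1/p) * (∫⁻ x in Ω, g x ^ q) ^ (1/q) := hHolder
    _ ≤ ENNReal.ofReal Nv * ENNReal.ofReal (Nu ^ n) := by
        rw [hfactor1]
        exact mul_le_mul_right hfactor2 _
  -- Step C: the denominator of Rq Ω v
  set Dv : ℝ≥0∞ := ∫⁻ x in Ω, ENNReal.ofReal ((-v x) ^ (n + 1)) with hDv_def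
  have hDv_eq : Dv = ENNReal.ofReal Iv := by
    rw [hDv_def, hIv_def, ← hlip v hv_cont]
    apply lintegral_congr_ae
    filter_upwards [ae_restrict_mem hΩm] with x hx
    congr 1
    have h1 : -v x = |v x| := (abs_of_nonpos (hvle x hx)).symm
    rw [h1, ← Real.rpow_natCast |v x| (n+1)]
    congr 1
    push_cast
    rw [hp_def]
  have hDv_pos : 0 < Dv := by
    obtain ⟨x₀, hx₀, hvx₀⟩ := hv_ne
    have hvx₀' : v x₀ < 0 := lt_of_le_of_ne (hvle x₀ hx₀) hvx₀
    have hcont : ContinuousAt v x₀ :=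
      (hv_cont.mono subset_closure).continuousAt (hΩo.mem_nhds hx₀)
    have hnhd : v ⁻¹' (Iio (v x₀ / 2)) ∈ 𝓝 x₀ := hcont (Iio_mem_nhds (by linarith))
    obtain ⟨δ, hδ, hball⟩ := Metric.mem_nhds_iff.mp (inter_mem (hΩo.mem_nhds hx₀) hnhd)
    set c : ℝ := (-(v x₀ / 2)) ^ (n + 1) with hc_def
    have hc_pos : 0 < c := pow_pos (by linarith) _
    have hlow : ∀ x ∈ ball x₀ δ, ENNReal.ofReal c ≤ ENNReal.ofReal ((-v x) ^ (n + 1)) := by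
      intro x hx
      apply ENNReal.ofReal_le_ofReal
      have h2 : v x < v x₀ / 2 := (hball hx).2
      apply pow_le_pow_left₀ (by linarith) (by linarith)
    calc (0:ℝ≥0∞) < ENNReal.ofReal c * volume (ball x₀ δ) := by
          apply ENNReal.mul_pos
          · simp [hc_pos, ENNReal.ofReal_pos]
          · exact (measure_ball_pos volume x₀ hδ).ne'
    _ = ∫⁻ _ in ball x₀ δ, ENNReal.ofReal c := by
          rw [setLIntegral_const, mul_comm]
    _ ≤ ∫⁻ x in ball x₀ δ, ENNReal.ofReal ((-v x) ^ (n + 1)) := by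
          apply setLIntegral_mono' measurableSet_ball hlow
    _ ≤ Dv := by
          rw [hDv_def]
          apply lintegral_mono_set
          intro a ha; exact (hball ha).1
  have hDv_fin : Dv < ⊤ := by
    obtain ⟨C, hC⟩ := hKcpt.exists_bound_of_continuousOn hv_cont
    have hbound : ∀ x ∈ Ω, ENNReal.ofReal ((-v x) ^ (n + 1)) ≤ ENNReal.ofReal (C ^ (n + 1)) := by
      intro x hx
      apply ENNReal.ofReal_le_ofReal
      have h1 : -v x ≤ C := by
        have := hC x (subset_closure hx)
        rw [Real.norm_eq_abs] at this
        calc -v x ≤ |v x| := neg_le_abs _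
        _ ≤ C := this
      exact pow_le_pow_left₀ (by linarith [hvle x hx]) h1 _
    calc Dv ≤ ∫⁻ _ in Ω, ENNReal.ofReal (C ^ (n + 1)) := by
          apply setLIntegral_mono' hΩm hbound
    _ = ENNReal.ofReal (C ^ (n + 1)) * volume Ω := by rw [setLIntegral_const]
    _ < ⊤ := ENNReal.mul_lt_top ENNReal.ofReal_lt_top
          (hKcpt.measure_lt_top.trans_le' (measure_mono subset_closure))
  -- relation Iv = Nv ^ (n+1)
  have hIvNv : Iv = Nv ^ (n + 1) := by
    rw [hNv_def, ← Real.rpow_natCast (Iv ^ (1/p)) (n+1), ← Real.rpow_mul hIv_nonneg]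
    have : 1/p * ((n:ℝ)+1) = 1 := by rw [hp_def]; field_simp
    push_cast
    rw [this, Real.rpow_one]
  -- Step D: conclusion
  have hRqv : Rq Ω v = MAenergy Ω v / Dv := rfl
  rw [hRqv, hLpNv, hLpNu]
  have hgoal : MAenergy Ω v / Dv * ENNReal.ofReal (Nv ^ n) =
      MAenergy Ω v * ENNReal.ofReal (Nv ^ n) / Dv := by
    rw [div_eq_mul_inv, div_eq_mul_inv]; ring
  rw [hgoal, ENNReal.div_le_iff hDv_pos.ne' hDv_fin.ne]
  calc MAenergy Ω v * ENNReal.ofReal (Nv ^ n)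
      ≤ R * (ENNReal.ofReal Nv * ENNReal.ofReal (Nu ^ n)) * ENNReal.ofReal (Nv ^ n) :=
        mul_le_mul_left hA _
  _ = R * ENNReal.ofReal (Nu ^ n) * (ENNReal.ofReal Nv * ENNReal.ofReal (Nv ^ n)) := by
        ring
  _ = R * ENNReal.ofReal (Nu ^ n) * ENNReal.ofReal (Nv * Nv ^ n) := by
        rw [ENNReal.ofReal_mul hNv_nonneg]
  _ = R * ENNReal.ofReal (Nu ^ n) * Dv := by
        rw [hDv_eq, hIvNv]
        congr 2
        ring
end
end

section
/- Upper bound for the Rayleigh quotients (Corollary 3.5): Let Ω ⊂ ℝⁿ be a bounded, open, convex domain and let u_0 and the iterates u_k be as in the inverse iteration scheme. Then there exists a constant C > 0 depending only on n, L^n(Ω), λ_MA, and u_0 such that R(u_k) ≤ C for all k ≥ 1. -/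
open MeasureTheory Set Filter Metric
open scoped ENNReal RealInnerProductSpace Topology

noncomputable section

section AuxLemmas

open scoped Pointwise

lemma ray_hits {n : ℕ} {Ω : Set (Eucl n)} (hΩo : IsOpen Ω)
    {z₀ : Eucl n} {R : ℝ} (hR : closure Ω ⊆ closedBall z₀ R)
    {x : Eucl n} (hx : x ∈ closure Ω) (e : Eucl n) (he : ‖e‖ = 1) :
    ∃ t : ℝ, 0 ≤ t ∧ x + t • e ∈ frontier Ω ∧
      ∀ s : ℝ, 0 ≤ s → x + s • e ∈ closure Ω → s ≤ t := by
  set S : Set ℝ := {t | x + t • e ∈ closure Ω} with hS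
  have h0S : (0 : ℝ) ∈ S := by simpa [hS] using hx
  have hbdd : BddAbove S := by
    refine ⟨2 * R + 1, fun t ht => ?_⟩
    have h1 : x + t • e ∈ closedBall z₀ R := hR ht
    have h2 : x ∈ closedBall z₀ R := hR hx
    have : |t| = ‖(x + t • e) - x‖ := by
      simp [norm_smul, he, abs_of_nonneg]
    have : |t| ≤ 2 * R := by
      rw [this]
      have d1 : dist (x + t • e) z₀ ≤ R := mem_closedBall.mp h1
      have d2 : dist x z₀ ≤ R := mem_closedBall.mp h2
      have := dist_triangle (x + t • e) z₀ x
      rw [← dist_eq_norm]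
      have : dist (x + t • e) x ≤ dist (x + t • e) z₀ + dist z₀ x := dist_triangle _ _ _
      rw [dist_comm z₀ x] at this
      linarith
    linarith [le_abs_self t]
  have hcl : IsClosed S := by
    have : Continuous fun t : ℝ => x + t • e := by continuity
    exact IsClosed.preimage this isClosed_closure
  have hne : S.Nonempty := ⟨0, h0S⟩
  set T := sSup S with hT
  have hTS : T ∈ S := hcl.csSup_mem hne hbdd
  have hT0 : 0 ≤ T := le_csSup hbdd h0S
  refine ⟨T, hT0, ?_, fun s hs hmem => le_csSup hbdd hmem⟩
  rw [hΩo.frontier_eq]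
  refine ⟨hTS, fun hmem => ?_⟩
  obtain ⟨ε, hε, hball⟩ := Metric.isOpen_iff.mp hΩo _ hmem
  have : T + ε / 2 ∈ S := by
    have : x + (T + ε / 2) • e ∈ Metric.ball (x + T • e) ε := by
      rw [mem_ball_iff_norm]
      have : x + (T + ε / 2) • e - (x + T • e) = (ε / 2) • e := by module
      rw [this]
      simp [norm_smul, he, abs_of_nonneg hε.le]
      linarith
    exact subset_closure (hball this)
  have := le_csSup hbdd this
  linarith

lemma convexOn_closure_of {n : ℕ} {Ω : Set (Eucl n)} (hΩo : IsOpen Ω) (hΩc : Convex ℝ Ω)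
    {z₀ : Eucl n} (hz₀ : z₀ ∈ Ω) {v : Eucl n → ℝ}
    (hvcont : ContinuousOn v (closure Ω)) (hvconv : ConvexOn ℝ Ω v) :
    ConvexOn ℝ (closure Ω) v := by
  refine ⟨hΩc.closure, fun x hx y hy a b ha hb hab => ?_⟩
  rcases ha.eq_or_lt with rfl | ha'
  · simp only [zero_add] at hab; subst hab; simp
  rcases hb.eq_or_lt with rfl | hb'
  · simp only [add_zero] at hab; subst hab; simp
  -- approximate by interior points
  set φ : ℝ → Eucl n → Eucl n := fun ε p => p + ε • (z₀ - p) with hφ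
  have hint : ∀ (p : Eucl n), p ∈ closure Ω → ∀ ε : ℝ, 0 < ε → ε < 1 → φ ε p ∈ Ω := by
    intro p hp ε hε hε1
    have : φ ε p ∈ openSegment ℝ z₀ p := by
      refine ⟨ε, 1 - ε, hε, by linarith, by ring, ?_⟩
      simp only [hφ]; module
    have := (hΩc.openSegment_interior_closure_subset_interior
      (by rwa [hΩo.interior_eq]) hp) this
    rwa [hΩo.interior_eq] at this
  have hab' : a • x + b • y ∈ closure Ω := hΩc.closure hx hy ha hb hab
  have hcombo : ∀ ε : ℝ, a • φ ε x + b • φ ε y = φ ε (a • x + b • y) := by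
    intro ε
    simp only [hφ]
    have h1 : a • (x + ε • (z₀ - x)) + b • (y + ε • (z₀ - y))
        = (a + b) • (ε • z₀) + (a • x + b • y) - ε • (a • x + b • y) := by module
    rw [h1, hab]; module
  have key : ∀ ε : ℝ, 0 < ε → ε < 1 →
      v (φ ε (a • x + b • y)) ≤ a * v (φ ε x) + b * v (φ ε y) := by
    intro ε hε hε1
    rw [← hcombo ε]
    exact hvconv.2 (hint x hx ε hε hε1) (hint y hy ε hε hε1) ha hb hab
  -- take limits as ε → 0+
  have hφt : ∀ (p : Eucl n), Tendsto (fun ε : ℝ => φ ε p) (𝓝[>] (0:ℝ)) (𝓝 p) := by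
    intro p
    have : Tendsto (fun ε : ℝ => φ ε p) (𝓝 (0:ℝ)) (𝓝 (φ 0 p)) := by
      apply Continuous.tendsto
      simp only [hφ]; continuity
    simp only [hφ, zero_smul, add_zero] at this
    exact this.mono_left nhdsWithin_le_nhds
  have hev : ∀ᶠ ε in 𝓝[>] (0:ℝ), 0 < ε ∧ ε < 1 := by
    filter_upwards [Ioo_mem_nhdsGT_of_mem (by norm_num : (0:ℝ) ∈ Ico (0:ℝ) 1)] with ε hε
    exact ⟨hε.1, hε.2⟩
  have htend : ∀ (p : Eucl n), p ∈ closure Ω →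
      Tendsto (fun ε : ℝ => v (φ ε p)) (𝓝[>] (0:ℝ)) (𝓝 (v p)) := by
    intro p hp
    have hin : ∀ᶠ ε in 𝓝[>] (0:ℝ), φ ε p ∈ closure Ω := by
      filter_upwards [hev] with ε hε
      exact subset_closure (hint p hp ε hε.1 hε.2)
    exact (hvcont p hp).tendsto.comp (tendsto_nhdsWithin_iff.mpr ⟨hφt p, hin⟩)
  have hL : Tendsto (fun ε : ℝ => v (φ ε (a • x + b • y))) (𝓝[>] (0:ℝ))
      (𝓝 (v (a • x + b • y))) := htend _ hab'
  have hRt : Tendsto (fun ε : ℝ => a * v (φ ε x) + b * v (φ ε y)) (𝓝[>] (0:ℝ))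
      (𝓝 (a * v x + b * v y)) := ((htend x hx).const_mul a).add ((htend y hy).const_mul b)
  refine le_of_tendsto_of_tendsto hL hRt ?_
  filter_upwards [hev] with ε hε
  exact key ε hε.1 hε.2

-- Maximum principle
lemma max_principle {n : ℕ} (hn : 1 ≤ n) {Ω : Set (Eucl n)} (hΩo : IsOpen Ω)
    {z₀ : Eucl n} {R : ℝ} (hR : closure Ω ⊆ closedBall z₀ R)
    {v : Eucl n → ℝ} (hvc : ConvexOn ℝ (closure Ω) v)
    (hbd : ∀ x ∈ frontier Ω, v x ≤ 0) :
    ∀ x ∈ closure Ω, v x ≤ 0 := by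
  intro x hx
  by_cases hxΩ : x ∈ Ω
  swap
  · apply hbd
    rw [hΩo.frontier_eq]; exact ⟨hx, hxΩ⟩
  have hxfr : x ∉ frontier Ω := by
    rw [hΩo.frontier_eq]; exact fun h => h.2 hxΩ
  set e : Eucl n := EuclideanSpace.single ⟨0, hn⟩ (1:ℝ) with he_def
  have he : ‖e‖ = 1 := by simp [he_def]
  obtain ⟨t₁, ht₁0, hb₁, -⟩ := ray_hits hΩo hR hx e he
  obtain ⟨t₂, ht₂0, hb₂, -⟩ := ray_hits hΩo hR hx (-e) (by simp [he])
  have ht₁ : 0 < t₁ := lt_of_le_of_ne ht₁0 (by rintro rfl; apply hxfr; simpa using hb₁)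
  have ht₂ : 0 < t₂ := lt_of_le_of_ne ht₂0 (by rintro rfl; apply hxfr; simpa using hb₂)
  set b₁ := x + t₁ • e
  set b₂ := x + t₂ • (-e)
  set a : ℝ := t₂ / (t₁ + t₂) with ha_def
  have hsum : 0 < t₁ + t₂ := by linarith
  have ha : 0 < a := div_pos ht₂ hsum
  have ha1 : a < 1 := by rw [ha_def, div_lt_one hsum]; linarith
  have hab : a + (1 - a) = 1 := by ring
  have hx_combo : a • b₁ + (1 - a) • b₂ = x := by
    have key : a * t₁ - (1 - a) * t₂ = 0 := by
      rw [ha_def]; field_simp; ring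
    have : a • b₁ + (1 - a) • b₂ = x + (a * t₁ - (1 - a) * t₂) • e := by
      simp only [b₁, b₂]; module
    rw [this, key]; simp
  have := hvc.2 (frontier_subset_closure hb₁) (frontier_subset_closure hb₂)
    ha.le (by linarith) hab
  rw [hx_combo] at this
  simp only [smul_eq_mul] at this
  have h1 := hbd _ hb₁
  have h2 := hbd _ hb₂
  nlinarith

-- interior lower bound on -v
lemma interior_lower {n : ℕ} {Ω : Set (Eucl n)} (hΩo : IsOpen Ω)
    {z₀ : Eucl n} {r R : ℝ} (hr : 0 < r) (hrR : r ≤ R)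
    (hball : ball z₀ r ⊆ Ω) (hR : closure Ω ⊆ closedBall z₀ R)
    {v : Eucl n → ℝ} (hvc : ConvexOn ℝ (closure Ω) v)
    (hbd : ∀ x ∈ frontier Ω, v x ≤ 0)
    {x₀ : Eucl n} (hx₀ : x₀ ∈ closure Ω) (hvx₀ : 0 ≤ -v x₀)
    {z : Eucl n} (hz : z ∈ ball z₀ (r / 2)) :
    r / (4 * R) * (-v x₀) ≤ -v z := by
  have hR0 : 0 < R := lt_of_lt_of_le hr hrR
  have hκ1 : r / (4 * R) ≤ 1 := by
    rw [div_le_one (by linarith)]; linarith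
  have hzΩ : z ∈ Ω := hball (ball_subset_ball (by linarith) hz)
  by_cases hzx : z = x₀
  · subst hzx
    nlinarith
  set τ := ‖z - x₀‖ with hτ_def
  have hτ : 0 < τ := by
    rw [hτ_def, norm_pos_iff]
    exact sub_ne_zero.mpr hzx
  set e : Eucl n := τ⁻¹ • (z - x₀) with he_def
  have he : ‖e‖ = 1 := by
    rw [he_def, norm_smul, norm_inv, Real.norm_eq_abs, abs_of_pos hτ, ← hτ_def,
      inv_mul_cancel₀ hτ.ne']
  have hz_eq : x₀ + τ • e = z := by
    rw [he_def, smul_smul, mul_inv_cancel₀ hτ.ne', one_smul]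
    abel
  obtain ⟨T, hT0, hbfr, hTmax⟩ := ray_hits hΩo hR hx₀ e he
  have hτT : τ ≤ T := hTmax τ hτ.le (by rw [hz_eq]; exact subset_closure hzΩ)
  have hTpos : 0 < T := lt_of_lt_of_le hτ hτT
  set b := x₀ + T • e with hb_def
  have hbΩ : b ∉ Ω := by
    rw [hΩo.frontier_eq] at hbfr; exact hbfr.2
  -- distance from z to b is at least r/2
  have hdist : r / 2 ≤ ‖b - z‖ := by
    by_contra h
    push_neg at h
    apply hbΩ
    apply hball
    rw [mem_ball]
    calc dist b z₀ ≤ dist b z + dist z z₀ := dist_triangle _ _ _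
      _ < r / 2 + r / 2 := by
          apply add_lt_add_of_lt_of_lt
          · rwa [dist_eq_norm]
          · exact mem_ball.mp hz
      _ = r := by ring
  have hbz : ‖b - z‖ = T - τ := by
    rw [hb_def, ← hz_eq]
    have : x₀ + T • e - (x₀ + τ • e) = (T - τ) • e := by module
    rw [this, norm_smul, he, Real.norm_eq_abs, mul_one, abs_of_nonneg (by linarith)]
  have hT2R : T ≤ 2 * R := by
    have h1 : b ∈ closedBall z₀ R := hR (frontier_subset_closure hbfr)
    have h2 : x₀ ∈ closedBall z₀ R := hR hx₀
    have : ‖b - x₀‖ = T := by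
      rw [hb_def]
      have : x₀ + T • e - x₀ = T • e := by module
      rw [this, norm_smul, he, Real.norm_eq_abs, mul_one, abs_of_nonneg hT0]
    have hd : dist b x₀ ≤ dist b z₀ + dist z₀ x₀ := dist_triangle _ _ _
    rw [dist_eq_norm, this] at hd
    rw [dist_comm z₀ x₀] at hd
    have := mem_closedBall.mp h1
    have := mem_closedBall.mp h2
    linarith
  set s : ℝ := τ / T with hs_def
  have hs0 : 0 ≤ s := div_nonneg hτ.le hTpos.le
  have hs1 : s ≤ 1 := by rw [hs_def, div_le_one hTpos]; exact hτT
  have hz_combo : (1 - s) • x₀ + s • b = z := by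
    rw [← hz_eq, hb_def]
    have hsT : s * T = τ := by rw [hs_def, div_mul_cancel₀ _ hTpos.ne']
    have : (1 - s) • x₀ + s • (x₀ + T • e) = x₀ + (s * T) • e := by module
    rw [this, hsT]
  have hconv : v ((1 - s) • x₀ + s • b) ≤ (1 - s) * v x₀ + s * v b := by
    have := hvc.2 hx₀ (frontier_subset_closure hbfr)
      (sub_nonneg.mpr hs1) hs0 (by ring : (1 - s) + s = 1)
    simpa only [smul_eq_mul] using this
  rw [hz_combo] at hconv
  have hvb := hbd _ hbfr
  -- 1 - s ≥ r/(4R)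
  have h1s : r / (4 * R) ≤ 1 - s := by
    have : 1 - s = (T - τ) / T := by rw [hs_def]; field_simp
    rw [this, ← hbz]
    rw [div_le_div_iff₀ (by linarith) hTpos]
    calc r * T ≤ r * (2 * R) := by nlinarith
      _ ≤ ‖b - z‖ * (4 * R) := by nlinarith
  nlinarith

lemma subdiffImage_ball_subset {n : ℕ} {Ω : Set (Eucl n)}
    {z₀ : Eucl n} {r M : ℝ} (hr : 0 < r) (hball : ball z₀ r ⊆ Ω)
    {w : Eucl n → ℝ} (hw0 : ∀ x ∈ Ω, w x ≤ 0)
    (hwM : ∀ x ∈ Ω, -w x ≤ M) :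
    subdiffImage Ω w (ball z₀ (r / 2)) ⊆ closedBall 0 (4 * M / r) := by
  have hM : 0 ≤ M := by
    have hz : z₀ ∈ Ω := hball (mem_ball_self hr)
    have := hw0 z₀ hz; have := hwM z₀ hz; linarith
  intro p hp
  simp only [subdiffImage, mem_iUnion] at hp
  obtain ⟨x, hx, hpx⟩ := hp
  rw [mem_closedBall, dist_zero_right]
  by_cases hp0 : p = 0
  · subst hp0; simp; positivity
  set y : Eucl n := x + (r / 4) • (‖p‖⁻¹ • p) with hy_def
  have hyΩ : y ∈ Ω := by
    apply hball
    rw [mem_ball]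
    calc dist y z₀ ≤ dist y x + dist x z₀ := dist_triangle _ _ _
      _ < r / 4 + r / 2 := by
          apply add_lt_add_of_le_of_lt
          · rw [hy_def, dist_eq_norm]
            have : x + (r / 4) • (‖p‖⁻¹ • p) - x = (r / 4) • (‖p‖⁻¹ • p) := by module
            rw [this, norm_smul, norm_smul, norm_inv, norm_norm,
              inv_mul_cancel₀ (norm_ne_zero_iff.mpr hp0)]
            simp [abs_of_nonneg hr.le]
          · exact mem_ball.mp (ball_subset_ball (by linarith) hx)
      _ < r := by linarith
  have hxΩ : x ∈ Ω := hball (ball_subset_ball (by linarith) hx)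
  have hinner : (inner ℝ p (y - x) : ℝ) = (r / 4) * ‖p‖ := by
    have : y - x = (r / 4) • (‖p‖⁻¹ • p) := by rw [hy_def]; module
    rw [this, real_inner_smul_right, real_inner_smul_right, real_inner_self_eq_norm_sq]
    rw [sq]
    field_simp
  have h1 := hpx y hyΩ
  rw [hinner] at h1
  have h2 := hw0 y hyΩ
  have h3 := hwM x hxΩ
  rw [le_div_iff₀ hr]
  nlinarith

lemma key_step {n : ℕ} (hn : 1 ≤ n) {Ω : Set (Eucl n)}
    (hΩo : IsOpen Ω) (hΩc : Convex ℝ Ω) (hΩb : Bornology.IsBounded Ω)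
    {z₀ : Eucl n} {r R : ℝ} (hr : 0 < r) (hrR : r ≤ R)
    (hball : ball z₀ r ⊆ Ω) (hRcl : closure Ω ⊆ closedBall z₀ R)
    {v w : Eucl n → ℝ} {Q : ℝ≥0∞}
    (hv_cont : ContinuousOn v (closure Ω)) (hv_conv : ConvexOn ℝ Ω v)
    (hv_bd : ∀ x ∈ frontier Ω, v x ≤ 0)
    (hw_cont : ContinuousOn w (closure Ω)) (hw_conv : ConvexOn ℝ Ω w)
    (hw_bd : ∀ x ∈ frontier Ω, w x = 0)
    (heq : ∀ E ⊆ Ω, MeasurableSet E →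
      MAm Ω w E = ∫⁻ x in E, Q * ENNReal.ofReal ((-v x) ^ n)) :
    Rq Ω w ≤ ENNReal.ofReal ((32 * R / r ^ 3) ^ n * 2 ^ (2 * n + 1)) := by
  haveI : Nonempty (Fin n) := ⟨⟨0, hn⟩⟩
  have hz₀ : z₀ ∈ Ω := hball (mem_ball_self hr)
  have hR0 : 0 < R := lt_of_lt_of_le hr hrR
  have hvc' : ConvexOn ℝ (closure Ω) v := convexOn_closure_of hΩo hΩc hz₀ hv_cont hv_conv
  have hwc' : ConvexOn ℝ (closure Ω) w := convexOn_closure_of hΩo hΩc hz₀ hw_cont hw_conv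
  have hv0 : ∀ x ∈ closure Ω, v x ≤ 0 := max_principle hn hΩo hRcl hvc' hv_bd
  have hw0 : ∀ x ∈ closure Ω, w x ≤ 0 :=
    max_principle hn hΩo hRcl hwc' (fun x hx => le_of_eq (hw_bd x hx))
  have hcomp : IsCompact (closure Ω) := hΩb.isCompact_closure
  have hne : (closure Ω).Nonempty := ⟨z₀, subset_closure hz₀⟩
  obtain ⟨x₀, hx₀cl, hx₀max⟩ := hcomp.exists_isMaxOn hne (hv_cont.neg)
  obtain ⟨x₁, hx₁cl, hx₁max⟩ := hcomp.exists_isMaxOn hne (hw_cont.neg)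
  set m : ℝ := -v x₀ with hm_def
  set M : ℝ := -w x₁ with hM_def
  have hvm : ∀ x ∈ closure Ω, -v x ≤ m := fun x hx => hx₀max hx
  have hwM : ∀ x ∈ closure Ω, -w x ≤ M := fun x hx => hx₁max hx
  have hm0 : 0 ≤ m := le_trans (by simpa using hv0 z₀ (subset_closure hz₀)) (hvm z₀ (subset_closure hz₀))
  have hM0 : 0 ≤ M := le_trans (by simpa using hw0 z₀ (subset_closure hz₀)) (hwM z₀ (subset_closure hz₀))
  have hC0 : 0 ≤ (32 * R / r ^ 3) ^ n * 2 ^ (2 * n + 1) := by positivity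
  -- empty-superlevel helper
  have hMAm_empty : MAm Ω w ∅ = 0 := by
    simp [MAm, subdiffImage]
  -- degenerate case: M = 0
  rcases eq_or_lt_of_le hM0 with hM | hM
  · have hzero : MAenergy Ω w = 0 := by
      rw [MAenergy]
      apply le_antisymm ?_ zero_le
      have : ∀ t ∈ Ioi (0:ℝ), MAm Ω w {x ∈ Ω | t < -w x} ≤ 0 := by
        intro t ht
        have hemp : {x ∈ Ω | t < -w x} = ∅ := by
          ext x
          simp only [mem_sep_iff, mem_empty_iff_false, iff_false, not_and, not_lt]
          intro hx
          calc -w x ≤ M := hwM x (subset_closure hx)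
            _ = 0 := hM.symm
            _ ≤ t := le_of_lt ht
        rw [hemp, hMAm_empty]
      calc (∫⁻ t in Ioi (0:ℝ), MAm Ω w {x ∈ Ω | t < -w x})
          ≤ ∫⁻ _ in Ioi (0:ℝ), 0 :=
            lintegral_mono_ae (ae_restrict_of_forall_mem measurableSet_Ioi this)
        _ = 0 := by simp
    rw [Rq, hzero, ENNReal.zero_div]
    exact zero_le
  -- degenerate case: m = 0
  rcases eq_or_lt_of_le hm0 with hm | hm
  · have hint0 : ∀ x ∈ Ω, Q * ENNReal.ofReal ((-v x) ^ n) = 0 := by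
      intro x hx
      have h1 : -v x ≤ 0 := hm ▸ hvm x (subset_closure hx)
      have h2 : 0 ≤ -v x := by simpa using hv0 x (subset_closure hx)
      have : -v x = 0 := le_antisymm h1 h2
      rw [this, zero_pow (by omega : n ≠ 0)]
      simp
    have hzero : MAenergy Ω w = 0 := by
      rw [MAenergy]
      apply le_antisymm ?_ zero_le
      have : ∀ t ∈ Ioi (0:ℝ), MAm Ω w {x ∈ Ω | t < -w x} ≤ 0 := by
        intro t ht
        have hsub : {x ∈ Ω | t < -w x} ⊆ Ω := sep_subset _ _
        have hmeas : MeasurableSet {x ∈ Ω | t < -w x} := by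
          have hopen : IsOpen (Ω ∩ w ⁻¹' Iio (-t)) :=
            (hw_cont.mono subset_closure).isOpen_inter_preimage hΩo isOpen_Iio
          have : {x ∈ Ω | t < -w x} = Ω ∩ w ⁻¹' Iio (-t) := by
            ext x; simp [mem_sep_iff, lt_neg]
          rw [this]; exact hopen.measurableSet
        rw [heq _ hsub hmeas]
        calc (∫⁻ x in {x ∈ Ω | t < -w x}, Q * ENNReal.ofReal ((-v x) ^ n))
            ≤ ∫⁻ _ in {x ∈ Ω | t < -w x}, 0 := by
              apply lintegral_mono_ae
              apply ae_restrict_of_forall_mem hmeas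
              intro x hx
              rw [hint0 x hx.1]
          _ = 0 := by simp
      calc (∫⁻ t in Ioi (0:ℝ), MAm Ω w {x ∈ Ω | t < -w x})
          ≤ ∫⁻ _ in Ioi (0:ℝ), 0 :=
            lintegral_mono_ae (ae_restrict_of_forall_mem measurableSet_Ioi this)
        _ = 0 := by simp
    rw [Rq, hzero, ENNReal.zero_div]
    exact zero_le
  -- main case : 0 < m, 0 < M
  set κ : ℝ := r / (4 * R) with hκ_def
  have hκ : 0 < κ := by positivity
  set B : Set (Eucl n) := ball z₀ (r / 2) with hB_def
  have hBsub : B ⊆ Ω := fun x hx => hball (ball_subset_ball (by linarith) hx)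
  have hBmeas : MeasurableSet B := measurableSet_ball
  have hSmeas : ∀ t : ℝ, MeasurableSet {x ∈ Ω | t < -w x} := by
    intro t
    have hopen : IsOpen (Ω ∩ w ⁻¹' Iio (-t)) :=
      (hw_cont.mono subset_closure).isOpen_inter_preimage hΩo isOpen_Iio
    have hset : {x ∈ Ω | t < -w x} = Ω ∩ w ⁻¹' Iio (-t) := by
      ext x; simp [mem_sep_iff, lt_neg]
    rw [hset]; exact hopen.measurableSet
  have hvolΩ0 : volume Ω ≠ 0 := (hΩo.measure_pos volume ⟨z₀, hz₀⟩).ne'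
  have hvolΩtop : volume Ω ≠ ⊤ := hΩb.measure_lt_top.ne
  have hν0 : volume (ball (0 : Eucl n) 1) ≠ 0 := (measure_ball_pos _ _ one_pos).ne'
  have hνtop : volume (ball (0 : Eucl n) 1) ≠ ⊤ := measure_ball_lt_top.ne
  -- lower bound on MAm over the small ball
  have hlow : Q * ENNReal.ofReal ((κ * m) ^ n) * volume B ≤ MAm Ω w B := by
    rw [heq B hBsub hBmeas, ← setLIntegral_const]
    apply lintegral_mono_ae
    apply ae_restrict_of_forall_mem measurableSet_ball
    intro x hx
    have h1 : κ * m ≤ -v x := by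
      have := interior_lower hΩo hr hrR hball hRcl hvc' hv_bd hx₀cl (by linarith) hx
      rw [hκ_def]; linarith
    exact mul_le_mul_right (ENNReal.ofReal_le_ofReal
      (pow_le_pow_left₀ (by positivity) h1 n)) Q
  -- upper bound on MAm over the small ball via gradient bound
  have hup : MAm Ω w B ≤ ENNReal.ofReal ((4 * M / r) ^ n) * volume (ball (0 : Eucl n) 1) := by
    have h1 : MAm Ω w B ≤ volume (closedBall (0 : Eucl n) (4 * M / r)) :=
      measure_mono (subdiffImage_ball_subset hr hball (fun x hx => hw0 x (subset_closure hx))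
        (fun x hx => hwM x (subset_closure hx)))
    rwa [Measure.addHaar_closedBall _ _ (by positivity), finrank_euclideanSpace_fin] at h1
  have hvolB : volume B = ENNReal.ofReal ((r / 2) ^ n) * volume (ball (0 : Eucl n) 1) := by
    rw [hB_def, Measure.addHaar_ball _ _ (by positivity : (0:ℝ) ≤ r / 2),
      finrank_euclideanSpace_fin]
  set bb : ℝ := (4 * M / r) ^ n / ((κ * m) ^ n * (r / 2) ^ n) with hbb_def
  have hbb0 : 0 < bb := by rw [hbb_def]; positivity
  have hQbound : Q ≤ ENNReal.ofReal bb := by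
    have h2 : Q * ENNReal.ofReal ((κ * m) ^ n * (r / 2) ^ n) * volume (ball (0 : Eucl n) 1)
        ≤ ENNReal.ofReal ((4 * M / r) ^ n) * volume (ball (0 : Eucl n) 1) := by
      calc Q * ENNReal.ofReal ((κ * m) ^ n * (r / 2) ^ n) * volume (ball (0 : Eucl n) 1)
          = Q * ENNReal.ofReal ((κ * m) ^ n) * volume B := by
            rw [hvolB, ENNReal.ofReal_mul (by positivity)]; ring
        _ ≤ MAm Ω w B := hlow
        _ ≤ _ := hup
    rw [ENNReal.mul_le_mul_iff_left hν0 hνtop] at h2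
    rw [hbb_def, ENNReal.ofReal_div_of_pos (by positivity)]
    exact (ENNReal.le_div_iff_mul_le
      (Or.inl (ENNReal.ofReal_pos.mpr (by positivity)).ne')
      (Or.inl ENNReal.ofReal_ne_top)).mpr h2
  -- numerator bound
  set K0 : ℝ≥0∞ := Q * ENNReal.ofReal (m ^ n) * volume Ω with hK0_def
  have hnum : MAenergy Ω w ≤ K0 * ENNReal.ofReal M := by
    rw [MAenergy]
    have hbound : ∀ t ∈ Ioi (0:ℝ), MAm Ω w {x ∈ Ω | t < -w x}
        ≤ (Ioc (0:ℝ) M).indicator (fun _ => K0) t := by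
      intro t ht
      have hsub : {x ∈ Ω | t < -w x} ⊆ Ω := sep_subset _ _
      by_cases htM : t ≤ M
      · have hmem : t ∈ Ioc (0:ℝ) M := ⟨ht, htM⟩
        rw [indicator_of_mem hmem]
        rw [heq _ hsub (hSmeas t)]
        calc (∫⁻ x in {x ∈ Ω | t < -w x}, Q * ENNReal.ofReal ((-v x) ^ n))
            ≤ ∫⁻ _ in {x ∈ Ω | t < -w x}, Q * ENNReal.ofReal (m ^ n) := by
              apply lintegral_mono_ae
              apply ae_restrict_of_forall_mem (hSmeas t)
              intro x hx
              have h2 : 0 ≤ -v x := by simpa using hv0 x (subset_closure hx.1)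
              exact mul_le_mul_right (ENNReal.ofReal_le_ofReal
                (pow_le_pow_left₀ h2 (hvm x (subset_closure hx.1)) n)) Q
          _ = Q * ENNReal.ofReal (m ^ n) * volume {x ∈ Ω | t < -w x} :=
              setLIntegral_const _ _
          _ ≤ K0 := by rw [hK0_def]; exact mul_le_mul_right (measure_mono hsub) _
      · rw [indicator_of_notMem (fun hmem => htM hmem.2)]
        have hemp : {x ∈ Ω | t < -w x} = ∅ := by
          ext x
          simp only [mem_sep_iff, mem_empty_iff_false, iff_false, not_and, not_lt]
          intro hx
          exact le_trans (hwM x (subset_closure hx)) (le_of_not_ge htM)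
        rw [hemp, hMAm_empty]
    calc (∫⁻ t in Ioi (0:ℝ), MAm Ω w {x ∈ Ω | t < -w x})
        ≤ ∫⁻ t in Ioi (0:ℝ), (Ioc (0:ℝ) M).indicator (fun _ => K0) t :=
          lintegral_mono_ae (ae_restrict_of_forall_mem measurableSet_Ioi hbound)
      _ = ∫⁻ _ in Ioc (0:ℝ) M, K0 ∂(volume.restrict (Ioi (0:ℝ))) :=
          lintegral_indicator measurableSet_Ioc _
      _ = K0 * (volume.restrict (Ioi (0:ℝ))) (Ioc (0:ℝ) M) := setLIntegral_const _ _
      _ = K0 * ENNReal.ofReal M := by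
          rw [Measure.restrict_apply measurableSet_Ioc,
            inter_eq_left.mpr (fun x hx => hx.1), Real.volume_Ioc, sub_zero]
  -- denominator bound
  have hx₁Ω : x₁ ∈ Ω := by
    by_contra h
    have hfr : x₁ ∈ frontier Ω := by rw [hΩo.frontier_eq]; exact ⟨hx₁cl, h⟩
    have := hw_bd x₁ hfr
    rw [hM_def] at hM
    rw [this] at hM
    norm_num at hM
  set c₁ : Eucl n := (2⁻¹ : ℝ) • x₁ with hc₁_def
  set H : Set (Eucl n) := c₁ +ᵥ ((2⁻¹ : ℝ) • Ω) with hH_def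
  have hHmem : ∀ z, z ∈ H ↔ ∃ y ∈ Ω, z = (2⁻¹ : ℝ) • x₁ + (2⁻¹ : ℝ) • y := by
    intro z
    constructor
    · rintro ⟨-, ⟨a, ha, rfl⟩, rfl⟩
      exact ⟨a, ha, rfl⟩
    · rintro ⟨y, hy, rfl⟩
      exact ⟨(2⁻¹ : ℝ) • y, ⟨y, hy, rfl⟩, rfl⟩
  have hHsub : H ⊆ Ω := by
    intro z hz
    obtain ⟨y, hy, rfl⟩ := (hHmem z).mp hz
    exact hΩc hx₁Ω hy (by norm_num) (by norm_num) (by norm_num)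
  have hHlow : ∀ z ∈ H, M / 2 ≤ -w z := by
    intro z hz
    obtain ⟨y, hy, rfl⟩ := (hHmem z).mp hz
    have := hw_conv.2 hx₁Ω hy (by norm_num : (0:ℝ) ≤ 2⁻¹) (by norm_num : (0:ℝ) ≤ 2⁻¹)
      (by norm_num)
    have hwy : w y ≤ 0 := hw0 y (subset_closure hy)
    simp only [smul_eq_mul] at this
    rw [hM_def]
    linarith
  have hHopen : IsOpen H := by
    have h1 : IsOpen ((2⁻¹ : ℝ) • Ω) := hΩo.smul₀ (by norm_num)
    have h2 : H = (fun z => -c₁ + z) ⁻¹' ((2⁻¹ : ℝ) • Ω) := by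
      ext z
      simp only [hH_def, Set.mem_preimage, Set.mem_vadd_set_iff_neg_vadd_mem, vadd_eq_add]
    rw [h2]
    exact h1.preimage (continuous_const.add continuous_id)
  have hvolH : volume H = ENNReal.ofReal ((2:ℝ)⁻¹ ^ n) * volume Ω := by
    rw [hH_def, measure_vadd, Measure.addHaar_smul, finrank_euclideanSpace_fin,
      abs_of_nonneg (by positivity)]
  have hden : ENNReal.ofReal ((M / 2) ^ (n + 1)) * (ENNReal.ofReal ((2:ℝ)⁻¹ ^ n) * volume Ω)
      ≤ ∫⁻ x in Ω, ENNReal.ofReal ((-w x) ^ (n + 1)) := by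
    rw [← hvolH, ← setLIntegral_const]
    calc (∫⁻ _ in H, ENNReal.ofReal ((M / 2) ^ (n + 1)))
        ≤ ∫⁻ x in H, ENNReal.ofReal ((-w x) ^ (n + 1)) := by
          apply lintegral_mono_ae
          apply ae_restrict_of_forall_mem hHopen.measurableSet
          intro z hz
          exact ENNReal.ofReal_le_ofReal (pow_le_pow_left₀ (by positivity) (hHlow z hz) _)
      _ ≤ ∫⁻ x in Ω, ENNReal.ofReal ((-w x) ^ (n + 1)) :=
          lintegral_mono' (Measure.restrict_mono hHsub le_rfl) le_rfl
  -- final assembly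
  have hfinal : Rq Ω w ≤ (K0 * ENNReal.ofReal M) /
      (ENNReal.ofReal ((M / 2) ^ (n + 1)) * (ENNReal.ofReal ((2:ℝ)⁻¹ ^ n) * volume Ω)) :=
    ENNReal.div_le_div hnum hden
  have e1 : K0 * ENNReal.ofReal M ≤ ENNReal.ofReal (bb * (m ^ n * M)) * volume Ω := by
    rw [hK0_def]
    calc Q * ENNReal.ofReal (m ^ n) * volume Ω * ENNReal.ofReal M
        ≤ ENNReal.ofReal bb * ENNReal.ofReal (m ^ n) * volume Ω * ENNReal.ofReal M := by
          gcongr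
      _ = ENNReal.ofReal (bb * (m ^ n * M)) * volume Ω := by
          rw [ENNReal.ofReal_mul hbb0.le, ENNReal.ofReal_mul (by positivity : (0:ℝ) ≤ m ^ n)]
          ring
  have e2 : ENNReal.ofReal ((M / 2) ^ (n + 1)) * (ENNReal.ofReal ((2:ℝ)⁻¹ ^ n) * volume Ω)
      = ENNReal.ofReal ((M / 2) ^ (n + 1) * (2:ℝ)⁻¹ ^ n) * volume Ω := by
    rw [ENNReal.ofReal_mul (by positivity)]; ring
  have hkeyreal : bb * (m ^ n * M) / ((M / 2) ^ (n + 1) * (2:ℝ)⁻¹ ^ n)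
      = (32 * R / r ^ 3) ^ n * 2 ^ (2 * n + 1) := by
    rw [hbb_def, hκ_def]
    have e1 : (4 * M / r) ^ n / ((r / (4 * R) * m) ^ n * (r / 2) ^ n) * (m ^ n * M)
        = (32 * M * R / r ^ 3) ^ n * M := by
      rw [div_mul_eq_mul_div, div_eq_iff (by positivity)]
      rw [show (4 * M / r) ^ n * (m ^ n * M) = (4 * M / r * m) ^ n * M by
        rw [mul_pow (4 * M / r) m n]; ring]
      rw [show (32 * M * R / r ^ 3) ^ n * M * ((r / (4 * R) * m) ^ n * (r / 2) ^ n)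
          = (32 * M * R / r ^ 3 * (r / (4 * R) * m) * (r / 2)) ^ n * M by
        rw [mul_pow (32 * M * R / r ^ 3 * (r / (4 * R) * m)) (r / 2) n,
          mul_pow (32 * M * R / r ^ 3) (r / (4 * R) * m) n]; ring]
      rw [show 32 * M * R / r ^ 3 * (r / (4 * R) * m) * (r / 2) = 4 * M / r * m by
        field_simp; ring]
    rw [e1]
    have e2 : (M / 2) ^ (n + 1) * (2:ℝ)⁻¹ ^ n = M ^ (n + 1) / 2 ^ (2 * n + 1) := by
      rw [div_pow, inv_pow, ← div_eq_mul_inv, div_div, ← pow_add]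
      congr 2
      omega
    rw [e2]
    rw [show (32 * M * R / r ^ 3) ^ n = (32 * R / r ^ 3) ^ n * M ^ n by
      rw [← mul_pow (32 * R / r ^ 3) M n]; congr 1; ring]
    rw [div_div_eq_mul_div, pow_succ]
    have h1 : M ^ n ≠ 0 := by positivity
    field_simp
    ring
  calc Rq Ω w ≤ (K0 * ENNReal.ofReal M) /
      (ENNReal.ofReal ((M / 2) ^ (n + 1)) * (ENNReal.ofReal ((2:ℝ)⁻¹ ^ n) * volume Ω)) := hfinal
    _ ≤ (ENNReal.ofReal (bb * (m ^ n * M)) * volume Ω) /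
      (ENNReal.ofReal ((M / 2) ^ (n + 1) * (2:ℝ)⁻¹ ^ n) * volume Ω) := by
        rw [← e2]; exact ENNReal.div_le_div e1 le_rfl
    _ = ENNReal.ofReal (bb * (m ^ n * M)) / ENNReal.ofReal ((M / 2) ^ (n + 1) * (2:ℝ)⁻¹ ^ n) :=
        ENNReal.mul_div_mul_right _ _ hvolΩ0 hvolΩtop
    _ = ENNReal.ofReal (bb * (m ^ n * M) / ((M / 2) ^ (n + 1) * (2:ℝ)⁻¹ ^ n)) :=
        (ENNReal.ofReal_div_of_pos (by positivity)).symm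
    _ ≤ ENNReal.ofReal ((32 * R / r ^ 3) ^ n * 2 ^ (2 * n + 1)) :=
        ENNReal.ofReal_le_ofReal (le_of_eq hkeyreal)

end AuxLemmas

/-- Corollary 3.5: uniform upper bound for the Rayleigh quotients of the
iterates (the bound depends only on `n`, `L^n(Ω)`, `λ_MA` and `u_0`). -/
theorem rayleigh_quotient_upper_bound {n : ℕ} (hn : 1 ≤ n)
    (Ω : Set (Eucl n)) (hΩo : IsOpen Ω) (hΩc : Convex ℝ Ω)
    (hΩb : Bornology.IsBounded Ω) (hΩne : Ω.Nonempty)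
    (u : ℕ → Eucl n → ℝ) (hu : IterScheme Ω u) :
    ∃ C : ℝ, 0 < C ∧ ∀ k : ℕ, 1 ≤ k → Rq Ω (u k) ≤ ENNReal.ofReal C := by
  obtain ⟨z₀, hz₀⟩ := hΩne
  obtain ⟨r, hr, hball⟩ := Metric.isOpen_iff.mp hΩo z₀ hz₀
  obtain ⟨R₁, hR₁⟩ := hΩb.subset_closedBall z₀
  set R : ℝ := max r R₁ with hR_def
  have hrR : r ≤ R := le_max_left _ _
  have hR0 : 0 < R := lt_of_lt_of_le hr hrR
  have hRcl : closure Ω ⊆ closedBall z₀ R := by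
    apply closure_minimal _ isClosed_closedBall
    exact hR₁.trans (closedBall_subset_closedBall (le_max_right _ _))
  refine ⟨(32 * R / r ^ 3) ^ n * 2 ^ (2 * n + 1), by positivity, ?_⟩
  intro k hk
  obtain ⟨k', rfl⟩ : ∃ k', k = k' + 1 := ⟨k - 1, by omega⟩
  obtain ⟨hu0c, hu0conv, hu0bd, _, _, hiter⟩ := hu
  obtain ⟨hc, hconv, hbd, heqn⟩ := hiter k'
  have hv : ContinuousOn (u k') (closure Ω) ∧ ConvexOn ℝ Ω (u k') ∧
      ∀ x ∈ frontier Ω, u k' x ≤ 0 := by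
    cases k' with
    | zero => exact ⟨hu0c, hu0conv, hu0bd⟩
    | succ j =>
        obtain ⟨h1, h2, h3, _⟩ := hiter j
        exact ⟨h1, h2, fun x hx => le_of_eq (h3 x hx)⟩
  exact key_step hn hΩo hΩc hΩb hr hrR hball hRcl hv.1 hv.2.1 hv.2.2 hc hconv hbd heqn
end
end

section
/- Continuity of the Monge–Ampère energy (Lemma 2.8): Let Ω ⊂ ℝⁿ be a bounded, open, convex domain. Suppose v_k ∈ C(cl Ω) are convex functions converging uniformly on cl Ω to a function v, and there exists a constant Λ > 0 such that Mv_k(E) ≤ Λ L^n(E) for every Borel set E ⊆ Ω and every k ≥ 0. Then lim_{k→∞} I(v_k) = I(v), where I(w) := ∫_Ω (−w) dMw. -/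
open MeasureTheory Set Filter Metric
open scoped ENNReal RealInnerProductSpace Topology

noncomputable section

namespace ContinuityOfEnergyAux
open scoped NNReal

variable {n : ℕ}

lemma ball_subset_of_infDist {Ω : Set (Eucl n)} (hΩo : IsOpen Ω) {x : Eucl n} (hx : x ∈ Ω)
    {δ : ℝ} (hδ : 0 < δ) (h : δ ≤ infDist x (frontier Ω)) : ball x δ ⊆ Ω := by
  intro y hy
  by_contra hyΩ
  have hfr : ∀ z ∈ ball x δ, z ∉ frontier Ω := by
    intro z hz hzf
    have h1 : infDist x (frontier Ω) ≤ dist x z := infDist_le_dist_of_mem hzf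
    have h2 : dist x z < δ := by rw [dist_comm]; exact mem_ball.mp hz
    linarith
  have hcover : ball x δ ⊆ Ω ∪ (closure Ω)ᶜ := by
    intro z hz
    by_cases h1 : z ∈ Ω
    · exact Or.inl h1
    · refine Or.inr fun hcl => hfr z hz ?_
      rw [hΩo.frontier_eq]; exact ⟨hcl, h1⟩
  have hpre := (convex_ball x δ).isPreconnected
  have := hpre Ω (closure Ω)ᶜ hΩo isClosed_closure.isOpen_compl hcover
    ⟨x, mem_ball_self hδ, hx⟩
    ⟨y, hy, fun hcl => hfr y hy (by rw [hΩo.frontier_eq]; exact ⟨hcl, hyΩ⟩)⟩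
  obtain ⟨z, _, hz1, hz2⟩ := this
  exact hz2 (subset_closure hz1)

lemma frontier_nonempty (hn : 1 ≤ n) {Ω : Set (Eucl n)} (hΩo : IsOpen Ω)
    (hb : Bornology.IsBounded Ω) (hne : Ω.Nonempty) : (frontier Ω).Nonempty := by
  by_contra h
  rw [Set.not_nonempty_iff_eq_empty] at h
  have hclopen : IsClopen Ω := isClopen_iff_frontier_eq_empty.mpr h
  rcases isClopen_iff.mp hclopen with h1 | h1
  · exact hne.ne_empty h1
  · obtain ⟨R, hR⟩ := hb.subset_closedBall 0
    have hmem : (R + 1) • EuclideanSpace.single (⟨0, hn⟩ : Fin n) (1:ℝ) ∈ Ω := by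
      rw [h1]; trivial
    have := hR hmem
    rw [mem_closedBall, dist_zero_right, norm_smul, EuclideanSpace.norm_single] at this
    simp only [norm_one, mul_one] at this
    have hR0 : (0:ℝ) ≤ R := by
      have := hR (by rw [h1]; trivial : (0 : Eucl n) ∈ Ω)
      simpa using this
    rw [Real.norm_eq_abs, abs_of_nonneg (by linarith)] at this
    linarith


lemma mem_subdiffImage {Ω : Set (Eucl n)} {u : Eucl n → ℝ} {E : Set (Eucl n)} {p : Eucl n} :
    p ∈ subdiffImage Ω u E ↔ ∃ x ∈ E, p ∈ subdiff Ω u x := by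
  simp [subdiffImage]

lemma subdiffImage_mono {Ω : Set (Eucl n)} {u : Eucl n → ℝ} {E F : Set (Eucl n)} (h : E ⊆ F) :
    subdiffImage Ω u E ⊆ subdiffImage Ω u F :=
  biUnion_subset_biUnion_left h

lemma subdiffImage_iUnion {Ω : Set (Eucl n)} {u : Eucl n → ℝ} {s : ℕ → Set (Eucl n)} :
    subdiffImage Ω u (⋃ m, s m) = ⋃ m, subdiffImage Ω u (s m) := by
  ext p
  simp only [mem_subdiffImage, mem_iUnion]
  constructor
  · rintro ⟨x, ⟨m, hm⟩, hp⟩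
    exact ⟨m, x, hm, hp⟩
  · rintro ⟨m, x, hx, hp⟩
    exact ⟨x, ⟨m, hx⟩, hp⟩

lemma subdiffImage_union {Ω : Set (Eucl n)} {u : Eucl n → ℝ} {E F : Set (Eucl n)} :
    subdiffImage Ω u (E ∪ F) = subdiffImage Ω u E ∪ subdiffImage Ω u F := by
  ext p
  simp only [mem_subdiffImage, mem_union]
  constructor
  · rintro ⟨x, hx | hx, hp⟩
    · exact Or.inl ⟨x, hx, hp⟩
    · exact Or.inr ⟨x, hx, hp⟩
  · rintro (⟨x, hx, hp⟩ | ⟨x, hx, hp⟩)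
    · exact ⟨x, Or.inl hx, hp⟩
    · exact ⟨x, Or.inr hx, hp⟩

lemma subdiffImage_closed {Ω : Set (Eucl n)} {u : Eucl n → ℝ}
    (hu : ContinuousOn u (closure Ω)) {K : Set (Eucl n)} (hK : IsCompact K)
    (hKcl : K ⊆ closure Ω) : IsClosed (subdiffImage Ω u K) := by
  refine IsSeqClosed.isClosed ?_
  intro pseq p hmem hlim
  choose xseq hxseq hpseq using fun j => mem_subdiffImage.mp (hmem j)
  obtain ⟨xbar, hxbar, ψ, hψ, hxlim⟩ := hK.tendsto_subseq hxseq
  refine mem_subdiffImage.mpr ⟨xbar, hxbar, fun y hy => ?_⟩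
  have hux : Tendsto (fun j => u (xseq (ψ j))) atTop (𝓝 (u xbar)) := by
    refine ((hu xbar (hKcl hxbar)).tendsto).comp ?_
    exact tendsto_nhdsWithin_of_tendsto_nhds_of_eventually_within _ hxlim
      (Eventually.of_forall fun j => hKcl (hxseq (ψ j)))
  have hinner : Tendsto (fun j => (inner ℝ (pseq (ψ j)) (y - xseq (ψ j)) : ℝ)) atTop
      (𝓝 (inner ℝ p (y - xbar) : ℝ)) :=
    Tendsto.inner (hlim.comp hψ.tendsto_atTop) (tendsto_const_nhds.sub hxlim)
  have hle : ∀ j, u (xseq (ψ j)) + (inner ℝ (pseq (ψ j)) (y - xseq (ψ j)) : ℝ) ≤ u y :=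
    fun j => hpseq (ψ j) y hy
  exact le_of_tendsto (hux.add hinner) (Eventually.of_forall hle)

lemma subdiffImage_bounded {Ω : Set (Eucl n)} (hΩo : IsOpen Ω) {u : Eucl n → ℝ} {M δ : ℝ}
    (hδ : 0 < δ) (hM : 0 ≤ M) (hMu : ∀ x ∈ closure Ω, |u x| ≤ M) {K : Set (Eucl n)}
    (hK : ∀ x ∈ K, x ∈ Ω ∧ δ ≤ infDist x (frontier Ω)) :
    subdiffImage Ω u K ⊆ closedBall 0 (4 * M / δ) := by
  intro p hp
  obtain ⟨x, hxK, hpx⟩ := mem_subdiffImage.mp hp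
  obtain ⟨hxΩ, hxd⟩ := hK x hxK
  rw [mem_closedBall, dist_zero_right]
  rcases eq_or_ne p 0 with rfl | hp0
  · rw [norm_zero]; positivity
  · have hpn : (0:ℝ) < ‖p‖ := norm_pos_iff.mpr hp0
    set y : Eucl n := x + (δ / 2) • (‖p‖⁻¹ • p) with hy
    have hyx : y - x = ((δ/2) * ‖p‖⁻¹) • p := by rw [hy]; simp [smul_smul]
    have hyball : y ∈ ball x δ := by
      rw [mem_ball, dist_eq_norm, hyx, norm_smul]
      have : ‖δ / 2 * ‖p‖⁻¹‖ * ‖p‖ = δ/2 := by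
        rw [Real.norm_eq_abs, abs_of_nonneg (by positivity)]
        field_simp
      rw [this]; linarith
    have hyΩ : y ∈ Ω := ball_subset_of_infDist hΩo hxΩ hδ hxd hyball
    have hineq := hpx y hyΩ
    rw [hyx, real_inner_smul_right, real_inner_self_eq_norm_sq] at hineq
    have hxb : |u x| ≤ M := hMu x (subset_closure hxΩ)
    have hyb : |u y| ≤ M := hMu y (subset_closure hyΩ)
    have hval : (δ/2) * ‖p‖⁻¹ * ‖p‖^2 = (δ/2) * ‖p‖ := by
      field_simp
    rw [hval] at hineq
    have h2 : (δ/2) * ‖p‖ ≤ 2 * M := by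
      cases' abs_le.mp hxb with h3 h4
      cases' abs_le.mp hyb with h5 h6
      linarith
    rw [le_div_iff₀ hδ]
    nlinarith


/-- Legendre-type transform of `w` over `closure Ω`. -/
def conjF (Ω : Set (Eucl n)) (w : Eucl n → ℝ) (p : Eucl n) : ℝ :=
  sSup ((fun x => (inner ℝ p x : ℝ) - w x) '' closure Ω)

lemma conj_contOn {Ω : Set (Eucl n)} {w : Eucl n → ℝ} (hw : ContinuousOn w (closure Ω))
    (p : Eucl n) : ContinuousOn (fun x => (inner ℝ p x : ℝ) - w x) (closure Ω) :=
  ((continuous_const.inner continuous_id).continuousOn).sub hw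

lemma conj_bddAbove {Ω : Set (Eucl n)} {w : Eucl n → ℝ} (hΩb : Bornology.IsBounded Ω)
    (hw : ContinuousOn w (closure Ω)) (p : Eucl n) :
    BddAbove ((fun x => (inner ℝ p x : ℝ) - w x) '' closure Ω) :=
  (hΩb.isCompact_closure).bddAbove_image (conj_contOn hw p)

lemma le_conjF {Ω : Set (Eucl n)} {w : Eucl n → ℝ} (hΩb : Bornology.IsBounded Ω)
    (hw : ContinuousOn w (closure Ω)) {p x : Eucl n} (hx : x ∈ closure Ω) :
    (inner ℝ p x : ℝ) - w x ≤ conjF Ω w p :=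
  le_csSup (conj_bddAbove hΩb hw p) ⟨x, hx, rfl⟩

lemma conjF_attains {Ω : Set (Eucl n)} {w : Eucl n → ℝ} {p x : Eucl n} (hx : x ∈ closure Ω)
    (h : ∀ y ∈ closure Ω, (inner ℝ p y : ℝ) - w y ≤ (inner ℝ p x : ℝ) - w x) :
    conjF Ω w p = (inner ℝ p x : ℝ) - w x :=
  IsGreatest.csSup_eq ⟨⟨x, hx, rfl⟩, by rintro a ⟨y, hy, rfl⟩; exact h y hy⟩

lemma conjF_lipschitz {Ω : Set (Eucl n)} {w : Eucl n → ℝ} (hΩb : Bornology.IsBounded Ω)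
    (hΩne : Ω.Nonempty) (hw : ContinuousOn w (closure Ω)) :
    ∃ C : ℝ≥0, LipschitzWith C (conjF Ω w) := by
  obtain ⟨R, hR⟩ := (hΩb.closure).subset_closedBall 0
  have hR0 : 0 ≤ R := by
    obtain ⟨x, hx⟩ := hΩne.closure
    have := hR hx
    rw [mem_closedBall, dist_zero_right] at this
    exact le_trans (norm_nonneg _) this
  refine ⟨⟨R, hR0⟩, LipschitzWith.of_dist_le_mul fun p q => ?_⟩
  show dist (conjF Ω w p) (conjF Ω w q) ≤ R * dist p q
  have key : ∀ p q : Eucl n, conjF Ω w p ≤ conjF Ω w q + R * dist p q := by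
    intro p q
    refine csSup_le ((hΩne.closure).image _) ?_
    rintro a ⟨x, hx, rfl⟩
    show (inner ℝ p x : ℝ) - w x ≤ conjF Ω w q + R * dist p q
    have h1 : (inner ℝ p x : ℝ) - w x = ((inner ℝ q x : ℝ) - w x) + (inner ℝ (p - q) x : ℝ) := by
      rw [inner_sub_left]; ring
    have h2 : (inner ℝ (p - q) x : ℝ) ≤ R * dist p q := by
      calc (inner ℝ (p - q) x : ℝ) ≤ ‖p - q‖ * ‖x‖ := real_inner_le_norm _ _
        _ ≤ ‖p - q‖ * R := by
            refine mul_le_mul_of_nonneg_left ?_ (norm_nonneg _)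
            have := hR hx; rwa [mem_closedBall, dist_zero_right] at this
        _ = R * dist p q := by rw [dist_eq_norm]; ring
    have h3 := le_conjF hΩb hw (p := q) hx
    linarith
  rw [Real.dist_eq, abs_sub_le_iff]
  constructor
  · have := key p q; linarith
  · have := key q p; rw [dist_comm] at this; linarith

lemma conjF_diff_ae {Ω : Set (Eucl n)} {w : Eucl n → ℝ} (hΩb : Bornology.IsBounded Ω)
    (hΩne : Ω.Nonempty) (hw : ContinuousOn w (closure Ω)) :
    volume {p : Eucl n | ¬ DifferentiableAt ℝ (conjF Ω w) p} = 0 := by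
  obtain ⟨C, hC⟩ := conjF_lipschitz hΩb hΩne hw
  exact ae_iff.mp (hC.ae_differentiableAt (μ := volume))

lemma conjF_attain_unique {Ω : Set (Eucl n)} {w : Eucl n → ℝ} (hΩb : Bornology.IsBounded Ω)
    (hw : ContinuousOn w (closure Ω)) {p : Eucl n}
    (hd : DifferentiableAt ℝ (conjF Ω w) p)
    {x₁ x₂ : Eucl n} (hx₁ : x₁ ∈ closure Ω) (hx₂ : x₂ ∈ closure Ω)
    (h₁ : conjF Ω w p = (inner ℝ p x₁ : ℝ) - w x₁)
    (h₂ : conjF Ω w p = (inner ℝ p x₂ : ℝ) - w x₂) : x₁ = x₂ := by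
  have key : ∀ (x : Eucl n), x ∈ closure Ω → conjF Ω w p = (inner ℝ p x : ℝ) - w x →
      ∀ h : Eucl n, (inner ℝ h x : ℝ) ≤ fderiv ℝ (conjF Ω w) p h := by
    intro x hx hatt h
    have hcseq : Tendsto (fun m : ℕ => ‖((m:ℝ) + 1)‖) atTop atTop := by
      have h1 : Tendsto (fun m : ℕ => (m:ℝ) + 1) atTop atTop :=
        tendsto_atTop_add_const_right _ 1 tendsto_natCast_atTop_atTop
      refine Tendsto.congr ?_ h1
      intro m
      rw [Real.norm_eq_abs, abs_of_nonneg (by positivity)]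
    have hlim := hd.hasFDerivAt.lim h hcseq
    refine ge_of_tendsto hlim ?_
    filter_upwards [] with m
    have hm : (0:ℝ) < (m:ℝ) + 1 := by positivity
    have hineq : conjF Ω w p + ((m:ℝ)+1)⁻¹ * (inner ℝ h x : ℝ)
        ≤ conjF Ω w (p + ((m:ℝ)+1)⁻¹ • h) := by
      have := le_conjF hΩb hw (p := p + ((m:ℝ)+1)⁻¹ • h) hx
      rw [inner_add_left, real_inner_smul_left] at this
      rw [hatt]
      linarith
    have hstep : ((m:ℝ)+1)⁻¹ * (inner ℝ h x : ℝ)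
        ≤ conjF Ω w (p + ((m:ℝ)+1)⁻¹ • h) - conjF Ω w p := by linarith
    calc (inner ℝ h x : ℝ)
        = ((m:ℝ)+1) * (((m:ℝ)+1)⁻¹ * (inner ℝ h x : ℝ)) := by field_simp
      _ ≤ ((m:ℝ)+1) * (conjF Ω w (p + ((m:ℝ)+1)⁻¹ • h) - conjF Ω w p) :=
          mul_le_mul_of_nonneg_left hstep hm.le
      _ = ((m:ℝ)+1) • (conjF Ω w (p + ((m:ℝ)+1)⁻¹ • h) - conjF Ω w p) := by
          rw [smul_eq_mul]
  have hD : ∀ h : Eucl n, (inner ℝ h x₁ : ℝ) = (inner ℝ h x₂ : ℝ) := by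
    intro h
    have k1 := key x₁ hx₁ h₁ h
    have k2 := key x₂ hx₂ h₂ h
    have k1' := key x₁ hx₁ h₁ (-h)
    have k2' := key x₂ hx₂ h₂ (-h)
    rw [map_neg, inner_neg_left] at k1' k2'
    linarith
  have hthis := hD (x₁ - x₂)
  have hz : (inner ℝ (x₁ - x₂) (x₁ - x₂) : ℝ) = 0 := by
    rw [inner_sub_right]; linarith
  rw [inner_self_eq_zero] at hz
  exact sub_eq_zero.mp hz

/-- A subgradient of `w` at an interior point attains the conjugate. -/
lemma conjF_attains_of_subdiff {Ω : Set (Eucl n)} {w : Eucl n → ℝ}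
    (hw : ContinuousOn w (closure Ω)) {p x : Eucl n} (hx : x ∈ Ω) (hp : p ∈ subdiff Ω w x) :
    conjF Ω w p = (inner ℝ p x : ℝ) - w x := by
  refine conjF_attains (subset_closure hx) ?_
  intro y hy
  have hC : IsClosed (closure Ω ∩ (fun y => (inner ℝ p y : ℝ) - w y) ⁻¹'
      (Iic ((inner ℝ p x : ℝ) - w x))) :=
    ContinuousOn.preimage_isClosed_of_isClosed (conj_contOn hw p) isClosed_closure isClosed_Iic
  have hsub : closure Ω ⊆ closure Ω ∩ (fun y => (inner ℝ p y : ℝ) - w y) ⁻¹'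
      (Iic ((inner ℝ p x : ℝ) - w x)) := by
    refine closure_minimal (fun z hz => ⟨subset_closure hz, ?_⟩) hC
    have := hp z hz
    rw [inner_sub_right] at this
    simp only [mem_preimage, mem_Iic]
    linarith
  exact (hsub hy).2

lemma uniform_bound {Ω : Set (Eucl n)} (hΩb : Bornology.IsBounded Ω)
    {v : ℕ → Eucl n → ℝ} {w : Eucl n → ℝ}
    (hcont : ∀ k, ContinuousOn (v k) (closure Ω)) (hw : ContinuousOn w (closure Ω))
    (hunif : TendstoUniformlyOn v w atTop (closure Ω)) :
    ∃ M : ℝ, 0 ≤ M ∧ ∀ k, ∀ x ∈ closure Ω, |v k x| ≤ M := by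
  obtain ⟨Mw, hMw⟩ := (hΩb.isCompact_closure).exists_bound_of_continuousOn hw
  obtain ⟨N, hN⟩ := eventually_atTop.mp (Metric.tendstoUniformlyOn_iff.mp hunif 1 one_pos)
  choose C hC using fun k => (hΩb.isCompact_closure).exists_bound_of_continuousOn (hcont k)
  refine ⟨(|Mw| + 1) + ∑ j ∈ Finset.range N, |C j|, by positivity, fun k x hx => ?_⟩
  have hsum : (0:ℝ) ≤ ∑ j ∈ Finset.range N, |C j| :=
    Finset.sum_nonneg fun j _ => abs_nonneg _
  rcases le_or_gt N k with hk | hk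
  · have h1 := hN k hk x hx
    rw [Real.dist_eq] at h1
    have h2 : ‖w x‖ ≤ Mw := hMw x hx
    rw [Real.norm_eq_abs] at h2
    have h3 : |v k x| ≤ |w x| + 1 := by
      have := abs_sub_abs_le_abs_sub (v k x) (w x)
      rw [abs_sub_comm] at this
      linarith [abs_abs (w x)]
    have : |w x| ≤ |Mw| := le_trans h2 (le_abs_self _)
    linarith
  · have h1 := hC k x hx
    rw [Real.norm_eq_abs] at h1
    have h2 : C k ≤ ∑ j ∈ Finset.range N, |C j| := by
      refine le_trans (le_abs_self _) ?_
      exact Finset.single_le_sum (fun j _ => abs_nonneg (C j)) (Finset.mem_range.mpr hk)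
    have : (0:ℝ) ≤ |Mw| + 1 := by positivity
    linarith

lemma tendsto_comp_seq {Ω : Set (Eucl n)} {v : ℕ → Eucl n → ℝ} {w : Eucl n → ℝ}
    (hw : ContinuousOn w (closure Ω))
    (hunif : TendstoUniformlyOn v w atTop (closure Ω))
    {φ : ℕ → ℕ} (hφ : Tendsto φ atTop atTop)
    {x : ℕ → Eucl n} (hx : ∀ j, x j ∈ closure Ω) {xbar : Eucl n} (hxbar : xbar ∈ closure Ω)
    (hxx : Tendsto x atTop (𝓝 xbar)) :
    Tendsto (fun j => v (φ j) (x j)) atTop (𝓝 (w xbar)) := by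
  have h1 : Tendsto (fun j => w (x j)) atTop (𝓝 (w xbar)) :=
    ((hw xbar hxbar).tendsto).comp
      (tendsto_nhdsWithin_of_tendsto_nhds_of_eventually_within _ hxx (Eventually.of_forall hx))
  have h2 : Tendsto (fun j => v (φ j) (x j) - w (x j)) atTop (𝓝 0) := by
    rw [NormedAddCommGroup.tendsto_nhds_zero]
    intro ε hε
    have hev := Metric.tendstoUniformlyOn_iff.mp hunif ε hε
    filter_upwards [hφ.eventually hev] with j hj
    have := hj (x j) (hx j)
    rw [Real.dist_eq, abs_sub_comm] at this
    rwa [Real.norm_eq_abs]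
  have := h2.add h1
  simpa using this

lemma stepA_subset {Ω : Set (Eucl n)} {v : ℕ → Eucl n → ℝ} {w : Eucl n → ℝ}
    (hw : ContinuousOn w (closure Ω))
    (hunif : TendstoUniformlyOn v w atTop (closure Ω))
    {K : Set (Eucl n)} (hK : IsCompact K) (hKcl : K ⊆ closure Ω) :
    (⋂ N : ℕ, ⋃ k ∈ Ici N, subdiffImage Ω (v k) K) ⊆ subdiffImage Ω w K := by
  intro p hp
  have hfr : ∃ᶠ k in atTop, p ∈ subdiffImage Ω (v k) K := by
    rw [frequently_atTop]
    intro N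
    obtain ⟨k, hk1, hk2⟩ := mem_iUnion₂.mp (mem_iInter.mp hp N)
    exact ⟨k, hk1, hk2⟩
  obtain ⟨φ, hφ, hφmem⟩ := extraction_of_frequently_atTop hfr
  choose xj hxj hpxj using fun j => mem_subdiffImage.mp (hφmem j)
  obtain ⟨xbar, hxbarK, ψ, hψ, hxlim⟩ := hK.tendsto_subseq hxj
  refine mem_subdiffImage.mpr ⟨xbar, hxbarK, fun y hy => ?_⟩
  have hφψ : Tendsto (fun j => φ (ψ j)) atTop atTop := (hφ.comp hψ).tendsto_atTop
  have h1 : Tendsto (fun j => v (φ (ψ j)) (xj (ψ j))) atTop (𝓝 (w xbar)) :=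
    tendsto_comp_seq hw hunif hφψ (fun j => hKcl (hxj (ψ j))) (hKcl hxbarK) hxlim
  have h2 : Tendsto (fun j => (inner ℝ p (y - xj (ψ j)) : ℝ)) atTop
      (𝓝 (inner ℝ p (y - xbar) : ℝ)) :=
    Tendsto.inner tendsto_const_nhds (tendsto_const_nhds.sub hxlim)
  have h3 : Tendsto (fun j => v (φ (ψ j)) y) atTop (𝓝 (w y)) :=
    tendsto_comp_seq hw hunif hφψ (fun _ => subset_closure hy) (subset_closure hy)
      tendsto_const_nhds
  exact le_of_tendsto_of_tendsto' (h1.add h2) h3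
    (fun j => hpxj (ψ j) y hy)

lemma stepB {Ω : Set (Eucl n)} (hΩb : Bornology.IsBounded Ω) (hΩne : Ω.Nonempty)
    {v : ℕ → Eucl n → ℝ} {w : Eucl n → ℝ}
    (hcont : ∀ k, ContinuousOn (v k) (closure Ω))
    (hw : ContinuousOn w (closure Ω))
    (hunif : TendstoUniformlyOn v w atTop (closure Ω))
    {O : Set (Eucl n)} (hO : IsOpen O) (hOsub : O ⊆ Ω) :
    volume (subdiffImage Ω w O) ≤ atTop.liminf (fun k => volume (subdiffImage Ω (v k) O)) := by
  set Z := {p : Eucl n | ¬ DifferentiableAt ℝ (conjF Ω w) p} with hZdef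
  have hZ : volume Z = 0 := conjF_diff_ae hΩb hΩne hw
  have claim : subdiffImage Ω w O \ Z ⊆ ⋃ N : ℕ, ⋂ k ∈ Ici N, subdiffImage Ω (v k) O := by
    rintro p ⟨hp, hpZ⟩
    have hd : DifferentiableAt ℝ (conjF Ω w) p := not_not.mp hpZ
    obtain ⟨x, hxO, hpx⟩ := mem_subdiffImage.mp hp
    have hattx : conjF Ω w p = (inner ℝ p x : ℝ) - w x :=
      conjF_attains_of_subdiff hw (hOsub hxO) hpx
    have hex : ∀ k : ℕ, ∃ z ∈ closure Ω,
        ∀ y ∈ closure Ω, (inner ℝ p y : ℝ) - v k y ≤ (inner ℝ p z : ℝ) - v k z := by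
      intro k
      obtain ⟨z, hz, hmax⟩ := (hΩb.isCompact_closure).exists_isMaxOn hΩne.closure
        (((continuous_const.inner continuous_id).continuousOn).sub (hcont k))
      exact ⟨z, hz, fun y hy => hmax hy⟩
    choose xk hxk hmax using hex
    have hsubk : ∀ k, p ∈ subdiff Ω (v k) (xk k) := by
      intro k y hy
      have := hmax k y (subset_closure hy)
      rw [inner_sub_right]
      linarith
    suffices heven : ∀ᶠ k in atTop, xk k ∈ O by
      obtain ⟨N, hN⟩ := eventually_atTop.mp heven
      refine mem_iUnion.mpr ⟨N, ?_⟩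
      exact mem_iInter₂.mpr fun k hk => mem_subdiffImage.mpr ⟨xk k, hN k hk, hsubk k⟩
    by_contra hcon
    have hfr : ∃ᶠ k in atTop, xk k ∈ closure Ω \ O :=
      (not_eventually.mp hcon).mono fun k hk => ⟨hxk k, hk⟩
    obtain ⟨φ, hφ, hφmem⟩ := extraction_of_frequently_atTop hfr
    have hCcpt : IsCompact (closure Ω \ O) := (hΩb.isCompact_closure).diff hO
    obtain ⟨xbar, hxbarC, ψ, hψ, hxlim⟩ := hCcpt.tendsto_subseq hφmem
    have hφψ : Tendsto (fun j => φ (ψ j)) atTop atTop := (hφ.comp hψ).tendsto_atTop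
    have hattbar : conjF Ω w p = (inner ℝ p xbar : ℝ) - w xbar := by
      refine conjF_attains hxbarC.1 ?_
      intro y hy
      have h1 : Tendsto (fun j => (inner ℝ p (xk (φ (ψ j))) : ℝ) - v (φ (ψ j)) (xk (φ (ψ j))))
          atTop (𝓝 ((inner ℝ p xbar : ℝ) - w xbar)) := by
        refine Tendsto.sub (Tendsto.inner tendsto_const_nhds hxlim) ?_
        exact tendsto_comp_seq hw hunif hφψ (fun j => (hφmem (ψ j)).1) hxbarC.1 hxlim
      have h2 : Tendsto (fun j => (inner ℝ p y : ℝ) - v (φ (ψ j)) y) atTop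
          (𝓝 ((inner ℝ p y : ℝ) - w y)) := by
        refine Tendsto.sub tendsto_const_nhds ?_
        exact tendsto_comp_seq hw hunif hφψ (fun _ => hy) hy tendsto_const_nhds
      exact le_of_tendsto_of_tendsto' h2 h1 (fun j => hmax (φ (ψ j)) y hy)
    have heq : xbar = x := conjF_attain_unique hΩb hw hd hxbarC.1
      (subset_closure (hOsub hxO)) hattbar hattx
    exact hxbarC.2 (heq ▸ hxO)
  calc volume (subdiffImage Ω w O)
      ≤ volume ((subdiffImage Ω w O \ Z) ∪ Z) := measure_mono (by
        intro q hq
        by_cases h : q ∈ Z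
        · exact Or.inr h
        · exact Or.inl ⟨hq, h⟩)
    _ ≤ volume (subdiffImage Ω w O \ Z) + volume Z := measure_union_le _ _
    _ = volume (subdiffImage Ω w O \ Z) := by rw [hZ, add_zero]
    _ ≤ volume (⋃ N : ℕ, ⋂ k ∈ Ici N, subdiffImage Ω (v k) O) := measure_mono claim
    _ = ⨆ N : ℕ, volume (⋂ k ∈ Ici N, subdiffImage Ω (v k) O) := by
        refine Monotone.measure_iUnion ?_
        intro N M hNM
        exact biInter_subset_biInter_left (fun k hk => le_trans hNM hk)
    _ ≤ atTop.liminf (fun k => volume (subdiffImage Ω (v k) O)) := by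
        refine iSup_le fun N => ?_
        refine le_liminf_of_le (by isBoundedDefault) ?_
        filter_upwards [eventually_ge_atTop N] with k hk
        exact measure_mono (biInter_subset_of_mem hk)

end ContinuityOfEnergyAux

open ContinuityOfEnergyAux in
/-- Lemma 2.8: continuity of the Monge–Ampère energy along a uniformly
convergent sequence with uniformly dominated Monge–Ampère measures. -/
theorem continuity_of_energy {n : ℕ} (hn : 1 ≤ n)
    (Ω : Set (Eucl n)) (hΩo : IsOpen Ω) (hΩc : Convex ℝ Ω)
    (hΩb : Bornology.IsBounded Ω) (hΩne : Ω.Nonempty)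
    (v : ℕ → Eucl n → ℝ) (vlim : Eucl n → ℝ)
    (hcont : ∀ k : ℕ, ContinuousOn (v k) (closure Ω))
    (hconv : ∀ k : ℕ, ConvexOn ℝ Ω (v k))
    (hunif : TendstoUniformlyOn v vlim atTop (closure Ω))
    (Λ : ℝ) (hΛ : 0 < Λ)
    (hdom : ∀ k : ℕ, ∀ E ⊆ Ω, MeasurableSet E →
      MAm Ω (v k) E ≤ ENNReal.ofReal Λ * volume E) :
    Tendsto (fun k => MAenergy Ω (v k)) atTop (𝓝 (MAenergy Ω vlim)) := by
  classical
  have hw : ContinuousOn vlim (closure Ω) :=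
    hunif.continuousOn (Frequently.of_forall hcont)
  obtain ⟨M, hM0, hM⟩ := uniform_bound hΩb hcont hw hunif
  have volΩfin : volume Ω ≠ ∞ := hΩb.measure_lt_top.ne
  have hfront : (frontier Ω).Nonempty := frontier_nonempty hn hΩo hΩb hΩne
  set E : ℝ → Set (Eucl n) := fun t => {x ∈ Ω | t < -vlim x} with hEdef
  set Ek : ℕ → ℝ → Set (Eucl n) := fun k t => {x ∈ Ω | t < -v k x} with hEkdef
  set F : ℕ → ℝ → ℝ≥0∞ := fun k t => volume (subdiffImage Ω (v k) (Ek k t)) with hFdef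
  set f : ℝ → ℝ≥0∞ := fun t => volume (subdiffImage Ω vlim (E t)) with hfdef
  -- basic facts
  have hEkopen : ∀ k t, IsOpen (Ek k t) := by
    intro k t
    have : Ek k t = Ω ∩ (v k) ⁻¹' (Iio (-t)) := by
      ext x; simp [hEkdef, lt_neg, neg_lt, and_comm]
    rw [this]
    exact ContinuousOn.isOpen_inter_preimage ((hcont k).mono subset_closure) hΩo isOpen_Iio
  have hEopen : ∀ t, IsOpen (E t) := by
    intro t
    have : E t = Ω ∩ vlim ⁻¹' (Iio (-t)) := by
      ext x; simp [hEdef, lt_neg, neg_lt, and_comm]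
    rw [this]
    exact ContinuousOn.isOpen_inter_preimage (hw.mono subset_closure) hΩo isOpen_Iio
  have hEksub : ∀ k t, Ek k t ⊆ Ω := fun k t x hx => hx.1
  have hEsub : ∀ t, E t ⊆ Ω := fun t x hx => hx.1
  have hFbound : ∀ k t, F k t ≤ ENNReal.ofReal Λ * volume Ω := by
    intro k t
    refine le_trans (hdom k (Ek k t) (hEksub k t) (hEkopen k t).measurableSet) ?_
    exact mul_le_mul_right (measure_mono (hEksub k t)) _
  have hFvanish : ∀ k t, M ≤ t → F k t = 0 := by
    intro k t ht
    have : Ek k t = ∅ := by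
      refine eq_empty_iff_forall_notMem.mpr fun x hx => ?_
      have h1 : t < -v k x := hx.2
      have h2 : |v k x| ≤ M := hM k x (subset_closure hx.1)
      have h3 : -v k x ≤ M := le_trans (neg_le_abs (v k x)) h2
      linarith
    rw [hFdef]
    simp only [this, subdiffImage, mem_empty_iff_false, iUnion_of_empty, iUnion_empty,
      measure_empty]
  have hFanti : ∀ k, Antitone (F k) := by
    intro k s t hst
    exact measure_mono (subdiffImage_mono fun x hx => ⟨hx.1, lt_of_le_of_lt hst hx.2⟩)
  have hfanti : Antitone f := by
    intro s t hst
    exact measure_mono (subdiffImage_mono fun x hx => ⟨hx.1, lt_of_le_of_lt hst hx.2⟩)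
  have hclose : ∀ ε : ℝ, 0 < ε → ∀ᶠ k in atTop, ∀ x ∈ closure Ω, |vlim x - v k x| < ε := by
    intro ε hε
    filter_upwards [Metric.tendstoUniformlyOn_iff.mp hunif ε hε] with k hk x hx
    rw [← Real.dist_eq]
    exact hk x hx
  -- lower bound: liminf
  have hlower : ∀ t : ℝ, 0 < t → f t ≤ atTop.liminf (fun k => F k t) := by
    intro t ht
    have step : ∀ t' : ℝ, t < t' →
        volume (subdiffImage Ω vlim (E t')) ≤ atTop.liminf (fun k => F k t) := by
      intro t' ht'
      refine le_trans (stepB hΩb hΩne hcont hw hunif (hEopen t') (hEsub t')) ?_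
      refine liminf_le_liminf ?_
      filter_upwards [hclose (t' - t) (by linarith)] with k hk
      refine measure_mono (subdiffImage_mono fun x hx => ⟨hx.1, ?_⟩)
      have h1 := hk x (subset_closure hx.1)
      have h2 : t' < -vlim x := hx.2
      rw [abs_lt] at h1
      linarith [h1.1, h1.2]
    have hEU : E t = ⋃ m : ℕ, E (t + 1 / (m + 1)) := by
      ext x
      simp only [hEdef, mem_setOf_eq, mem_iUnion]
      constructor
      · rintro ⟨hxΩ, hxt⟩
        obtain ⟨m, hm⟩ := exists_nat_one_div_lt (show (0:ℝ) < -vlim x - t by linarith)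
        exact ⟨m, hxΩ, by linarith⟩
      · rintro ⟨m, hxΩ, hxt⟩
        have : (0:ℝ) < 1 / (m + 1) := by positivity
        exact ⟨hxΩ, by linarith⟩
    calc f t = volume (⋃ m : ℕ, subdiffImage Ω vlim (E (t + 1 / (m + 1)))) := by
          rw [show f t = volume (subdiffImage Ω vlim (E t)) from rfl, hEU, subdiffImage_iUnion]
      _ = ⨆ m : ℕ, volume (subdiffImage Ω vlim (E (t + 1 / (m + 1)))) := by
          refine Monotone.measure_iUnion fun m m' hmm' => ?_
          refine subdiffImage_mono fun x hx => ⟨hx.1, ?_⟩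
          have h1 : (1:ℝ) / (m' + 1) ≤ 1 / (m + 1) := by
            apply one_div_le_one_div_of_le (by positivity)
            exact_mod_cast add_le_add_left (Nat.cast_le.mpr hmm') 1
          have := hx.2
          linarith
      _ ≤ atTop.liminf (fun k => F k t) := by
          refine iSup_le fun m => step _ ?_
          have : (0:ℝ) < 1 / (m + 1) := by positivity
          linarith
  have hffin : ∀ t : ℝ, 0 < t → f t ≤ ENNReal.ofReal Λ * volume Ω := by
    intro t ht
    refine le_trans (hlower t ht) ?_
    refine liminf_le_of_frequently_le ?_ (by isBoundedDefault)
    exact Frequently.of_forall fun k => hFbound k t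
  have hRHSfin : ENNReal.ofReal Λ * volume Ω ≠ ∞ :=
    ENNReal.mul_ne_top ENNReal.ofReal_ne_top volΩfin
  -- the thin collars
  set U : ℕ → Set (Eucl n) := fun m => {x ∈ Ω | infDist x (frontier Ω) < 1 / (m + 1)}
    with hUdef
  have hUopen : ∀ m, IsOpen (U m) := by
    intro m
    have : U m = Ω ∩ (fun x => infDist x (frontier Ω)) ⁻¹' (Iio (1 / (m + 1))) := rfl
    rw [this]
    exact hΩo.inter ((continuous_infDist_pt _).isOpen_preimage _ isOpen_Iio)
  have hUlim : Tendsto (fun m => ENNReal.ofReal Λ * volume (U m)) atTop (𝓝 0) := by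
    have hUempty : ⋂ m, U m = ∅ := by
      refine eq_empty_iff_forall_notMem.mpr fun x hx => ?_
      simp only [mem_iInter] at hx
      have h0 : infDist x (frontier Ω) ≤ 0 := by
        by_contra hpos
        push_neg at hpos
        obtain ⟨m, hm⟩ := exists_nat_one_div_lt hpos
        exact absurd (hx m).2 (not_lt.mpr hm.le)
      have heq : infDist x (frontier Ω) = 0 := le_antisymm h0 infDist_nonneg
      have hxfr : x ∈ frontier Ω :=
        (IsClosed.mem_iff_infDist_zero isClosed_frontier hfront).mpr heq
      rw [hΩo.frontier_eq] at hxfr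
      exact hxfr.2 (hx 0).1
    have hanti : Antitone U := by
      intro m m' hmm' x hx
      refine ⟨hx.1, lt_of_lt_of_le hx.2 ?_⟩
      apply one_div_le_one_div_of_le (by positivity)
      exact_mod_cast add_le_add_left (Nat.cast_le.mpr hmm') 1
    have := tendsto_measure_iInter_atTop
      (fun m => (hUopen m).measurableSet.nullMeasurableSet) hanti
      ⟨0, ne_top_of_le_ne_top volΩfin (measure_mono fun x hx => hx.1)⟩
    rw [hUempty, measure_empty] at this
    have h2 := ENNReal.Tendsto.const_mul (a := ENNReal.ofReal Λ) this
      (Or.inr ENNReal.ofReal_ne_top)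
    rwa [mul_zero] at h2
  -- upper bound at continuity points
  have hupper : ∀ t : ℝ, 0 < t → ContinuousAt f t →
      atTop.limsup (fun k => F k t) ≤ f t := by
    intro t ht hcontf
    have key : ∀ m : ℕ, atTop.limsup (fun k => F k t)
        ≤ f (t - t / (m + 2)) + ENNReal.ofReal Λ * volume (U m) := by
      intro m
      have hm2 : (1:ℝ) < (m:ℝ) + 2 := by
        have : (0:ℝ) ≤ m := Nat.cast_nonneg m
        linarith
      have hsm0' : 0 < t - t / ((m:ℝ) + 2) := by
        have : t / ((m:ℝ) + 2) < t := div_lt_self ht hm2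
        linarith
      have hsmt' : t - t / ((m:ℝ) + 2) < t := by
        have : 0 < t / ((m:ℝ) + 2) := by positivity
        linarith
      obtain ⟨sm, hsmeq, hsm0, hsmt⟩ : ∃ sm : ℝ, sm = t - t / ((m:ℝ) + 2) ∧ 0 < sm ∧ sm < t :=
        ⟨_, rfl, hsm0', hsmt'⟩
      obtain ⟨s', hs'1, hs'2⟩ : ∃ s' : ℝ, sm < s' ∧ s' < t :=
        ⟨(sm + t) / 2, by linarith, by linarith⟩
      obtain ⟨δ, hδeq, hδ0⟩ : ∃ δ : ℝ, δ = 1 / ((m:ℝ) + 1) ∧ 0 < δ :=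
        ⟨_, rfl, by positivity⟩
      set K := {x ∈ closure Ω | s' ≤ -vlim x ∧ δ ≤ infDist x (frontier Ω)} with hKdef
      have hKcl : K ⊆ closure Ω := fun x hx => hx.1
      have hKclosed : IsClosed K := by
        have : K = (closure Ω ∩ vlim ⁻¹' (Iic (-s')))
            ∩ (fun x => infDist x (frontier Ω)) ⁻¹' (Ici δ) := by
          ext x
          simp only [hKdef, mem_setOf_eq, mem_inter_iff, mem_preimage, mem_Iic, mem_Ici]
          constructor
          · rintro ⟨h1, h2, h3⟩; exact ⟨⟨h1, by linarith⟩, h3⟩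
          · rintro ⟨⟨h1, h2⟩, h3⟩; exact ⟨h1, by linarith, h3⟩
        rw [this]
        exact ((hw.preimage_isClosed_of_isClosed isClosed_closure isClosed_Iic).inter
          (IsClosed.preimage (continuous_infDist_pt _) isClosed_Ici))
      have hKcpt : IsCompact K :=
        (hΩb.isCompact_closure).of_isClosed_subset hKclosed hKcl
      have hKΩ : ∀ x ∈ K, x ∈ Ω ∧ δ ≤ infDist x (frontier Ω) := by
        intro x hx
        refine ⟨?_, hx.2.2⟩
        rcases (em (x ∈ Ω)) with h | h
        · exact h
        · exfalso
          have hxfr : x ∈ frontier Ω := by rw [hΩo.frontier_eq]; exact ⟨hx.1, h⟩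
          have h0 := infDist_zero_of_mem hxfr
          have h2 := hx.2.2
          rw [h0] at h2
          linarith
      have hKE : K ⊆ E sm := fun x hx => ⟨(hKΩ x hx).1, lt_of_lt_of_le hs'1 hx.2.1⟩
      set A : ℕ → Set (Eucl n) := fun k => subdiffImage Ω (v k) K with hAdef
      have hAclosed : ∀ k, IsClosed (A k) := fun k => subdiffImage_closed (hcont k) hKcpt hKcl
      have hAbdd : ∀ k, A k ⊆ closedBall 0 (4 * M / δ) :=
        fun k => subdiffImage_bounded hΩo hδ0 hM0 (hM k) hKΩ
      have heventual : ∀ᶠ k in atTop,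
          F k t ≤ volume (A k) + ENNReal.ofReal Λ * volume (U m) := by
        filter_upwards [hclose (t - s') (by linarith)] with k hk
        have hsplit : Ek k t ⊆ K ∪ (Ek k t ∩ U m) := by
          intro x hx
          by_cases hd : infDist x (frontier Ω) < δ
          · exact Or.inr ⟨hx, hx.1, by rw [← hδeq]; exact hd⟩
          · refine Or.inl ⟨subset_closure hx.1, ?_, not_lt.mp hd⟩
            have h1 := hk x (subset_closure hx.1)
            have h2 : t < -v k x := hx.2
            rw [abs_lt] at h1
            have := h1.1
            linarith
        calc F k t ≤ volume (subdiffImage Ω (v k) (K ∪ (Ek k t ∩ U m))) :=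
              measure_mono (subdiffImage_mono hsplit)
          _ = volume (A k ∪ subdiffImage Ω (v k) (Ek k t ∩ U m)) := by
              rw [subdiffImage_union]
          _ ≤ volume (A k) + volume (subdiffImage Ω (v k) (Ek k t ∩ U m)) :=
              measure_union_le _ _
          _ ≤ volume (A k) + ENNReal.ofReal Λ * volume (U m) := by
              refine add_le_add_right ?_ _
              refine le_trans (hdom k _ (fun x hx => hx.1.1)
                (((hEkopen k t).inter (hUopen m)).measurableSet)) ?_
              exact mul_le_mul_right (measure_mono inter_subset_right) _
      have hlimsupA : atTop.limsup (fun k => volume (A k)) ≤ f sm := by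
        set V : ℕ → Set (Eucl n) := fun N => ⋃ k ∈ Ici N, A k with hVdef
        have hVmeas : ∀ N, MeasurableSet (V N) :=
          fun N => MeasurableSet.biUnion (to_countable _)
            (fun k _ => (hAclosed k).measurableSet)
        have hVanti : Antitone V := by
          intro N N' hNN'
          exact biUnion_subset_biUnion_left fun k hk => le_trans hNN' hk
        have hVfin : volume (V 0) ≠ ∞ := by
          have hsub : V 0 ⊆ closedBall (0 : Eucl n) (4 * M / δ) :=
            iUnion₂_subset fun k _ => hAbdd k
          exact ne_top_of_le_ne_top
            (measure_closedBall_lt_top (x := (0 : Eucl n)) (r := 4 * M / δ)).ne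
            (measure_mono hsub)
        have htd := tendsto_measure_iInter_atTop
          (fun N => (hVmeas N).nullMeasurableSet) hVanti ⟨0, hVfin⟩
        have h1 : atTop.limsup (fun k => volume (A k)) ≤ volume (⋂ N, V N) := by
          refine ge_of_tendsto htd (Eventually.of_forall fun N => ?_)
          refine limsup_le_of_le (by isBoundedDefault) ?_
          filter_upwards [eventually_ge_atTop N] with k hk
          exact measure_mono (subset_biUnion_of_mem hk)
        refine le_trans h1 ?_
        refine le_trans (measure_mono (stepA_subset hw hunif hKcpt hKcl)) ?_
        exact measure_mono (subdiffImage_mono hKE)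
      -- combine via epsilon
      refine ENNReal.le_of_forall_pos_le_add fun ε hε hfin => ?_
      have hfsmfin : f sm < ∞ :=
        lt_of_le_of_lt (hffin sm hsm0) (lt_top_iff_ne_top.mpr hRHSfin)
      have h2 : atTop.limsup (fun k => volume (A k)) < f sm + ε := by
        refine lt_of_le_of_lt hlimsupA ?_
        exact ENNReal.lt_add_right hfsmfin.ne (by exact_mod_cast hε.ne')
      have h3 := eventually_lt_of_limsup_lt h2
      refine limsup_le_of_le (by isBoundedDefault) ?_
      filter_upwards [heventual, h3] with k hk1 hk2
      calc F k t ≤ volume (A k) + ENNReal.ofReal Λ * volume (U m) := hk1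
        _ ≤ (f sm + ε) + ENNReal.ofReal Λ * volume (U m) := add_le_add_left hk2.le _
        _ = (f sm + ENNReal.ofReal Λ * volume (U m)) + ε := by ring
        _ = (f (t - t / ((m:ℝ) + 2)) + ENNReal.ofReal Λ * volume (U m)) + ε := by rw [← hsmeq]
    -- let m → ∞
    have hsmtend : Tendsto (fun m : ℕ => t - t / (m + 2)) atTop (𝓝 t) := by
      have h0 : Tendsto (fun m : ℕ => 1 / ((m:ℝ) + 2)) atTop (𝓝 0) := by
        have := (tendsto_one_div_add_atTop_nhds_zero_nat (𝕜 := ℝ)).comp (tendsto_add_atTop_nat 1)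
        refine this.congr fun m => ?_
        simp only [Function.comp_apply]
        push_cast
        ring_nf
      have h1 : Tendsto (fun m : ℕ => t / ((m:ℝ) + 2)) atTop (𝓝 0) := by
        have := h0.const_mul t
        rw [mul_zero] at this
        refine this.congr fun m => ?_
        field_simp
      have := h1.const_sub t
      rwa [sub_zero] at this
    have h1 : Tendsto (fun m : ℕ => f (t - t / (m + 2))) atTop (𝓝 (f t)) :=
      hcontf.tendsto.comp hsmtend
    have htot : Tendsto (fun m : ℕ => f (t - t / (m + 2)) + ENNReal.ofReal Λ * volume (U m))
        atTop (𝓝 (f t)) := by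
      have := h1.add hUlim
      rwa [add_zero] at this
    exact ge_of_tendsto htot (Eventually.of_forall key)
  -- a.e. pointwise convergence
  have hptwise : ∀ᵐ t ∂(volume.restrict (Ioi (0:ℝ))),
      Tendsto (fun k => F k t) atTop (𝓝 (f t)) := by
    have hbad : (volume.restrict (Ioi (0:ℝ))) {t | ¬ ContinuousAt f t} = 0 := by
      refine le_antisymm (le_trans ?_ (le_of_eq
        ((hfanti.countable_not_continuousAt).measure_zero volume))) zero_le
      exact Measure.restrict_apply_le _ _
    have hae : ∀ᵐ t ∂(volume.restrict (Ioi (0:ℝ))), ContinuousAt f t := ae_iff.mpr hbad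
    filter_upwards [hae, ae_restrict_mem measurableSet_Ioi] with t hcontt ht
    exact tendsto_of_le_liminf_of_limsup_le (hlower t ht) (hupper t ht hcontt)
  -- dominated convergence
  have hgoal : Tendsto (fun k => ∫⁻ t in Ioi (0:ℝ), F k t) atTop
      (𝓝 (∫⁻ t in Ioi (0:ℝ), f t)) := by
    refine tendsto_lintegral_of_dominated_convergence
      ((Ioc (0:ℝ) M).indicator (fun _ => ENNReal.ofReal Λ * volume Ω))
      (fun k => (hFanti k).measurable) (fun k => ?_) ?_ hptwise
    · filter_upwards [ae_restrict_mem measurableSet_Ioi] with t ht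
      rcases le_or_gt t M with h | h
      · have hmem : t ∈ Ioc (0:ℝ) M := ⟨ht, h⟩
        rw [Set.indicator_of_mem hmem]
        exact hFbound k t
      · rw [hFvanish k t h.le]
        exact zero_le
    · have h1 : ∫⁻ t in Ioi (0:ℝ),
          ((Ioc (0:ℝ) M).indicator (fun _ => ENNReal.ofReal Λ * volume Ω)) t
          ≤ ∫⁻ t, ((Ioc (0:ℝ) M).indicator (fun _ => ENNReal.ofReal Λ * volume Ω)) t := by
        exact setLIntegral_le_lintegral _ _
      refine ne_top_of_le_ne_top ?_ h1
      rw [lintegral_indicator measurableSet_Ioc, setLIntegral_const, Real.volume_Ioc]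
      exact ENNReal.mul_ne_top hRHSfin ENNReal.ofReal_ne_top
  exact hgoal
end
end

section
/- Equivalence of L^p norms for convex functions vanishing on the boundary (Lemma 2.9): Let Ω ⊂ ℝⁿ be a bounded, open, convex domain and let u ∈ C(cl Ω) be convex with u = 0 on ∂Ω. Then for every p ≥ 1, ‖u‖_{L^∞(Ω)} / (n+1) ≤ ( (1/L^n(Ω)) ∫_Ω |u|^p )^{1/p} ≤ ‖u‖_{L^∞(Ω)}. -/
open MeasureTheory Set Filter Metric
open scoped ENNReal RealInnerProductSpace Topology

noncomputable section

open scoped Pointwise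

set_option maxHeartbeats 1000000

lemma aux_combo_closure {n : ℕ} {Ω : Set (Eucl n)} (hΩo : IsOpen Ω) (hΩc : Convex ℝ Ω)
    {u : Eucl n → ℝ} (hu_cont : ContinuousOn u (closure Ω)) (hu_conv : ConvexOn ℝ Ω u)
    {z w : Eucl n} (hz : z ∈ Ω) (hw : w ∈ closure Ω) {t : ℝ} (ht0 : 0 ≤ t) (ht1 : t < 1) :
    u ((1 - t) • z + t • w) ≤ (1 - t) * u z + t * u w := by
  rcases ht0.eq_or_lt with h0 | h0
  · simp [← h0]
  have hxΩ : (1 - t) • z + t • w ∈ Ω := by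
    have := hΩc.combo_interior_closure_mem_interior (x := z) (y := w) (a := 1 - t) (b := t)
      (by rwa [hΩo.interior_eq]) hw (by linarith) ht0 (by ring)
    rwa [hΩo.interior_eq] at this
  have hne : (𝓝[Ω] w).NeBot := mem_closure_iff_nhdsWithin_neBot.mp hw
  have hmap : Tendsto (fun y => (1 - t) • z + t • y) (𝓝[Ω] w) (𝓝 ((1 - t) • z + t • w)) := by
    exact ((continuous_const.add (continuous_id.const_smul t)).tendsto w).mono_left
      nhdsWithin_le_nhds
  have h1 : Tendsto (fun y => u ((1 - t) • z + t • y)) (𝓝[Ω] w) (𝓝 (u ((1 - t) • z + t • w))) := by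
    have hc : ContinuousAt u ((1 - t) • z + t • w) :=
      hu_cont.continuousAt (Filter.mem_of_superset (hΩo.mem_nhds hxΩ) subset_closure)
    exact hc.tendsto.comp hmap
  have h2 : Tendsto (fun y => (1 - t) * u z + t * u y) (𝓝[Ω] w)
      (𝓝 ((1 - t) * u z + t * u w)) := by
    have : Tendsto u (𝓝[Ω] w) (𝓝 (u w)) :=
      (hu_cont w hw).mono_left (nhdsWithin_mono _ subset_closure)
    exact tendsto_const_nhds.add (this.const_mul t)
  refine le_of_tendsto_of_tendsto h1 h2 ?_
  filter_upwards [eventually_mem_nhdsWithin] with y hy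
  exact hu_conv.2 hz hy (by linarith) ht0 (by ring)

/-- Convexity inequality with both endpoints in the closure, provided the combination is inside. -/

lemma aux_combo_closure2 {n : ℕ} {Ω : Set (Eucl n)} (hΩo : IsOpen Ω) (hΩc : Convex ℝ Ω)
    {u : Eucl n → ℝ} (hu_cont : ContinuousOn u (closure Ω)) (hu_conv : ConvexOn ℝ Ω u)
    {z w : Eucl n} (hz : z ∈ closure Ω) (hw : w ∈ closure Ω) {l : ℝ} (hl0 : 0 ≤ l) (hl1 : l ≤ 1)
    (hx : (1 - l) • z + l • w ∈ Ω) :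
    u ((1 - l) • z + l • w) ≤ (1 - l) * u z + l * u w := by
  set x := (1 - l) • z + l • w with hxdef
  have hx1 : (1 - (1/2 : ℝ)) • x + (1/2 : ℝ) • z ∈ Ω := by
    have := hΩc.combo_interior_closure_mem_interior (x := x) (y := z) (a := 1 - 1/2) (b := 1/2)
      (by rwa [hΩo.interior_eq]) hz (by norm_num) (by norm_num) (by norm_num)
    rwa [hΩo.interior_eq] at this
  have hx2 : (1 - (1/2 : ℝ)) • x + (1/2 : ℝ) • w ∈ Ω := by
    have := hΩc.combo_interior_closure_mem_interior (x := x) (y := w) (a := 1 - 1/2) (b := 1/2)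
      (by rwa [hΩo.interior_eq]) hw (by norm_num) (by norm_num) (by norm_num)
    rwa [hΩo.interior_eq] at this
  have h1 : u ((1 - (1/2 : ℝ)) • x + (1/2 : ℝ) • z) ≤ (1 - 1/2) * u x + (1/2) * u z :=
    aux_combo_closure hΩo hΩc hu_cont hu_conv hx hz (by norm_num) (by norm_num)
  have h2 : u ((1 - (1/2 : ℝ)) • x + (1/2 : ℝ) • w) ≤ (1 - 1/2) * u x + (1/2) * u w :=
    aux_combo_closure hΩo hΩc hu_cont hu_conv hx hw (by norm_num) (by norm_num)
  have hcomb : x = (1 - l) • ((1 - (1/2 : ℝ)) • x + (1/2 : ℝ) • z)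
      + l • ((1 - (1/2 : ℝ)) • x + (1/2 : ℝ) • w) := by
    rw [hxdef]; module
  have h3 : u x ≤ (1 - l) * u ((1 - (1/2 : ℝ)) • x + (1/2 : ℝ) • z)
      + l * u ((1 - (1/2 : ℝ)) • x + (1/2 : ℝ) • w) := by
    nth_rewrite 1 [hcomb]
    exact hu_conv.2 hx1 hx2 (by linarith) hl0 (by ring)
  nlinarith [h3, h1, h2, hl0, hl1]

lemma aux_nonpos {n : ℕ} (hn : 1 ≤ n) {Ω : Set (Eucl n)} (hΩo : IsOpen Ω) (hΩc : Convex ℝ Ω)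
    (hΩb : Bornology.IsBounded Ω)
    {u : Eucl n → ℝ} (hu_cont : ContinuousOn u (closure Ω)) (hu_conv : ConvexOn ℝ Ω u)
    (hu_bdry : ∀ x ∈ frontier Ω, u x = 0) : ∀ x ∈ Ω, u x ≤ 0 := by
  intro x hx
  set v : Eucl n := EuclideanSpace.single (⟨0, hn⟩ : Fin n) (1 : ℝ) with hv
  have hvnorm : ‖v‖ = 1 := by
    rw [hv, EuclideanSpace.norm_single]; norm_num
  set T : Set ℝ := {t : ℝ | x + t • v ∈ closure Ω} with hT
  have hTclosed : IsClosed T := by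
    have hc : Continuous fun t : ℝ => x + t • v := by continuity
    exact isClosed_closure.preimage hc
  have hTbdd : Bornology.IsBounded T := by
    obtain ⟨R, hR⟩ := (hΩb.closure).subset_ball 0
    refine (Metric.isBounded_Icc (-(R + ‖x‖)) (R + ‖x‖)).subset fun t ht => ?_
    have h1 : ‖x + t • v‖ < R := by
      have := hR ht; simpa [mem_ball, dist_eq_norm] using this
    have h2 : |t| ≤ R + ‖x‖ := by
      have e1 : |t| = ‖t • v‖ := by rw [norm_smul, hvnorm]; simp [Real.norm_eq_abs]
      have e2 : ‖t • v‖ = ‖(x + t • v) - x‖ := by congr 1; abel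
      have e3 : ‖(x + t • v) - x‖ ≤ ‖x + t • v‖ + ‖x‖ := norm_sub_le _ _
      linarith
    exact abs_le.mp h2
  have hTcompact : IsCompact T := Metric.isCompact_of_isClosed_isBounded hTclosed hTbdd
  -- small ball inside Ω
  obtain ⟨ε, hε, hball⟩ := Metric.isOpen_iff.mp hΩo x hx
  have hmem : ∀ t : ℝ, |t| < ε → x + t • v ∈ Ω := by
    intro t ht
    apply hball
    rw [mem_ball, dist_eq_norm]
    simpa [norm_smul, hvnorm, Real.norm_eq_abs] using ht
  have hTne : T.Nonempty := ⟨0, by simp only [hT, mem_setOf_eq, zero_smul, add_zero]; exact subset_closure hx⟩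
  set b := sSup T with hbdef
  set a := sInf T with hadef
  have hbT : b ∈ T := hTcompact.sSup_mem hTne
  have haT : a ∈ T := hTcompact.sInf_mem hTne
  have hbpos : 0 < b := by
    have : (ε/2 : ℝ) ∈ T := subset_closure (hmem (ε/2) (by rw [abs_of_pos (by linarith)]; linarith))
    have := le_csSup hTbdd.bddAbove this
    linarith
  have haneg : a < 0 := by
    have : (-(ε/2) : ℝ) ∈ T := subset_closure (hmem (-(ε/2)) (by rw [abs_of_neg (by linarith)]; linarith))
    have := csInf_le hTbdd.bddBelow this
    linarith
  have hwb : x + b • v ∈ frontier Ω := by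
    rw [frontier_eq_closure_inter_closure]
    refine ⟨hbT, ?_⟩
    rw [hΩo.isClosed_compl.closure_eq]
    intro hmem'
    obtain ⟨δ, hδ, hball'⟩ := Metric.isOpen_iff.mp hΩo _ hmem'
    have : b + δ/2 ∈ T := by
      refine subset_closure (hball' ?_)
      rw [mem_ball, dist_eq_norm]
      have : (x + (b + δ/2) • v) - (x + b • v) = (δ/2) • v := by module
      rw [this, norm_smul, hvnorm, mul_one, Real.norm_eq_abs,
        abs_of_pos (by linarith : (0:ℝ) < δ/2)]
      linarith
    have := le_csSup hTbdd.bddAbove this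
    linarith
  have hwa : x + a • v ∈ frontier Ω := by
    rw [frontier_eq_closure_inter_closure]
    refine ⟨haT, ?_⟩
    rw [hΩo.isClosed_compl.closure_eq]
    intro hmem'
    obtain ⟨δ, hδ, hball'⟩ := Metric.isOpen_iff.mp hΩo _ hmem'
    have : a - δ/2 ∈ T := by
      refine subset_closure (hball' ?_)
      rw [mem_ball, dist_eq_norm]
      have : (x + (a - δ/2) • v) - (x + a • v) = (-(δ/2)) • v := by module
      rw [this, norm_smul, hvnorm, mul_one, Real.norm_eq_abs,
        abs_of_neg (by linarith : (-(δ/2):ℝ) < 0)]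
      linarith
    have := csInf_le hTbdd.bddBelow this
    linarith
  set l : ℝ := -a / (b - a) with hldef
  have hba : 0 < b - a := by linarith
  have hl0 : 0 ≤ l := by
    rw [hldef]; apply div_nonneg <;> linarith
  have hl1 : l ≤ 1 := by
    rw [hldef, div_le_one hba]; linarith
  have hcoef : (1 - l) * a + l * b = 0 := by
    rw [hldef]; field_simp; ring
  have hxeq : (1 - l) • (x + a • v) + l • (x + b • v) = x := by
    have expand : (1 - l) • (x + a • v) + l • (x + b • v)
        = x + ((1 - l) * a + l * b) • v := by module
    rw [expand, hcoef]; simp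
  have := aux_combo_closure2 hΩo hΩc hu_cont hu_conv
    (frontier_subset_closure hwa) (frontier_subset_closure hwb) hl0 hl1 (by rwa [hxeq])
  rw [hxeq, hu_bdry _ hwa, hu_bdry _ hwb] at this
  linarith [this]

lemma aux_gauge_integral {n : ℕ} {D : Set (Eucl n)} (hDo : IsOpen D) (hDc : Convex ℝ D)
    (hD0 : (0 : Eucl n) ∈ D) (hDb : Bornology.IsBounded D) :
    ∫ y in D, (1 - gauge D y) = (volume D).toReal / (n + 1) := by
  have hgc : Continuous (gauge D) := continuous_gauge hDc (hDo.mem_nhds hD0)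
  have hDmeas : MeasurableSet D := hDo.measurableSet
  have hnn : ∀ y ∈ D, 0 ≤ 1 - gauge D y := fun y hy => by
    have := gauge_lt_one_of_mem_of_isOpen hDo hy; linarith
  have hcont : Continuous fun y => 1 - gauge D y := continuous_const.sub hgc
  have hint : IntegrableOn (fun y => 1 - gauge D y) D := by
    have hcomp : IsCompact (closure D) :=
      Metric.isCompact_of_isClosed_isBounded isClosed_closure hDb.closure
    exact (hcont.continuousOn.integrableOn_compact hcomp).mono_set subset_closure
  have hae : 0 ≤ᵐ[volume.restrict D] fun y => 1 - gauge D y :=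
    (ae_restrict_iff' hDmeas).mpr (ae_of_all _ hnn)
  have h1 : ENNReal.ofReal (∫ y in D, (1 - gauge D y)) =
      ∫⁻ y in D, ENNReal.ofReal (1 - gauge D y) :=
    ofReal_integral_eq_lintegral_ofReal hint hae
  have h2 : ∫⁻ y in D, ENNReal.ofReal (1 - gauge D y) =
      ∫⁻ t in Ioi (0 : ℝ), volume.restrict D {y | t < 1 - gauge D y} :=
    lintegral_eq_lintegral_meas_lt _ hae hcont.aemeasurable
  have hsub : ∀ t : ℝ, 0 < t → t < 1 → {y : Eucl n | t < 1 - gauge D y} = ((1 - t) • D : Set (Eucl n)) := by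
    intro t ht0 ht1
    have h1t : (0:ℝ) < 1 - t := by linarith
    have hmemD : ∀ z : Eucl n, z ∈ D ↔ gauge D z < 1 := fun z =>
      ⟨fun hz => gauge_lt_one_of_mem_of_isOpen hDo hz, fun hz => by
        rw [← gauge_lt_one_eq_self_of_isOpen hDc hD0 hDo]; exact hz⟩
    ext y
    simp only [mem_setOf_eq]
    rw [mem_smul_set_iff_inv_smul_mem₀ h1t.ne', hmemD,
      gauge_smul_of_nonneg (inv_nonneg.mpr h1t.le), smul_eq_mul, inv_mul_lt_iff₀ h1t, mul_one]
    constructor <;> intro h <;> linarith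
  have hmeas_set : ∀ t : ℝ, MeasurableSet {y : Eucl n | t < 1 - gauge D y} := fun t =>
    (isOpen_lt continuous_const hcont).measurableSet
  have hsmul_sub : ∀ t : ℝ, 0 < t → t < 1 → ((1 - t) • D : Set (Eucl n)) ⊆ D := by
    intro t ht0 ht1 y hy
    obtain ⟨d, hd, rfl⟩ := hy
    have := hDc hd hD0 (by linarith : (0:ℝ) ≤ 1 - t) ht0.le (by ring)
    simpa using this
  have h3 : ∀ t ∈ Ioi (0:ℝ), volume.restrict D {y | t < 1 - gauge D y} =
      (Ioo (0:ℝ) 1).indicator (fun t => ENNReal.ofReal ((1 - t) ^ n) * volume D) t := by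
    intro t ht
    rw [Measure.restrict_apply (hmeas_set t)]
    rcases lt_or_ge t 1 with ht1 | ht1
    · rw [indicator_of_mem (by exact ⟨ht, ht1⟩ : t ∈ Ioo (0:ℝ) 1)]
      rw [hsub t ht ht1, inter_eq_self_of_subset_left (hsmul_sub t ht ht1)]
      rw [Measure.addHaar_smul_of_nonneg volume (by linarith : (0:ℝ) ≤ 1 - t) D]
      rw [finrank_euclideanSpace_fin]
    · rw [indicator_of_notMem (by simp [ht1, not_lt] : t ∉ Ioo (0:ℝ) 1)]
      convert measure_empty
      · ext y
        simp only [mem_inter_iff, mem_setOf_eq, mem_empty_iff_false, iff_false, not_and]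
        intro h
        exfalso
        have := gauge_nonneg (s := D) y
        linarith
      · infer_instance
  have h4 : ∫⁻ t in Ioi (0 : ℝ), volume.restrict D {y | t < 1 - gauge D y}
      = ∫⁻ t in Ioo (0 : ℝ) 1, ENNReal.ofReal ((1 - t) ^ n) * volume D := by
    rw [setLIntegral_congr_fun measurableSet_Ioi h3,
      setLIntegral_indicator measurableSet_Ioo]
    congr 1
    rw [inter_eq_self_of_subset_left (fun t ht => ht.1)]
  have hint2 : IntegrableOn (fun t : ℝ => (1 - t) ^ n) (Ioo (0:ℝ) 1) := by
    have : ContinuousOn (fun t : ℝ => (1 - t) ^ n) (Icc (0:ℝ) 1) :=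
      ((continuous_const.sub continuous_id).pow n).continuousOn
    exact (this.integrableOn_compact isCompact_Icc).mono_set Ioo_subset_Icc_self
  have hae2 : 0 ≤ᵐ[volume.restrict (Ioo (0:ℝ) 1)] fun t => (1 - t) ^ n :=
    (ae_restrict_iff' measurableSet_Ioo).mpr (ae_of_all _ fun t ht => by
      have : (0:ℝ) ≤ 1 - t := by linarith [ht.2]
      positivity)
  have hJ : ∫ t in Ioo (0:ℝ) 1, (1 - t) ^ n = 1 / (n + 1 : ℝ) := by
    rw [← integral_Ioc_eq_integral_Ioo,
      ← intervalIntegral.integral_of_le (by norm_num : (0:ℝ) ≤ 1),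
      intervalIntegral.integral_comp_sub_left (fun s : ℝ => s ^ n) 1]
    norm_num [integral_pow]
  have h5 : ∫⁻ t in Ioo (0 : ℝ) 1, ENNReal.ofReal ((1 - t) ^ n) * volume D
      = ENNReal.ofReal (1 / (n + 1 : ℝ)) * volume D := by
    rw [lintegral_mul_const _ (show Measurable fun t : ℝ => ENNReal.ofReal ((1 - t) ^ n) from
      ((measurable_const.sub measurable_id').pow_const n).ennreal_ofReal)]
    congr 1
    rw [← ofReal_integral_eq_lintegral_ofReal hint2 hae2, hJ]
  have h6 : ENNReal.ofReal (∫ y in D, (1 - gauge D y)) =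
      ENNReal.ofReal (1 / (n + 1 : ℝ)) * volume D := by
    rw [h1, h2, h4, h5]
  have hfin : volume D ≠ ⊤ := hDb.measure_lt_top.ne
  have h7 := congrArg ENNReal.toReal h6
  rw [ENNReal.toReal_ofReal (setIntegral_nonneg hDmeas hnn)] at h7
  rw [ENNReal.toReal_mul, ENNReal.toReal_ofReal (by positivity)] at h7
  rw [h7]; ring

/-- Lemma 2.9: equivalence of `L^p` norms for convex functions vanishing
on the boundary. -/
theorem norm_equivalence {n : ℕ} (hn : 1 ≤ n)
    (Ω : Set (Eucl n)) (hΩo : IsOpen Ω) (hΩc : Convex ℝ Ω)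
    (hΩb : Bornology.IsBounded Ω) (hΩne : Ω.Nonempty)
    (u : Eucl n → ℝ)
    (hu_cont : ContinuousOn u (closure Ω)) (hu_conv : ConvexOn ℝ Ω u)
    (hu_bdry : ∀ x ∈ frontier Ω, u x = 0) :
    ∀ p : ℝ, 1 ≤ p →
      supN Ω u / ((n : ℝ) + 1) ≤
          (((volume Ω).toReal)⁻¹ * ∫ x in Ω, |u x| ^ p) ^ (1 / p) ∧
        (((volume Ω).toReal)⁻¹ * ∫ x in Ω, |u x| ^ p) ^ (1 / p) ≤ supN Ω u := by
  intro p hp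
  have hp0 : (0:ℝ) < p := lt_of_lt_of_le one_pos hp
  have hclc : IsCompact (closure Ω) :=
    Metric.isCompact_of_isClosed_isBounded isClosed_closure hΩb.closure
  have hΩmeas : MeasurableSet Ω := hΩo.measurableSet
  have hVfin : volume Ω < ⊤ := hΩb.measure_lt_top
  have hVpos : 0 < (volume Ω).toReal :=
    ENNReal.toReal_pos (hΩo.measure_pos volume hΩne).ne' hVfin.ne
  set V := (volume Ω).toReal with hV
  have hunonpos := aux_nonpos hn hΩo hΩc hΩb hu_cont hu_conv hu_bdry
  have habs_cont : ContinuousOn (fun x => |u x|) (closure Ω) := hu_cont.abs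
  have habs_int : IntegrableOn (fun x => |u x|) Ω :=
    (habs_cont.integrableOn_compact hclc).mono_set subset_closure
  have habsp_cont : ContinuousOn (fun x => |u x| ^ p) (closure Ω) :=
    habs_cont.rpow_const (fun x _ => Or.inr hp0.le)
  have habsp_int : IntegrableOn (fun x => |u x| ^ p) Ω :=
    (habsp_cont.integrableOn_compact hclc).mono_set subset_closure
  set M := supN Ω u with hM
  obtain ⟨K, hK⟩ := hclc.exists_bound_of_continuousOn hu_cont
  have hbddAbove : BddAbove (range fun x => ⨆ _ : x ∈ Ω, |u x|) := by
    refine ⟨max K 0, ?_⟩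
    rintro _ ⟨x, rfl⟩
    show (⨆ _ : x ∈ Ω, |u x|) ≤ max K 0
    by_cases hx : x ∈ Ω
    · rw [ciSup_pos hx]
      exact le_max_of_le_left (hK x (subset_closure hx))
    · rw [ciSup_neg hx, Real.sSup_empty]
      exact le_max_right _ _
  have hbdd : ∀ x ∈ Ω, |u x| ≤ M := by
    intro x hx
    calc |u x| = ⨆ _ : x ∈ Ω, |u x| := (ciSup_pos (f := fun _ => |u x|) hx).symm
      _ ≤ M := le_ciSup hbddAbove x
  obtain ⟨x1, hx1⟩ := id hΩne
  have hM0 : 0 ≤ M := le_trans (abs_nonneg (u x1)) (hbdd x1 hx1)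
  have hIp_nonneg : 0 ≤ ∫ x in Ω, |u x| ^ p :=
    setIntegral_nonneg hΩmeas fun x _ => Real.rpow_nonneg (abs_nonneg _) p
  have hA_nonneg : 0 ≤ V⁻¹ * ∫ x in Ω, |u x| ^ p :=
    mul_nonneg (inv_nonneg.mpr hVpos.le) hIp_nonneg
  constructor
  · -- lower bound
    by_cases hMpos : M ≤ 0
    · have hMeq : M = 0 := le_antisymm hMpos hM0
      rw [hMeq, zero_div]
      exact Real.rpow_nonneg hA_nonneg _
    push_neg at hMpos
    obtain ⟨x₀, hx₀cl, hx₀min⟩ := hclc.exists_isMinOn ⟨x1, subset_closure hx1⟩ hu_cont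
    have hMle : M ≤ -u x₀ := by
      refine ciSup_le fun x => ?_
      by_cases hx : x ∈ Ω
      · rw [ciSup_pos (f := fun _ => |u x|) hx, abs_of_nonpos (hunonpos x hx)]
        have h1 : u x₀ ≤ u x := hx₀min (subset_closure hx)
        linarith
      · rw [ciSup_neg (f := fun _ => |u x|) hx, Real.sSup_empty]
        have h1 : u x₀ ≤ u x1 := hx₀min (subset_closure hx1)
        have h2 := hunonpos x1 hx1
        linarith
    have hx₀Ω : x₀ ∈ Ω := by
      by_contra h
      have hfr : x₀ ∈ frontier Ω := by
        rw [frontier, hΩo.interior_eq]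
        exact ⟨hx₀cl, h⟩
      have := hu_bdry x₀ hfr
      rw [this] at hMle
      linarith
    have hux₀eq : u x₀ = -M := by
      have h1 : -u x₀ ≤ M := by
        have := hbdd x₀ hx₀Ω
        rw [abs_of_nonpos (hunonpos x₀ hx₀Ω)] at this
        exact this
      linarith
    -- translated domain
    set D : Set (Eucl n) := (fun y => x₀ + y) ⁻¹' Ω with hD
    have hDo : IsOpen D := hΩo.preimage (continuous_const.add continuous_id)
    have hDc : Convex ℝ D := by
      intro y1 hy1 y2 hy2 a b ha hb hab
      have hv : x₀ + (a • y1 + b • y2) = a • (x₀ + y1) + b • (x₀ + y2) := by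
        rw [smul_add, smul_add]
        rw [show a • x₀ + a • y1 + (b • x₀ + b • y2)
          = (a + b) • x₀ + (a • y1 + b • y2) by rw [add_smul]; abel, hab, one_smul]
      show x₀ + (a • y1 + b • y2) ∈ Ω
      rw [hv]
      exact hΩc hy1 hy2 ha hb hab
    have hD0 : (0 : Eucl n) ∈ D := by
      show x₀ + 0 ∈ Ω
      simpa using hx₀Ω
    have hDb : Bornology.IsBounded D := by
      obtain ⟨R, hR⟩ := hΩb.subset_ball 0
      refine (Metric.isBounded_closedBall (x := (0 : Eucl n)) (r := R + ‖x₀‖)).subset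
        fun y hy => ?_
      have h1 : ‖x₀ + y‖ < R := by
        have := hR hy
        simpa [mem_ball, dist_eq_norm] using this
      have h2 : ‖y‖ ≤ R + ‖x₀‖ := by
        have e2 : ‖y‖ = ‖(x₀ + y) - x₀‖ := by congr 1; abel
        have e3 : ‖(x₀ + y) - x₀‖ ≤ ‖x₀ + y‖ + ‖x₀‖ := norm_sub_le _ _
        linarith
      simpa [mem_closedBall, dist_eq_norm] using h2
    have hmemD : ∀ z : Eucl n, gauge D z < 1 → z ∈ D := fun z hz => by
      rw [← gauge_lt_one_eq_self_of_isOpen hDc hD0 hDo]; exact hz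
    -- pointwise bound
    have hpoint : ∀ x ∈ Ω, M * (1 - gauge D (x - x₀)) ≤ |u x| := by
      intro x hx
      have hxD : x - x₀ ∈ D := by
        show x₀ + (x - x₀) ∈ Ω
        simpa using hx
      set s := gauge D (x - x₀) with hs
      have hs0 : 0 ≤ s := gauge_nonneg _
      have hs1 : s < 1 := gauge_lt_one_of_mem_of_isOpen hDo hxD
      have key : ∀ s', s < s' → s' ≤ 1 → u x ≤ (1 - s') * (-M) := by
        intro s' hss' hs'1
        have hs'0 : 0 < s' := lt_of_le_of_lt hs0 hss'
        have hyD : s'⁻¹ • (x - x₀) ∈ D := by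
          apply hmemD
          rw [gauge_smul_of_nonneg (inv_nonneg.mpr hs'0.le), smul_eq_mul, ← hs,
            inv_mul_lt_iff₀ hs'0, mul_one]
          exact lt_of_lt_of_le hss' (le_refl s')
        have hyΩ : x₀ + s'⁻¹ • (x - x₀) ∈ Ω := hyD
        have hxeq : (1 - s') • x₀ + s' • (x₀ + s'⁻¹ • (x - x₀)) = x := by
          rw [smul_add, smul_inv_smul₀ hs'0.ne']
          module
        have hcv := hu_conv.2 hx₀Ω hyΩ (by linarith : (0:ℝ) ≤ 1 - s') hs'0.le (by ring)
        rw [hxeq] at hcv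
        have hy0 : u (x₀ + s'⁻¹ • (x - x₀)) ≤ 0 := hunonpos _ hyΩ
        rw [hux₀eq] at hcv
        simp only [smul_eq_mul] at hcv
        nlinarith
      rw [abs_of_nonpos (hunonpos x hx)]
      by_contra hcon
      push_neg at hcon
      have hr0 : 0 ≤ -u x := by linarith [hunonpos x hx]
      have hlt : s < 1 - (-u x) / M := by
        have h' : (-u x) / M < 1 - s := (div_lt_iff₀ hMpos).mpr (by nlinarith)
        linarith
      set s' := (s + (1 - (-u x) / M)) / 2 with hs'
      have h1 : s < s' := by rw [hs']; linarith
      have h2 : s' < 1 - (-u x) / M := by rw [hs']; linarith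
      have h3 : s' ≤ 1 := by
        have : 0 ≤ (-u x) / M := div_nonneg hr0 hMpos.le
        linarith
      have h4 := key s' h1 h3
      have h5 : -u x < (1 - s') * M := by
        have := (div_lt_iff₀ hMpos).mp (by linarith : (-u x) / M < 1 - s')
        linarith
      nlinarith
    -- integral of the gauge bound
    have hgauge_cont : Continuous fun x : Eucl n => 1 - gauge D (x - x₀) :=
      continuous_const.sub ((continuous_gauge hDc (hDo.mem_nhds hD0)).comp
        (continuous_id.sub continuous_const))
    have hgint_int : IntegrableOn (fun x => 1 - gauge D (x - x₀)) Ω :=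
      (hgauge_cont.continuousOn.integrableOn_compact hclc).mono_set subset_closure
    have hvolD : volume D = volume Ω := by
      rw [hD]
      exact measure_preimage_add volume x₀ Ω
    have hgint : ∫ x in Ω, (1 - gauge D (x - x₀)) = V / (n + 1) := by
      have hmp : MeasurePreserving (fun y : Eucl n => x₀ + y) volume volume :=
        measurePreserving_add_left volume x₀
      have hemb : MeasurableEmbedding (fun y : Eucl n => x₀ + y) :=
        (MeasurableEquiv.addLeft x₀).measurableEmbedding
      have hch := hmp.setIntegral_preimage_emb hemb (fun x => 1 - gauge D (x - x₀)) Ω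
      have hsimp : ∀ y : Eucl n, (1 - gauge D ((x₀ + y) - x₀)) = 1 - gauge D y := by
        intro y; congr 2; abel
      rw [show (fun y : Eucl n => 1 - gauge D ((x₀ + y) - x₀)) = fun y => 1 - gauge D y
        from funext hsimp] at hch
      rw [← hD] at hch
      rw [← hch, aux_gauge_integral hDo hDc hD0 hDb, hvolD, ← hV]
    have hIbound : M * (V / (n + 1)) ≤ ∫ x in Ω, |u x| := by
      have hintg : IntegrableOn (fun x => M * (1 - gauge D (x - x₀))) Ω :=
        ((continuous_const.mul hgauge_cont).continuousOn.integrableOn_compact hclc).mono_set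
          subset_closure
      calc M * (V / (n + 1)) = ∫ x in Ω, M * (1 - gauge D (x - x₀)) := by
            rw [integral_const_mul, hgint]
        _ ≤ ∫ x in Ω, |u x| := setIntegral_mono_on hintg habs_int hΩmeas hpoint
    -- Jensen
    haveI : IsFiniteMeasure (volume.restrict Ω) :=
      ⟨by rw [Measure.restrict_apply_univ]; exact hVfin⟩
    haveI : NeZero (volume.restrict Ω) := by
      refine ⟨fun h => ?_⟩
      rw [Measure.restrict_eq_zero] at h
      exact (hΩo.measure_pos volume hΩne).ne' h
    have hjensen : (V⁻¹ * ∫ x in Ω, |u x|) ^ p ≤ V⁻¹ * ∫ x in Ω, |u x| ^ p := by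
      have hgcont : ContinuousOn (fun x : ℝ => x ^ p) (Ici 0) := fun x hx =>
        (Real.continuousAt_rpow_const x p (Or.inr hp0.le)).continuousWithinAt
      have hfs : ∀ᵐ x ∂(volume.restrict Ω), |u x| ∈ Ici (0:ℝ) :=
        ae_of_all _ fun x => mem_Ici.mpr (abs_nonneg _)
      have hgi : Integrable ((fun x : ℝ => x ^ p) ∘ fun x => |u x|) (volume.restrict Ω) := by
        exact habsp_int
      have hJ := (convexOn_rpow hp).map_average_le hgcont isClosed_Ici hfs habs_int hgi
      rw [average_eq, average_eq, measureReal_restrict_apply_univ] at hJ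
      rw [smul_eq_mul, smul_eq_mul] at hJ
      exact hJ
    have havg1 : M / ((n:ℝ) + 1) ≤ V⁻¹ * ∫ x in Ω, |u x| := by
      rw [inv_mul_eq_div, le_div_iff₀ hVpos]
      calc M / ((n:ℝ) + 1) * V = M * (V / ((n:ℝ) + 1)) := by ring
        _ ≤ ∫ x in Ω, |u x| := hIbound
    have havg1_nonneg : 0 ≤ V⁻¹ * ∫ x in Ω, |u x| :=
      mul_nonneg (inv_nonneg.mpr hVpos.le) (setIntegral_nonneg hΩmeas fun x _ => abs_nonneg _)
    calc M / ((n:ℝ) + 1) ≤ V⁻¹ * ∫ x in Ω, |u x| := havg1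
      _ = ((V⁻¹ * ∫ x in Ω, |u x|) ^ p) ^ (1/p) := by
          rw [one_div, Real.rpow_rpow_inv havg1_nonneg hp0.ne']
      _ ≤ (V⁻¹ * ∫ x in Ω, |u x| ^ p) ^ (1/p) :=
          Real.rpow_le_rpow (Real.rpow_nonneg havg1_nonneg p) hjensen (by positivity)
  · -- upper bound
    have hIub : ∫ x in Ω, |u x| ^ p ≤ M ^ p * V := by
      calc ∫ x in Ω, |u x| ^ p ≤ ∫ _x in Ω, M ^ p :=
            setIntegral_mono_on habsp_int
              (integrableOn_const hVfin.ne) hΩmeas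
              (fun x hx => Real.rpow_le_rpow (abs_nonneg _) (hbdd x hx) hp0.le)
        _ = M ^ p * V := by rw [setIntegral_const, smul_eq_mul, mul_comm, measureReal_def, ← hV]
    have h1 : V⁻¹ * ∫ x in Ω, |u x| ^ p ≤ M ^ p := by
      rw [inv_mul_eq_div, div_le_iff₀ hVpos]
      linarith
    calc (V⁻¹ * ∫ x in Ω, |u x| ^ p) ^ (1/p)
        ≤ (M ^ p) ^ (1/p) := Real.rpow_le_rpow hA_nonneg h1 (by positivity)
      _ = M := by rw [one_div, Real.rpow_rpow_inv hM0 hp0.ne']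
end
end

section
/- Equality case in the monotonicity relation: Let Ω ⊂ ℝⁿ be a bounded, open, convex domain and let u, w ∈ K with 0 < R(u) < ∞, such that Mw = R(u)(−u)^n L^n on Ω and R(w) ‖w‖_{L^{n+1}(Ω)}^n = R(u) ‖u‖_{L^{n+1}(Ω)}^n. Then w = u on Ω. -/
open MeasureTheory Set Filter Metric
open scoped ENNReal RealInnerProductSpace Topology

noncomputable section

section AuxEqCase
open Pointwise

open Finset in
lemma phi_young (n : ℕ) (hn : 1 ≤ n) {t : ℝ} (ht : 0 ≤ t) :
    0 ≤ t ^ (n+1) + n - (n+1) * t ∧ (t ^ (n+1) + (n:ℝ) - (n+1) * t = 0 → t = 1) := by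
  have key : t ^ (n+1) + (n:ℝ) - (n+1) * t
      = ∑ i ∈ range (n+1), (t - 1) * (t ^ i - 1) := by
    have h1 := geom_sum_mul t (n+1)
    have h2 : ∑ i ∈ range (n+1), (t - 1) * (t ^ i - 1)
        = (∑ i ∈ range (n+1), t ^ i) * (t - 1) - (n+1) * (t - 1) := by
      rw [Finset.sum_congr rfl (fun i _ => by ring : ∀ i ∈ range (n+1),
        (t - 1) * (t ^ i - 1) = t ^ i * (t-1) - (t - 1)), Finset.sum_sub_distrib,
        Finset.sum_const, ← Finset.sum_mul]
      simp [mul_comm]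
    rw [h2, h1]; push_cast; ring
  have hterm : ∀ i ∈ range (n+1), 0 ≤ (t - 1) * (t ^ i - 1) := by
    intro i _
    rcases le_total t 1 with h | h
    · nlinarith [pow_le_one₀ ht h (n := i)]
    · nlinarith [one_le_pow₀ h (n := i)]
  constructor
  · rw [key]; exact Finset.sum_nonneg hterm
  · intro h0
    by_contra hne
    have h1 : 0 < (t - 1) * (t ^ 1 - 1) := by
      rcases lt_or_gt_of_ne hne with h | h
      · nlinarith
      · nlinarith
    have hmem : 1 ∈ range (n+1) := Finset.mem_range.2 (by omega)
    have : 0 < ∑ i ∈ range (n+1), (t - 1) * (t ^ i - 1) :=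
      Finset.sum_pos' hterm ⟨1, hmem, h1⟩
    rw [← key, h0] at this; exact lt_irrefl 0 this

lemma young_aux (n : ℕ) (hn : 1 ≤ n) {a b : ℝ} (ha : 0 ≤ a) (hb : 0 ≤ b) :
    0 ≤ a ^ (n+1) + n * b ^ (n+1) - (n+1) * (a * b ^ n) ∧
      (a ^ (n+1) + n * b ^ (n+1) - (n+1) * (a * b ^ n) = 0 → a = b) := by
  rcases eq_or_lt_of_le hb with hb0 | hb0
  · constructor
    · rw [← hb0]; simp [zero_pow (by omega : n + 1 ≠ 0), zero_pow (by omega : n ≠ 0)]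
      positivity
    · intro h; rw [← hb0] at h ⊢
      simp [zero_pow (by omega : n + 1 ≠ 0), zero_pow (by omega : n ≠ 0)] at h
      exact h
  · set t := a / b with htdef
    have ht : 0 ≤ t := div_nonneg ha hb0.le
    have hphi := phi_young n hn ht
    have ha' : a = t * b := (div_mul_cancel₀ a hb0.ne').symm
    have hident : a ^ (n+1) + n * b ^ (n+1) - (n+1) * (a * b ^ n)
        = b ^ (n+1) * (t ^ (n+1) + n - (n+1) * t) := by
      rw [ha']; ring
    constructor
    · rw [hident]; exact mul_nonneg (by positivity) hphi.1
    · intro h0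
      rw [hident] at h0
      have : t ^ (n+1) + (n:ℝ) - (n+1) * t = 0 := by
        have hbn : b ^ (n+1) ≠ 0 := by positivity
        rcases mul_eq_zero.1 h0 with h | h
        · exact absurd h hbn
        · exact h
      have := hphi.2 this
      rw [ha', this, one_mul]

lemma convex_nonpos {n : ℕ} (hn : 1 ≤ n) {Ω : Set (Eucl n)} (hΩo : IsOpen Ω)
    (hΩc : Convex ℝ Ω) (hΩb : Bornology.IsBounded Ω) {u : Eucl n → ℝ}
    (hc : ContinuousOn u (closure Ω)) (hconv : ConvexOn ℝ Ω u)
    (hbd : ∀ x ∈ frontier Ω, u x = 0) : ∀ x ∈ Ω, u x ≤ 0 := by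
  intro x hx
  set e : Eucl n := EuclideanSpace.single (⟨0, hn⟩ : Fin n) (1 : ℝ) with he
  have hne : ‖e‖ = 1 := by simp [he]
  set K : Set ℝ := {t : ℝ | x + t • e ∈ Ω} with hK
  have h0K : (0 : ℝ) ∈ K := by simp [hK, hx]
  obtain ⟨R, hR⟩ := hΩb.exists_norm_le
  have hnorm : ∀ t : ℝ, ‖(x + t • e) - x‖ = |t| := by
    intro t; simp [norm_smul, hne]
  have hbddK : ∀ t ∈ K, |t| ≤ R + ‖x‖ := by
    intro t ht
    have := hR _ ht
    calc |t| = ‖(x + t • e) - x‖ := (hnorm t).symm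
      _ ≤ ‖x + t • e‖ + ‖x‖ := norm_sub_le _ _
      _ ≤ R + ‖x‖ := by linarith
  have hbA : BddAbove K := ⟨R + ‖x‖, fun t ht => le_trans (le_abs_self t) (hbddK t ht)⟩
  have hbB : BddBelow K := ⟨-(R + ‖x‖), fun t ht => neg_le_of_abs_le (hbddK t ht)⟩
  obtain ⟨δ, hδ, hball⟩ := Metric.isOpen_iff.1 hΩo x hx
  have hmemδ : ∀ t : ℝ, |t| < δ → t ∈ K := by
    intro t ht
    exact hball (by simpa [mem_ball, dist_eq_norm, norm_smul, hne] using ht)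
  set tp := sSup K with htp
  set tm := sInf K with htm
  have htp_pos : 0 < tp :=
    lt_of_lt_of_le (by positivity) (le_csSup hbA (hmemδ (δ/2) (by rw [abs_of_pos (by positivity)]; linarith)))
  have htm_neg : tm < 0 :=
    lt_of_le_of_lt (csInf_le hbB (hmemδ (-(δ/2)) (by rw [abs_neg, abs_of_pos (by positivity)]; linarith)))
      (by linarith)
  -- endpoints
  set yp : Eucl n := x + tp • e with hyp
  set ym : Eucl n := x + tm • e with hym
  have hmap : Continuous (fun t : ℝ => x + t • e) :=
    continuous_const.add (continuous_id.smul continuous_const)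
  have hclo : ∀ y ∈ ({yp, ym} : Set (Eucl n)), y ∈ closure Ω := by
    intro y hy
    have himg : (fun t : ℝ => x + t • e) '' K ⊆ Ω := fun z ⟨t, ht, hz⟩ => hz ▸ ht
    have hcl : ∀ s ∈ closure K, x + s • e ∈ closure Ω := by
      intro s hs
      have := image_closure_subset_closure_image hmap (s := K) ⟨s, hs, rfl⟩
      exact closure_mono himg this
    rcases hy with rfl | hy
    · exact hcl tp (csSup_mem_closure ⟨0, h0K⟩ hbA)
    · simp only [mem_singleton_iff] at hy; subst hy
      exact hcl tm (csInf_mem_closure ⟨0, h0K⟩ hbB)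
  have hfront : ∀ y ∈ ({yp, ym} : Set (Eucl n)), y ∈ frontier Ω := by
    intro y hy
    rw [hΩo.frontier_eq]
    refine ⟨hclo y hy, ?_⟩
    intro hyΩ
    obtain ⟨ε, hε, hballε⟩ := Metric.isOpen_iff.1 hΩo y hyΩ
    rcases hy with rfl | hy
    · have : tp + ε/2 ∈ K := by
        apply hballε
        simp only [mem_ball, dist_eq_norm, hK]
        have : (x + (tp + ε/2) • e) - yp = (ε/2) • e := by rw [hyp]; module
        rw [this, norm_smul, hne, mul_one, Real.norm_eq_abs, abs_of_pos (by positivity : (0:ℝ) < ε/2)]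
        linarith
      have := le_csSup hbA this
      linarith
    · simp only [mem_singleton_iff] at hy; subst hy
      have : tm - ε/2 ∈ K := by
        apply hballε
        simp only [mem_ball, dist_eq_norm, hK]
        have : (x + (tm - ε/2) • e) - ym = (-(ε/2)) • e := by rw [hym]; module
        rw [this, norm_smul, hne, mul_one, Real.norm_eq_abs, abs_neg, abs_of_pos (by positivity : (0:ℝ) < ε/2)]
        linarith
      have := csInf_le hbB this
      linarith
  have hup : u yp = 0 := hbd _ (hfront yp (by simp))
  have hum : u ym = 0 := hbd _ (hfront ym (by simp))
  -- convex combination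
  set lam : ℝ := tp / (tp - tm) with hlam
  have hden : 0 < tp - tm := by linarith
  have hlam0 : 0 < lam := div_pos htp_pos hden
  have hlam1 : lam < 1 := (div_lt_one hden).2 (by linarith)
  have hcomb : lam * tm + (1 - lam) * tp = 0 := by
    rw [hlam]; field_simp; ring
  -- interior points
  have hzmem : ∀ θ : ℝ, θ ∈ Ioo (0:ℝ) 1 → ∀ s : ℝ, (x + s • e ∈ ({yp, ym} : Set (Eucl n))) →
      x + (θ * s) • e ∈ Ω := by
    intro θ hθ s hs
    have : x + (θ * s) • e ∈ openSegment ℝ x (x + s • e) := by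
      refine ⟨1 - θ, θ, by linarith [hθ.2], hθ.1, by ring, ?_⟩
      module
    have := hΩc.openSegment_interior_closure_subset_interior
      (by rwa [hΩo.interior_eq]) (hclo _ hs) this
    rwa [hΩo.interior_eq] at this
  have hconvest : ∀ θ : ℝ, θ ∈ Ioo (0:ℝ) 1 →
      u x ≤ lam * u (x + (θ * tm) • e) + (1 - lam) * u (x + (θ * tp) • e) := by
    intro θ hθ
    have hm := hzmem θ hθ tm (by simp [hym])
    have hp := hzmem θ hθ tp (by simp [hyp])
    have hcs := hconv.2 hm hp hlam0.le (by linarith : (0:ℝ) ≤ 1 - lam) (by ring)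
    have : lam • (x + (θ * tm) • e) + (1 - lam) • (x + (θ * tp) • e) = x := by
      have : lam * (θ * tm) + (1 - lam) * (θ * tp) = θ * (lam * tm + (1 - lam) * tp) := by ring
      rw [show lam • (x + (θ * tm) • e) + (1 - lam) • (x + (θ * tp) • e)
        = x + (lam * (θ * tm) + (1 - lam) * (θ * tp)) • e by module, this, hcomb]
      simp
    rwa [this] at hcs
  -- limit θ → 1⁻
  have hev : ∀ᶠ θ in 𝓝[<] (1:ℝ), θ ∈ Ioo (0:ℝ) 1 := by
    filter_upwards [eventually_nhdsWithin_of_eventually_nhds (eventually_gt_nhds (by norm_num : (0:ℝ) < 1)),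
      eventually_mem_nhdsWithin] with θ h1 h2
    exact ⟨h1, h2⟩
  have htend : ∀ s : ℝ, (x + s • e ∈ ({yp, ym} : Set (Eucl n))) →
      Tendsto (fun θ : ℝ => u (x + (θ * s) • e)) (𝓝[<] (1:ℝ)) (𝓝 (u (x + s • e))) := by
    intro s hs
    have h1 : Tendsto (fun θ : ℝ => x + (θ * s) • e) (𝓝[<] (1:ℝ)) (𝓝 (x + s • e)) := by
      have : Tendsto (fun θ : ℝ => x + (θ * s) • e) (𝓝 (1:ℝ)) (𝓝 (x + (1 * s) • e)) :=
        (continuous_const.add (((continuous_id.mul continuous_const)).smul continuous_const)).tendsto 1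
      rw [one_mul] at this
      exact this.mono_left nhdsWithin_le_nhds
    have h2 : Tendsto (fun θ : ℝ => x + (θ * s) • e) (𝓝[<] (1:ℝ)) (𝓝[closure Ω] (x + s • e)) := by
      apply tendsto_nhdsWithin_of_tendsto_nhds_of_eventually_within _ h1
      filter_upwards [hev] with θ hθ
      exact subset_closure (hzmem θ hθ s hs)
    exact (hc _ (hclo _ hs)).tendsto.comp h2
  have hT : Tendsto (fun θ : ℝ => lam * u (x + (θ * tm) • e) + (1 - lam) * u (x + (θ * tp) • e))
      (𝓝[<] (1:ℝ)) (𝓝 (lam * u ym + (1 - lam) * u yp)) := by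
    exact ((htend tm (by simp [hym])).const_mul lam).add ((htend tp (by simp [hyp])).const_mul (1 - lam))
  rw [hum, hup] at hT
  simp only [mul_zero, add_zero] at hT
  exact ge_of_tendsto hT (by filter_upwards [hev] with θ hθ using hconvest θ hθ)

lemma MAenergy_formula {n : ℕ} (Ω : Set (Eucl n)) (hΩo : IsOpen Ω)
    (u v : Eucl n → ℝ) (hu : ContinuousOn u Ω) (hv : ContinuousOn v Ω)
    (lam : ℝ≥0∞) (hlam : lam ≠ ⊤)
    (h : ∀ E ⊆ Ω, MeasurableSet E →
      MAm Ω v E = ∫⁻ x in E, lam * ENNReal.ofReal ((-u x) ^ n)) :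
    MAenergy Ω v = lam * ∫⁻ x in Ω, ENNReal.ofReal (-v x) * ENNReal.ofReal ((-u x) ^ n) := by
  classical
  set g : Eucl n → ℝ≥0∞ := fun x => ENNReal.ofReal ((-u x) ^ n) with hg
  set E : ℝ → Set (Eucl n) := fun t => {x ∈ Ω | t < -v x} with hE
  have hEopen : ∀ t, IsOpen (E t) := by
    intro t
    have : E t = Ω ∩ (fun x => t + v x) ⁻¹' (Iio 0) := by
      ext x; simp [hE]; intro _; constructor <;> intro <;> linarith
    rw [this]
    exact (continuousOn_const.add hv).isOpen_inter_preimage hΩo isOpen_Iio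
  have hEsub : ∀ t, E t ⊆ Ω := fun t x hx => hx.1
  -- the product-space set
  set S : Set (ℝ × Eucl n) := {p | p.2 ∈ Ω ∧ p.1 < -v p.2} with hS
  have hSopen : IsOpen S := by
    have : S = (univ ×ˢ Ω) ∩ (fun p : ℝ × Eucl n => p.1 + v p.2) ⁻¹' (Iio 0) := by
      ext p; simp [hS, mem_prod]; intro _; constructor <;> intro <;> linarith
    rw [this]
    refine ContinuousOn.isOpen_inter_preimage ?_ (isOpen_univ.prod hΩo) isOpen_Iio
    exact continuousOn_fst.add (hv.comp continuousOn_snd (fun p hp => hp.2))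
  set F : ℝ → Eucl n → ℝ≥0∞ := fun t x => S.indicator (fun p => g p.2) (t, x) with hF
  have hFunc : Function.uncurry F = S.indicator (fun p => g p.2) := by
    funext p; cases p; rfl
  have hFmeas : AEMeasurable (Function.uncurry F)
      ((volume.restrict (Ioi (0:ℝ))).prod (volume.restrict Ω)) := by
    rw [Measure.prod_restrict, hFunc]
    rw [aemeasurable_indicator_iff hSopen.measurableSet]
    rw [Measure.restrict_restrict hSopen.measurableSet]
    apply ContinuousOn.aemeasurable
    · apply ENNReal.continuous_ofReal.comp_continuousOn
      have : ContinuousOn (fun p : ℝ × Eucl n => (-u p.2) ^ n) (S ∩ (Ioi 0 ×ˢ Ω)) :=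
        (((hu.comp continuousOn_snd (fun p hp => hp.1.1)).neg).pow n)
      exact this
    · exact hSopen.measurableSet.inter (measurableSet_Ioi.prod hΩo.measurableSet)
  have key : ∫⁻ t in Ioi (0:ℝ), ∫⁻ x in E t, g x
      = ∫⁻ x in Ω, ENNReal.ofReal (-v x) * g x := by
    have step1 : ∀ t : ℝ, ∫⁻ x in E t, g x = ∫⁻ x in Ω, F t x := by
      intro t
      have h1 : ∀ x : Eucl n, F t x = (E t).indicator g x := by
        intro x
        simp only [hF, hS, hE, Set.indicator_apply, Set.mem_setOf_eq, Set.mem_sep_iff]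
      have h2 : ∫⁻ x in Ω, F t x = ∫⁻ x in Ω, (E t).indicator g x :=
        lintegral_congr fun x => h1 x
      rw [h2, lintegral_indicator (hEopen t).measurableSet,
        Measure.restrict_restrict (hEopen t).measurableSet,
        Set.inter_eq_self_of_subset_left (hEsub t)]
    rw [lintegral_congr fun t => step1 t, lintegral_lintegral_swap hFmeas]
    refine lintegral_congr_ae ?_
    filter_upwards [ae_restrict_mem hΩo.measurableSet] with x hx
    have h1 : ∀ t : ℝ, F t x = (Iio (-v x)).indicator (fun _ => g x) t := by
      intro t
      simp only [hF, hS, Set.indicator_apply, Set.mem_setOf_eq, Set.mem_Iio, hx, true_and]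
    rw [lintegral_congr fun t => h1 t, lintegral_indicator measurableSet_Iio,
      Measure.restrict_restrict measurableSet_Iio, lintegral_const,
      Measure.restrict_apply_univ, Set.Iio_inter_Ioi, Real.volume_Ioo, sub_zero, mul_comm]
  have step0 : ∀ t : ℝ, MAm Ω v (E t) = lam * ∫⁻ x in E t, g x := by
    intro t
    rw [h (E t) (hEsub t) (hEopen t).measurableSet, lintegral_const_mul' lam _ hlam]
  calc MAenergy Ω v = ∫⁻ t in Ioi (0:ℝ), MAm Ω v (E t) := rfl
    _ = ∫⁻ t in Ioi (0:ℝ), lam * ∫⁻ x in E t, g x := lintegral_congr fun t => step0 t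
    _ = lam * ∫⁻ t in Ioi (0:ℝ), ∫⁻ x in E t, g x := lintegral_const_mul' lam _ hlam
    _ = lam * ∫⁻ x in Ω, ENNReal.ofReal (-v x) * g x := by rw [key]

lemma holder_eq_case {n : ℕ} (hn : 1 ≤ n) {α : Type*} [MeasurableSpace α] {μ : Measure α}
    (F f : α → ℝ)
    (hF0 : ∀ᵐ x ∂μ, 0 ≤ F x) (hf0 : ∀ᵐ x ∂μ, 0 ≤ f x)
    (hFi : Integrable (fun x => F x ^ (n+1)) μ) (hfi : Integrable (fun x => f x ^ (n+1)) μ)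
    (hFfi : Integrable (fun x => F x * f x ^ n) μ)
    {A B : ℝ} (hA : 0 < A) (hB : 0 < B)
    (hAe : ∫ x, F x ^ (n+1) ∂μ = A ^ (n+1)) (hBe : ∫ x, f x ^ (n+1) ∂μ = B ^ (n+1))
    (hEq : ∫ x, F x * f x ^ n ∂μ = A * B ^ n) :
    ∀ᵐ x ∂μ, B * F x = A * f x := by
  set c1 : ℝ := (A ^ (n+1))⁻¹ with hc1
  set c2 : ℝ := n * (B ^ (n+1))⁻¹ with hc2
  set c3 : ℝ := (n+1) * (A * B ^ n)⁻¹ with hc3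
  set D : α → ℝ := fun x => c1 * F x ^ (n+1) + c2 * f x ^ (n+1) - c3 * (F x * f x ^ n) with hD
  have hApos : (0:ℝ) < A ^ (n+1) := by positivity
  have hBpos : (0:ℝ) < B ^ (n+1) := by positivity
  have hABpos : (0:ℝ) < A * B ^ n := by positivity
  have hDi : Integrable D μ :=
    (((hFi.const_mul c1).add (hfi.const_mul c2)).sub (hFfi.const_mul c3))
  have hDint : ∫ x, D x ∂μ = 0 := by
    rw [hD]
    simp only
    have h1 : Integrable (fun x => c1 * F x ^ (n+1) + c2 * f x ^ (n+1)) μ :=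
      (hFi.const_mul c1).add (hfi.const_mul c2)
    have h2 : Integrable (fun x => c1 * F x ^ (n+1)) μ := hFi.const_mul c1
    have h3 : Integrable (fun x => c2 * f x ^ (n+1)) μ := hfi.const_mul c2
    have h4 : Integrable (fun x => c3 * (F x * f x ^ n)) μ := hFfi.const_mul c3
    rw [integral_sub h1 h4, integral_add h2 h3,
      integral_const_mul, integral_const_mul, integral_const_mul, hAe, hBe, hEq,
      hc1, hc2, hc3]
    field_simp
    ring
  have hDform : ∀ x, 0 ≤ F x → 0 ≤ f x →
      D x = (F x / A) ^ (n+1) + n * (f x / B) ^ (n+1) - (n+1) * ((F x / A) * (f x / B) ^ n) := by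
    intro x _ _
    rw [hD]
    simp only [div_pow, div_mul_div_comm, hc1, hc2, hc3, mul_pow]
    field_simp
  have hD0 : ∀ᵐ x ∂μ, 0 ≤ D x := by
    filter_upwards [hF0, hf0] with x hFx hfx
    rw [hDform x hFx hfx]
    exact (young_aux n hn (by positivity) (by positivity)).1
  have hDz : D =ᵐ[μ] 0 := (integral_eq_zero_iff_of_nonneg_ae hD0 hDi).1 hDint
  filter_upwards [hF0, hf0, hDz] with x hFx hfx hDx
  have := (young_aux n hn (a := F x / A) (b := f x / B) (by positivity) (by positivity)).2
    (by rw [← hDform x hFx hfx]; exact hDx)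
  have h2 : F x / A = f x / B := this
  field_simp at h2
  linarith [h2]

lemma integral_toReal_aux {n : ℕ} {Ω : Set (Eucl n)} (hΩm : MeasurableSet Ω)
    {g : Eucl n → ℝ} (hg : ContinuousOn g Ω) (h0 : ∀ x ∈ Ω, 0 ≤ g x) :
    ∫ x in Ω, g x = (∫⁻ x in Ω, ENNReal.ofReal (g x)).toReal := by
  apply integral_eq_lintegral_of_nonneg_ae
  · filter_upwards [ae_restrict_mem hΩm] with x hx using h0 x hx
  · exact hg.aestronglyMeasurable hΩm

lemma lint_pos_fin {n : ℕ} {Ω : Set (Eucl n)} (hΩo : IsOpen Ω) (hΩb : Bornology.IsBounded Ω)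
    {u : Eucl n → ℝ} (hc : ContinuousOn u (closure Ω)) (hne : ∃ x ∈ Ω, u x ≠ 0)
    (h0 : ∀ x ∈ Ω, u x ≤ 0) :
    (∫⁻ x in Ω, ENNReal.ofReal ((-u x) ^ (n+1))) ≠ 0 ∧
      (∫⁻ x in Ω, ENNReal.ofReal ((-u x) ^ (n+1))) ≠ ⊤ := by
  have hΩm : MeasurableSet Ω := hΩo.measurableSet
  constructor
  · obtain ⟨x₀, hx₀, hux₀⟩ := hne
    have hneg : u x₀ < 0 := lt_of_le_of_ne (h0 x₀ hx₀) hux₀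
    set U : Set (Eucl n) := {x ∈ Ω | u x < u x₀ / 2} with hU
    have hUopen : IsOpen U := by
      have : U = Ω ∩ u ⁻¹' (Iio (u x₀ / 2)) := by ext x; simp [hU]
      rw [this]
      exact (hc.mono subset_closure).isOpen_inter_preimage hΩo isOpen_Iio
    have hUne : x₀ ∈ U := ⟨hx₀, by linarith⟩
    have hlow : ENNReal.ofReal ((-(u x₀) / 2) ^ (n+1)) * volume U
        ≤ ∫⁻ x in Ω, ENNReal.ofReal ((-u x) ^ (n+1)) := by
      calc ENNReal.ofReal ((-(u x₀) / 2) ^ (n+1)) * volume U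
          = ∫⁻ _ in U, ENNReal.ofReal ((-(u x₀) / 2) ^ (n+1)) := (setLIntegral_const _ _).symm
        _ ≤ ∫⁻ x in U, ENNReal.ofReal ((-u x) ^ (n+1)) := by
            apply setLIntegral_mono' hUopen.measurableSet
            intro x hx
            apply ENNReal.ofReal_le_ofReal
            apply pow_le_pow_left₀ (by linarith [hneg])
            have := hx.2; linarith
        _ ≤ ∫⁻ x in Ω, ENNReal.ofReal ((-u x) ^ (n+1)) := lintegral_mono_set (fun x hx => hx.1)
    intro hzero
    rw [hzero] at hlow
    have h1 : ENNReal.ofReal ((-(u x₀) / 2) ^ (n+1)) ≠ 0 := by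
      simp only [ne_eq, ENNReal.ofReal_eq_zero, not_le]
      have h3 : (0:ℝ) < -(u x₀)/2 := by linarith
      positivity
    have h2 : volume U ≠ 0 := (hUopen.measure_pos volume ⟨x₀, hUne⟩).ne'
    exact (mul_ne_zero h1 h2) (le_antisymm hlow (by simp))
  · obtain ⟨C, hC⟩ := hΩb.isCompact_closure.exists_bound_of_continuousOn hc
    have hbound : ∀ x ∈ Ω, ENNReal.ofReal ((-u x) ^ (n+1)) ≤ ENNReal.ofReal (C ^ (n+1)) := by
      intro x hx
      apply ENNReal.ofReal_le_ofReal
      apply pow_le_pow_left₀ (by linarith [h0 x hx])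
      have := hC x (subset_closure hx)
      rw [Real.norm_eq_abs] at this
      cases abs_le.1 this with | intro h1 h2 => linarith
    have : ∫⁻ x in Ω, ENNReal.ofReal ((-u x) ^ (n+1))
        ≤ ENNReal.ofReal (C ^ (n+1)) * volume Ω := by
      rw [← setLIntegral_const]
      exact setLIntegral_mono' hΩm hbound
    exact ne_top_of_le_ne_top (ENNReal.mul_lt_top ENNReal.ofReal_lt_top hΩb.measure_lt_top).ne this

lemma lpn_eq {n : ℕ} {Ω : Set (Eucl n)} (hΩm : MeasurableSet Ω) {v : Eucl n → ℝ}
    (hv : ContinuousOn v Ω) (h0 : ∀ x ∈ Ω, v x ≤ 0) :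
    LpN Ω ((n:ℝ)+1) v
      = (∫⁻ x in Ω, ENNReal.ofReal ((-v x) ^ (n+1))).toReal ^ (1/((n:ℝ)+1)) := by
  rw [LpN]
  congr 1
  have h1 : ∫ x in Ω, |v x| ^ ((n:ℝ)+1) = ∫ x in Ω, (-v x) ^ (n+1) := by
    apply integral_congr_ae
    filter_upwards [ae_restrict_mem hΩm] with x hx
    rw [abs_of_nonpos (h0 x hx), show ((n:ℝ)+1) = ((n+1:ℕ):ℝ) by push_cast; ring,
      Real.rpow_natCast]
  rw [h1, integral_toReal_aux (g := fun x => (-v x) ^ (n+1)) hΩm ((hv.neg).pow (n+1))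
    (fun x hx => pow_nonneg (by linarith [h0 x hx]) _)]

lemma MAm_smul {n : ℕ} (Ω : Set (Eucl n)) (u w : Eucl n → ℝ) {c : ℝ} (hc : 0 < c)
    (h : ∀ x ∈ Ω, w x = c * u x) (E : Set (Eucl n)) (hE : E ⊆ Ω) :
    MAm Ω w E = ENNReal.ofReal (c ^ n) * MAm Ω u E := by
  have hsub : ∀ x ∈ Ω, subdiff Ω w x = c • subdiff Ω u x := by
    intro x hx
    ext p
    rw [mem_smul_set_iff_inv_smul_mem₀ hc.ne']
    simp only [subdiff, mem_setOf_eq]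
    constructor
    · intro hp y hy
      have h1 := hp y hy
      rw [h x hx, h y hy] at h1
      rw [real_inner_smul_left]
      have h2 : c * (u x + c⁻¹ * (inner ℝ p (y - x) : ℝ)) ≤ c * u y := by
        rw [mul_add, ← mul_assoc, mul_inv_cancel₀ hc.ne', one_mul]
        linarith
      exact le_of_mul_le_mul_left h2 hc
    · intro hp y hy
      have h1 := hp y hy
      rw [real_inner_smul_left] at h1
      rw [h x hx, h y hy]
      have h2 := mul_le_mul_of_nonneg_left h1 hc.le
      rw [mul_add, ← mul_assoc, mul_inv_cancel₀ hc.ne', one_mul] at h2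
      linarith
  have himg : subdiffImage Ω w E = c • subdiffImage Ω u E := by
    unfold subdiffImage
    rw [smul_set_iUnion₂]
    exact iUnion₂_congr fun x hx => hsub x (hE hx)
  rw [MAm, MAm, himg, Measure.addHaar_smul]
  congr 2
  rw [abs_of_nonneg (by positivity)]
  congr 1
  simp

end AuxEqCase

/-- equality case in the monotonicity relation forces `w = u` on `Ω`. -/
theorem equality_case_monotonicity {n : ℕ} (hn : 1 ≤ n)
    (Ω : Set (Eucl n)) (hΩo : IsOpen Ω) (hΩc : Convex ℝ Ω)
    (hΩb : Bornology.IsBounded Ω) (hΩne : Ω.Nonempty)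
    (u w : Eucl n → ℝ) (huK : memK Ω u) (hwK : memK Ω w)
    (hRpos : 0 < Rq Ω u) (hRfin : Rq Ω u < ⊤)
    (hMw : ∀ E ⊆ Ω, MeasurableSet E →
      MAm Ω w E = ∫⁻ x in E, Rq Ω u * ENNReal.ofReal ((-u x) ^ n))
    (heq : Rq Ω w * ENNReal.ofReal (LpN Ω ((n : ℝ) + 1) w ^ n) =
      Rq Ω u * ENNReal.ofReal (LpN Ω ((n : ℝ) + 1) u ^ n)) :
    Set.EqOn w u Ω := by
  classical
  obtain ⟨huC, huConv, huNe, huBd⟩ := huK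
  obtain ⟨hwC, hwConv, hwNe, hwBd⟩ := hwK
  have hΩm : MeasurableSet Ω := hΩo.measurableSet
  have huΩ : ContinuousOn u Ω := huC.mono subset_closure
  have hwΩ : ContinuousOn w Ω := hwC.mono subset_closure
  have hu0 : ∀ x ∈ Ω, u x ≤ 0 := convex_nonpos hn hΩo hΩc hΩb huC huConv huBd
  have hw0 : ∀ x ∈ Ω, w x ≤ 0 := convex_nonpos hn hΩo hΩc hΩb hwC hwConv hwBd
  set S : ℝ≥0∞ := ∫⁻ x in Ω, ENNReal.ofReal ((-u x) ^ (n+1)) with hSdef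
  set T : ℝ≥0∞ := ∫⁻ x in Ω, ENNReal.ofReal ((-w x) ^ (n+1)) with hTdef
  obtain ⟨hS0, hSt⟩ := lint_pos_fin hΩo hΩb huC huNe hu0
  obtain ⟨hT0, hTt⟩ := lint_pos_fin hΩo hΩb hwC hwNe hw0
  set J : ℝ≥0∞ := ∫⁻ x in Ω, ENNReal.ofReal (-w x) * ENNReal.ofReal ((-u x) ^ n) with hJdef
  have hEu : Rq Ω u * S = MAenergy Ω u := by
    rw [show Rq Ω u = MAenergy Ω u / S from rfl]
    exact ENNReal.div_mul_cancel hS0 hSt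
  have hEw : MAenergy Ω w = Rq Ω u * J := MAenergy_formula Ω hΩo u w huΩ hwΩ _ hRfin.ne hMw
  have hRw : Rq Ω w = Rq Ω u * J / T := by
    rw [show Rq Ω w = MAenergy Ω w / T from rfl, hEw]
  set th : ℝ := (n:ℝ)/((n:ℝ)+1) with hthdef
  have hnR : (0:ℝ) < (n:ℝ)+1 := by positivity
  have hth0 : (0:ℝ) ≤ th := by positivity
  have hth1 : (1:ℝ) - th = 1/((n:ℝ)+1) := by rw [hthdef]; field_simp; ring
  have hth1' : (0:ℝ) ≤ 1 - th := by rw [hth1]; positivity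
  have hpow_aux : ∀ r : ℝ, 0 ≤ r → (r ^ (1/((n:ℝ)+1))) ^ n = r ^ th := by
    intro r hr
    rw [← Real.rpow_natCast (r ^ (1/((n:ℝ)+1))) n, ← Real.rpow_mul hr]
    congr 1
    rw [hthdef]; field_simp
  have hLw : ENNReal.ofReal (LpN Ω ((n:ℝ)+1) w ^ n) = T ^ th := by
    rw [lpn_eq hΩm hwΩ hw0, ← hTdef, hpow_aux T.toReal ENNReal.toReal_nonneg,
      ENNReal.toReal_rpow, ENNReal.ofReal_toReal (ENNReal.rpow_ne_top_of_nonneg hth0 hTt)]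
  have hLu : ENNReal.ofReal (LpN Ω ((n:ℝ)+1) u ^ n) = S ^ th := by
    rw [lpn_eq hΩm huΩ hu0, ← hSdef, hpow_aux S.toReal ENNReal.toReal_nonneg,
      ENNReal.toReal_rpow, ENNReal.ofReal_toReal (ENNReal.rpow_ne_top_of_nonneg hth0 hSt)]
  rw [hRw, hLw, hLu] at heq
  have hTT : T ^ th * T ^ ((1:ℝ) - th) = T := by
    rw [← ENNReal.rpow_add th (1-th) hT0 hTt, show th + (1-th) = (1:ℝ) by ring,
      ENNReal.rpow_one]
  have hJkey : Rq Ω u * J = Rq Ω u * (S ^ th * T ^ ((1:ℝ)-th)) := by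
    have h1 : Rq Ω u * J / T * T ^ th * T ^ ((1:ℝ)-th)
        = Rq Ω u * S ^ th * T ^ ((1:ℝ)-th) := by rw [heq]
    rwa [mul_assoc (Rq Ω u * J / T), hTT, ENNReal.div_mul_cancel hT0 hTt, mul_assoc] at h1
  have hkey : J = S ^ th * T ^ ((1:ℝ)-th) :=
    (ENNReal.mul_right_inj hRpos.ne' hRfin.ne).1 hJkey
  -- real quantities
  have hSr : 0 < S.toReal := ENNReal.toReal_pos hS0 hSt
  have hTr : 0 < T.toReal := ENNReal.toReal_pos hT0 hTt
  set A : ℝ := T.toReal ^ (1/((n:ℝ)+1)) with hAdef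
  set B : ℝ := S.toReal ^ (1/((n:ℝ)+1)) with hBdef
  have hA : 0 < A := Real.rpow_pos_of_pos hTr _
  have hB : 0 < B := Real.rpow_pos_of_pos hSr _
  have hpow_aux2 : ∀ r : ℝ, 0 ≤ r → (r ^ (1/((n:ℝ)+1))) ^ (n+1) = r := by
    intro r hr
    rw [← Real.rpow_natCast (r ^ (1/((n:ℝ)+1))) (n+1), ← Real.rpow_mul hr,
      show (1/((n:ℝ)+1) * ((n+1:ℕ):ℝ)) = 1 by push_cast; field_simp, Real.rpow_one]
  have hApow : A ^ (n+1) = T.toReal := hpow_aux2 T.toReal ENNReal.toReal_nonneg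
  have hBpow : B ^ (n+1) = S.toReal := hpow_aux2 S.toReal ENNReal.toReal_nonneg
  have hAe : ∫ x in Ω, (-w x) ^ (n+1) = A ^ (n+1) := by
    rw [integral_toReal_aux (g := fun x => (-w x) ^ (n+1)) hΩm ((hwΩ.neg).pow (n+1))
      (fun x hx => pow_nonneg (by linarith [hw0 x hx]) _), ← hTdef, hApow]
  have hBe : ∫ x in Ω, (-u x) ^ (n+1) = B ^ (n+1) := by
    rw [integral_toReal_aux (g := fun x => (-u x) ^ (n+1)) hΩm ((huΩ.neg).pow (n+1))
      (fun x hx => pow_nonneg (by linarith [hu0 x hx]) _), ← hSdef, hBpow]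
  have hEqR : ∫ x in Ω, (-w x) * (-u x) ^ n = A * B ^ n := by
    have hJr : ∫ x in Ω, (-w x) * (-u x) ^ n = J.toReal := by
      rw [integral_toReal_aux (g := fun x => (-w x) * (-u x) ^ n) hΩm ((hwΩ.neg).mul ((huΩ.neg).pow n))
        (fun x hx => mul_nonneg (by linarith [hw0 x hx])
          (pow_nonneg (by linarith [hu0 x hx]) _)), hJdef]
      congr 1
      apply lintegral_congr_ae
      filter_upwards [ae_restrict_mem hΩm] with x hx
      rw [ENNReal.ofReal_mul (by linarith [hw0 x hx])]
    rw [hJr, hkey, ENNReal.toReal_mul, ← ENNReal.toReal_rpow, ← ENNReal.toReal_rpow,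
      hth1, ← hAdef,
      show (B:ℝ) ^ n = S.toReal ^ th from hpow_aux S.toReal ENNReal.toReal_nonneg]
    ring
  -- integrability
  have hIw : Integrable (fun x => (-w x) ^ (n+1)) (volume.restrict Ω) :=
    (((hwC.neg.pow (n+1)).integrableOn_compact hΩb.isCompact_closure).mono_set subset_closure)
  have hIu : Integrable (fun x => (-u x) ^ (n+1)) (volume.restrict Ω) :=
    (((huC.neg.pow (n+1)).integrableOn_compact hΩb.isCompact_closure).mono_set subset_closure)
  have hIwu : Integrable (fun x => (-w x) * (-u x) ^ n) (volume.restrict Ω) :=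
    ((((hwC.neg).mul ((huC.neg).pow n)).integrableOn_compact
      hΩb.isCompact_closure).mono_set subset_closure)
  have haeq : ∀ᵐ x ∂(volume.restrict Ω), B * (-w x) = A * (-u x) :=
    holder_eq_case hn (fun x => -w x) (fun x => -u x)
      (by filter_upwards [ae_restrict_mem hΩm] with x hx; linarith [hw0 x hx])
      (by filter_upwards [ae_restrict_mem hΩm] with x hx; linarith [hu0 x hx])
      hIw hIu hIwu hA hB hAe hBe hEqR
  set c : ℝ := A / B with hcdef
  have hc : 0 < c := div_pos hA hB
  have haec : ∀ᵐ x ∂(volume.restrict Ω), w x = c * u x := by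
    filter_upwards [haeq] with x hx
    rw [hcdef, div_mul_eq_mul_div, eq_div_iff hB.ne']
    linarith
  have heqOn : ∀ x ∈ Ω, w x = c * u x := by
    set V : Set (Eucl n) := {x ∈ Ω | w x ≠ c * u x} with hV
    have hVopen : IsOpen V := by
      have hVeq : V = Ω ∩ (fun x => w x - c * u x) ⁻¹' ({0}ᶜ) := by
        ext x; simp [hV, sub_eq_zero]
      rw [hVeq]
      exact (hwΩ.sub (continuousOn_const.mul huΩ)).isOpen_inter_preimage hΩo
        isOpen_compl_singleton
    have hVnull : volume V = 0 := by
      have h6 : (volume.restrict Ω) {x | ¬ (w x = c * u x)} = 0 := ae_iff.1 haec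
      have h7 : (volume.restrict Ω) V ≤ (volume.restrict Ω) {x | ¬ (w x = c * u x)} :=
        measure_mono fun x hx => hx.2
      rw [h6] at h7
      rw [Measure.restrict_apply hVopen.measurableSet,
        inter_eq_self_of_subset_left (fun x (hx : x ∈ V) => hx.1)] at h7
      exact le_antisymm h7 (by simp)
    intro x hx
    by_contra hne
    have hpos := hVopen.measure_pos volume ⟨x, hx, hne⟩
    rw [hVnull] at hpos
    exact lt_irrefl 0 hpos
  -- pin down c = 1 via the Monge-Ampère equation
  have hX0 : ENNReal.ofReal (c ^ n) ≠ 0 := by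
    simp only [ne_eq, ENNReal.ofReal_eq_zero, not_le]
    positivity
  have hXt : ENNReal.ofReal (c ^ n) ≠ ⊤ := ENNReal.ofReal_ne_top
  have hMu : ∀ E ⊆ Ω, MeasurableSet E → MAm Ω u E
      = ∫⁻ x in E, ((ENNReal.ofReal (c ^ n))⁻¹ * Rq Ω u) * ENNReal.ofReal ((-u x) ^ n) := by
    intro E hE hEm
    have h1 := hMw E hE hEm
    rw [MAm_smul Ω u w hc heqOn E hE] at h1
    have h2 : MAm Ω u E
        = (ENNReal.ofReal (c ^ n))⁻¹ * ∫⁻ x in E, Rq Ω u * ENNReal.ofReal ((-u x) ^ n) := by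
      rw [← h1, ← mul_assoc, ENNReal.inv_mul_cancel hX0 hXt, one_mul]
    rw [h2, ← lintegral_const_mul' _ _ (ENNReal.inv_ne_top.2 hX0)]
    exact lintegral_congr fun x => by rw [mul_assoc]
  have hEu2 : MAenergy Ω u = ((ENNReal.ofReal (c ^ n))⁻¹ * Rq Ω u)
      * ∫⁻ x in Ω, ENNReal.ofReal (-u x) * ENNReal.ofReal ((-u x) ^ n) :=
    MAenergy_formula Ω hΩo u u huΩ huΩ _
      (ENNReal.mul_ne_top (ENNReal.inv_ne_top.2 hX0) hRfin.ne) hMu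
  have hSS : ∫⁻ x in Ω, ENNReal.ofReal (-u x) * ENNReal.ofReal ((-u x) ^ n) = S := by
    rw [hSdef]
    apply lintegral_congr_ae
    filter_upwards [ae_restrict_mem hΩm] with x hx
    rw [← ENNReal.ofReal_mul (by linarith [hu0 x hx]), ← pow_succ']
  rw [hSS] at hEu2
  have hfin : Rq Ω u * S ≠ ⊤ := ENNReal.mul_ne_top hRfin.ne hSt
  have hpos : Rq Ω u * S ≠ 0 := mul_ne_zero hRpos.ne' hS0
  have hXinv : (ENNReal.ofReal (c ^ n))⁻¹ = 1 := by
    have h3 : (1:ℝ≥0∞) * (Rq Ω u * S) = (ENNReal.ofReal (c ^ n))⁻¹ * (Rq Ω u * S) := by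
      rw [one_mul]
      nth_rewrite 1 [hEu]
      rw [hEu2, mul_assoc]
    exact ((ENNReal.mul_left_inj hpos hfin).1 h3).symm
  have hc1 : c = 1 := by
    have h4 : ENNReal.ofReal (c ^ n) = 1 := by rwa [ENNReal.inv_eq_one] at hXinv
    have h5 : c ^ n = 1 := ENNReal.ofReal_eq_one.1 h4
    rcases lt_trichotomy c 1 with h | h | h
    · have h6 : c ^ n < 1 := pow_lt_one₀ hc.le h (by omega)
      rw [h5] at h6
      exact absurd h6 (lt_irrefl 1)
    · exact h
    · have h6 : 1 < c ^ n := one_lt_pow₀ h (by omega)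
      rw [h5] at h6
      exact absurd h6 (lt_irrefl 1)
  intro x hx
  rw [heqOn x hx, hc1, one_mul]
end
end
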